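/- arXiv:2309.03197 — 4 statements merged into one kernel-verified Lean document; each statement's English description precedes it below -/
import Mathlib

section
/- Let μ and ν be centered (mean-zero) log-concave probability measures on ℤ each having first absolute moment at most 1 (i.e., Σ_{k∈ℤ} |k|·μ({k}) ≤ 1 and Σ_{k∈ℤ} |k|·ν({k}) ≤ 1). Then W₁(μ, ν) ≤ 12·d_LP(μ, ν)·log(4e / d_LP(μ, ν)). -/
namespace W1aux
noncomputable section
open Real

/-- tail sum of `p` from `m` (rightwards). -/
def T (p : ℤ → ℝ) (m : ℤ) : ℝ := ∑' j : ℕ, p (m + (j:ℤ))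

structure Nice (p : ℤ → ℝ) : Prop where
  nonneg : ∀ k, 0 ≤ p k
  lc : ∀ k : ℤ, p (k - 1) * p (k + 1) ≤ p k ^ 2
  supp : ∀ a b c : ℤ, a ≤ b → b ≤ c → 0 < p a → 0 < p c → 0 < p b
  hassum : HasSum p 1
  mean : ∑' k : ℤ, (k : ℝ) * p k = 0
  absm : ∑' k : ℤ, |(k : ℝ)| * p k ≤ 1

variable {p : ℤ → ℝ}

lemma Nice.summable (h : Nice p) : Summable p := h.hassum.summable

lemma Nice.shift_summable (h : Nice p) (m : ℤ) :
    Summable (fun j : ℕ => p (m + (j:ℤ))) := by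
  have : Function.Injective (fun j : ℕ => m + (j:ℤ)) := by
    intro a b hab; simpa using hab
  exact h.summable.comp_injective this

lemma Nice.lc_gen (h : Nice p) : ∀ (n : ℕ) (k : ℤ),
    p (k + n + 1) * p (k - 1) ≤ p (k + n) * p k := by
  intro n
  induction n with
  | zero => intro k; simpa [sq, mul_comm] using h.lc k
  | succ n ih =>
    intro k
    have hn : (((n:ℕ)+1 : ℕ) : ℤ) = (n:ℤ) + 1 := by push_cast; ring
    rw [hn]
    have ih' := ih k
    rcases le_or_gt (p (k + n + 1)) 0 with hB | hB
    · have hB0 : p (k + n + 1) = 0 := le_antisymm hB (h.nonneg _)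
      have : p (k + (n:ℤ) + 1 + 1) * p (k - 1) ≤ 0 := by
        by_contra hcon
        push_neg at hcon
        have h1 : 0 < p (k + (n:ℤ) + 1 + 1) := by
          rcases (h.nonneg (k + (n:ℤ) + 1 + 1)).lt_or_eq with h1 | h1
          · exact h1
          · exfalso; apply lt_irrefl (0:ℝ); simpa [← h1] using hcon
        have h2 : 0 < p (k - 1) := by
          rcases (h.nonneg (k-1)).lt_or_eq with h2 | h2
          · exact h2
          · exfalso; apply lt_irrefl (0:ℝ); simpa [← h2] using hcon
        have := h.supp (k-1) (k + n + 1) (k + n + 1 + 1) (by omega) (by omega) h2 h1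
        rw [hB0] at this; exact lt_irrefl _ this
      rw [show k + ((n:ℤ)+1) + 1 = k + (n:ℤ) + 1 + 1 by ring,
        show k + ((n:ℤ)+1) = k + (n:ℤ) + 1 by ring]
      exact this.trans (mul_nonneg (h.nonneg _) (h.nonneg _))
    · -- p (k+n+1) > 0
      rcases (h.nonneg (k + n)).lt_or_eq.symm with hA | hA
      · -- p (k+n) = 0
        have hA0 : p (k + (n:ℤ)) = 0 := hA.symm
        have ih2 : p (k + (n:ℤ) + 1) * p (k - 1) ≤ 0 := by
          rw [hA0, zero_mul] at ih'; exact ih'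
        have hx1 : p (k - 1) ≤ 0 := by nlinarith [h.nonneg (k-1)]
        have hx : p (k - 1) = 0 := le_antisymm hx1 (h.nonneg _)
        have : p (k + (n:ℤ) + 1 + 1) * p (k - 1) = 0 := by rw [hx, mul_zero]
        rw [show k + ((n:ℤ)+1) + 1 = k + (n:ℤ) + 1 + 1 by ring,
          show k + ((n:ℤ)+1) = k + (n:ℤ) + 1 by ring, this]
        exact mul_nonneg hB.le (h.nonneg _)
      · have hlc := h.lc (k + n + 1)
        have hlc' : p (k+n) * p (k+n+1+1) ≤ p (k+n+1)^2 := by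
          have : k + n + 1 - 1 = k + n := by ring
          rw [this] at hlc; exact hlc
        rw [show k + ((n:ℤ)+1) + 1 = k + (n:ℤ) + 1 + 1 by ring,
          show k + ((n:ℤ)+1) = k + (n:ℤ) + 1 by ring]
        -- want : p(k+n+2) * p(k-1) ≤ p(k+n+1) * p k
        nlinarith [mul_le_mul_of_nonneg_right hlc' (h.nonneg (k-1)),
          mul_le_mul_of_nonneg_left ih' hB.le, h.nonneg (k+n+1+1), h.nonneg (k-1),
          h.nonneg k]

lemma Nice.T_nonneg (h : Nice p) (m : ℤ) : 0 ≤ T p m :=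
  tsum_nonneg (fun j => h.nonneg _)

lemma Nice.T_succ (h : Nice p) (m : ℤ) : T p m = p m + T p (m+1) := by
  have hs := h.shift_summable m
  have := Summable.tsum_eq_zero_add hs
  simp only [Nat.cast_zero, add_zero] at this
  rw [T, this]
  congr 1
  rw [T]
  apply tsum_congr
  intro j
  congr 1
  push_cast
  ring

lemma Nice.T_step (h : Nice p) (m : ℤ) : T p (m+1) ≤ T p m := by
  rw [h.T_succ m]
  nlinarith [h.nonneg m]

lemma Nice.T_mono (h : Nice p) {a b : ℤ} (hab : a ≤ b) : T p b ≤ T p a := by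
  have key : ∀ n : ℕ, ∀ a : ℤ, T p (a + n) ≤ T p a := by
    intro n
    induction n with
    | zero => intro a; simp
    | succ n ih =>
      intro a
      have h1 := ih (a+1)
      have h2 := h.T_step a
      calc T p (a + ((n:ℤ)+1)) = T p ((a+1) + (n:ℤ)) := by ring_nf
        _ ≤ T p (a+1) := h1
        _ ≤ T p a := h2
  have : b = a + ((b - a).toNat : ℤ) := by omega
  rw [this]
  exact key _ a

lemma Nice.T_le_one (h : Nice p) (m : ℤ) : T p m ≤ 1 := by
  rw [T]
  have h1 : (1:ℝ) = ∑' k : ℤ, p k := h.hassum.tsum_eq.symm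
  rw [h1]
  exact Summable.tsum_le_tsum_of_inj (fun j : ℕ => m + (j:ℤ))
    (fun a b hab => by simpa using hab)
    (fun c _ => h.nonneg c) (fun j => le_refl _) (h.shift_summable m) h.summable

lemma Nice.T_mul (h : Nice p) (k : ℤ) : T p (k+1) * p (k-1) ≤ T p k * p k := by
  rw [T, T, ← tsum_mul_right, ← tsum_mul_right]
  apply Summable.tsum_le_tsum _ ((h.shift_summable (k+1)).mul_right _)
    ((h.shift_summable k).mul_right _)
  intro j
  have := h.lc_gen j k
  rw [show k + 1 + (j:ℤ) = k + (j:ℤ) + 1 by ring]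
  exact this

lemma Nice.TLC (h : Nice p) (k : ℤ) : T p k * T p (k+2) ≤ T p (k+1)^2 := by
  have e1 : T p k = p k + T p (k+1) := h.T_succ k
  have e2 : T p (k+1) = p (k+1) + T p (k+2) := by
    have := h.T_succ (k+1); rw [show k+1+1 = k+2 by ring] at this; exact this
  have key := h.T_mul (k+1)
  rw [show k+1+1 = k+2 by ring, show k+1-1 = k by ring] at key
  nlinarith [h.T_nonneg (k+2), h.nonneg k, h.T_nonneg (k+1)]

lemma Nice.halving (h : Nice p) : ∀ n : ℕ, T p ((n:ℤ)+2) * T p 0 ≤ T p (n:ℤ) * T p 2 := by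
  intro n
  induction n with
  | zero => norm_num [mul_comm]
  | succ n ih =>
    rcases le_or_gt (T p ((n:ℤ)+2)) 0 with h0 | h0
    · have hz : T p ((n:ℤ)+2) = 0 := le_antisymm h0 (h.T_nonneg _)
      have hz2 : T p (((n:ℕ)+1:ℕ) + 2) = 0 := by
        have : T p (((n:ℕ)+1:ℕ)+2) ≤ T p ((n:ℤ)+2) := h.T_mono (by push_cast; omega)
        have h2 := h.T_nonneg ((((n:ℕ)+1:ℕ):ℤ)+2)
        push_cast at this h2 ⊢
        linarith [this, h2, hz.le]
      rw [hz2, zero_mul]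
      exact mul_nonneg (h.T_nonneg _) (h.T_nonneg _)
    · -- T p (n+2) > 0, hence T p (n+1) > 0
      have h1 : 0 < T p ((n:ℤ)+1) := lt_of_lt_of_le h0 (h.T_mono (by omega))
      have tlc1 := h.TLC ((n:ℤ)+1)
      have tlc2 := h.TLC (n:ℤ)
      rw [show (n:ℤ)+1+2 = (n:ℤ)+3 by ring, show (n:ℤ)+1+1 = (n:ℤ)+2 by ring] at tlc1
      rw [show (n:ℤ)+2 = (n:ℤ)+2 by ring] at tlc2
      push_cast
      rw [show (n:ℤ)+1+2 = (n:ℤ)+3 by ring]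
      -- goal : T p (n+3) * T p 0 ≤ T p (n+1) * T p 2
      -- tlc1 : T p (n+1) * T p (n+3) ≤ T p (n+2)^2
      -- tlc2 : T p n * T p (n+2) ≤ T p (n+1)^2
      -- ih : T p (n+2) * T p 0 ≤ T p n * T p 2
      nlinarith [h.T_nonneg ((n:ℤ)+3), h.T_nonneg 0, h.T_nonneg 2, h.T_nonneg (n:ℤ),
        mul_le_mul_of_nonneg_right tlc1 (h.T_nonneg 0),
        mul_le_mul_of_nonneg_left ih h0.le,
        mul_le_mul_of_nonneg_right tlc2 (h.T_nonneg 2)]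

lemma Nice.nat_mul_summable (h : Nice p) : Summable (fun n : ℕ => (n:ℝ) * p (n:ℤ)) := by
  by_cases hz : ∀ n : ℕ, 1 ≤ n → p (n:ℤ) = 0
  · apply summable_of_ne_finset_zero (s := {0})
    intro n hn
    simp only [Finset.mem_singleton] at hn
    rw [hz n (by omega), mul_zero]
  · push_neg at hz
    obtain ⟨a, ha1, ha2⟩ := hz
    have hap : 0 < p (a:ℤ) := (h.nonneg _).lt_of_ne (Ne.symm ha2)
    -- find m ≥ 1 with p m > 0 and p (m+1) < p m
    have htend : Filter.Tendsto (fun j:ℕ => p ((a:ℤ) + j)) Filter.atTop (nhds 0) :=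
      (h.shift_summable (a:ℤ)).tendsto_atTop_zero
    have hex : ∃ i : ℕ, 0 < p ((a:ℤ)+i) ∧ p ((a:ℤ)+i+1) < p ((a:ℤ)+i) := by
      by_contra hcon
      push_neg at hcon
      have mono : ∀ i : ℕ, p (a:ℤ) ≤ p ((a:ℤ)+i) := by
        intro i
        induction i with
        | zero => simp
        | succ i ih =>
          have hpos : 0 < p ((a:ℤ)+i) := lt_of_lt_of_le hap ih
          have := hcon i hpos
          push_cast
          rw [show (a:ℤ) + ((i:ℤ)+1) = (a:ℤ)+i+1 by ring]
          linarith
      have : p (a:ℤ) ≤ 0 := le_of_tendsto_of_tendsto' tendsto_const_nhds htend mono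
      linarith
    obtain ⟨i, hpi, hdec⟩ := hex
    set m : ℤ := (a:ℤ) + i with hm
    have hm1 : 1 ≤ m := by omega
    set ρ : ℝ := p (m+1) / p m with hρ
    have hρ0 : 0 ≤ ρ := div_nonneg (h.nonneg _) (h.nonneg _)
    have hρ1 : ρ < 1 := (div_lt_one hpi).mpr hdec
    have step : ∀ j : ℕ, p (m + j + 1) ≤ ρ * p (m + j) := by
      intro j
      induction j with
      | zero => simp [hρ, div_mul_cancel₀ _ (ne_of_gt hpi), le_refl]
      | succ j _ =>
        have key := h.lc_gen j (m+1)
        rw [show m+1-1 = m by ring] at key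
        -- key : p (m+1+j+1) * p m ≤ p (m+1+j) * p (m+1)
        have : p (m+1+j+1) ≤ p (m+1+j) * ρ := by
          rw [hρ, mul_div_assoc']
          exact (le_div_iff₀ hpi).mpr key
        push_cast
        rw [show m + ((j:ℤ)+1) + 1 = m+1+(j:ℤ)+1 by ring,
          show m + ((j:ℤ)+1) = m+1+(j:ℤ) by ring]
        linarith [this]
    have geo : ∀ j : ℕ, p (m + j) ≤ p m * ρ^j := by
      intro j
      induction j with
      | zero => simp
      | succ j ih =>
        have := step j
        calc p (m + ((j:ℕ)+1:ℕ)) = p (m + j + 1) := by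
              rw [show m + (((j:ℕ)+1:ℕ):ℤ) = m + (j:ℤ) + 1 by push_cast; ring]
          _ ≤ ρ * p (m+j) := step j
          _ ≤ ρ * (p m * ρ^j) := by
              apply mul_le_mul_of_nonneg_left ih hρ0
          _ = p m * ρ^(j+1) := by ring
    -- summability of shifted weighted sums
    have hsum2 : Summable (fun j : ℕ => p m * (((m:ℝ)+1) * ρ^j + (j:ℝ) * ρ^j)) := by
      apply Summable.mul_left
      apply Summable.add
      · exact (summable_geometric_of_lt_one hρ0 hρ1).mul_left _
      · simpa using summable_pow_mul_geometric_of_norm_lt_one 1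
          (r := ρ) (by rwa [Real.norm_eq_abs, abs_of_nonneg hρ0])
    have hsummaj : Summable (fun j : ℕ => (((m:ℝ) + j) + 1) * p (m + j + 1)) := by
      apply Summable.of_nonneg_of_le _ _ hsum2
      · intro j
        apply mul_nonneg _ (h.nonneg _)
        have : (0:ℝ) ≤ (m:ℝ) := by exact_mod_cast (by omega : (0:ℤ) ≤ m)
        positivity
      · intro j
        have g1 : p (m+j+1) ≤ ρ * p (m+j) := step j
        have g2 : p (m+j) ≤ p m * ρ^j := geo j
        have hmj : (0:ℝ) ≤ (m:ℝ) + j := by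
          have : (0:ℝ) ≤ (m:ℝ) := by exact_mod_cast (by omega : (0:ℤ) ≤ m)
          positivity
        calc (((m:ℝ)+j)+1) * p (m+j+1) ≤ (((m:ℝ)+j)+1) * (ρ * p (m+j)) := by
              apply mul_le_mul_of_nonneg_left g1 (by linarith)
          _ ≤ (((m:ℝ)+j)+1) * (ρ * (p m * ρ^j)) := by
              apply mul_le_mul_of_nonneg_left _ (by linarith)
              exact mul_le_mul_of_nonneg_left g2 hρ0
          _ = p m * (ρ * (((m:ℝ)+1) * ρ^j + (j:ℝ) * ρ^j)) := by ring
          _ ≤ p m * (1 * (((m:ℝ)+1) * ρ^j + (j:ℝ) * ρ^j)) := by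
              apply mul_le_mul_of_nonneg_left _ (h.nonneg m)
              apply mul_le_mul_of_nonneg_right hρ1.le
              have : (0:ℝ) ≤ ρ^j := pow_nonneg hρ0 j
              have : (0:ℝ) ≤ (m:ℝ) := by exact_mod_cast (by omega : (0:ℤ) ≤ m)
              positivity
          _ = p m * (((m:ℝ)+1) * ρ^j + (j:ℝ) * ρ^j) := by ring
    -- now transfer to summability of n * p n over ℕ
    have M : ℕ := 0
    set M : ℕ := (m.toNat) + 1 with hM
    have hMm : (M:ℤ) = m + 1 := by omega
    have : Summable (fun j : ℕ => ((j + M : ℕ):ℝ) * p ((j + M : ℕ):ℤ)) := by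
      apply hsummaj.congr
      intro j
      have h1 : ((j + M:ℕ):ℤ) = m + j + 1 := by omega
      have h2 : ((j + M:ℕ):ℝ) = (m:ℝ) + j + 1 := by exact_mod_cast congrArg (fun z : ℤ => (z : ℝ)) h1
      rw [h1, h2]
    exact (summable_nat_add_iff M).mp this

lemma Nice.abs_summable (h : Nice p) (hneg : Nice (fun n => p (-n))) :
    Summable (fun k : ℤ => |(k:ℝ)| * p k) := by
  apply Summable.of_nat_of_neg
  · apply h.nat_mul_summable.congr
    intro n
    simp [abs_of_nonneg (by positivity : (0:ℝ) ≤ (n:ℝ))]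
  · apply hneg.nat_mul_summable.congr
    intro n
    push_cast
    rw [abs_neg, abs_of_nonneg (by positivity : (0:ℝ) ≤ (n:ℝ))]

lemma Nice.neg (h : Nice p) : Nice (fun n => p (-n)) := by
  constructor
  · intro k; exact h.nonneg _
  · intro k
    have := h.lc (-k)
    have e1 : -k - 1 = -(k+1) := by ring
    have e2 : -k + 1 = -(k-1) := by ring
    rw [e1, e2] at this
    simpa [mul_comm] using this
  · intro a b c hab hbc ha hc
    exact h.supp (-c) (-b) (-a) (by omega) (by omega) hc ha
  · exact (Equiv.neg ℤ).hasSum_iff.mpr h.hassum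
  · have e := (Equiv.neg ℤ).tsum_eq (fun k : ℤ => (k:ℝ) * p k)
    simp only [Equiv.neg_apply, Int.cast_neg, neg_mul] at e
    rw [tsum_neg] at e
    have h0 := e.trans h.mean
    simpa using neg_eq_zero.mp h0
  · have e := (Equiv.neg ℤ).tsum_eq (fun k : ℤ => |(k:ℝ)| * p k)
    simp only [Equiv.neg_apply] at e
    calc ∑' (k : ℤ), |(k:ℝ)| * p (-k) = ∑' (k : ℤ), |((-k:ℤ):ℝ)| * p (-k) := by
          apply tsum_congr; intro k; rw [Int.cast_neg, abs_neg]
      _ = ∑' (k : ℤ), |(k:ℝ)| * p k := e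
      _ ≤ 1 := h.absm

/-- the positive-part first moment. -/
def Pp (p : ℤ → ℝ) : ℝ := ∑' k : ℤ, max (k:ℝ) 0 * p k

lemma Nice.k_mul_summable (h : Nice p) (hneg : Nice (fun n => p (-n))) :
    Summable (fun k : ℤ => (k:ℝ) * p k) := by
  apply Summable.of_abs
  apply Summable.of_nonneg_of_le (fun k => abs_nonneg _) _ (h.abs_summable hneg)
  intro k
  rw [abs_mul, abs_of_nonneg (h.nonneg k)]

lemma Nice.Pp_summable (h : Nice p) (hneg : Nice (fun n => p (-n))) :
    Summable (fun k : ℤ => max (k:ℝ) 0 * p k) := by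
  apply Summable.of_nonneg_of_le
    (fun k => mul_nonneg (le_max_right _ _) (h.nonneg k)) _ (h.abs_summable hneg)
  intro k
  apply mul_le_mul_of_nonneg_right _ (h.nonneg k)
  rcases le_or_gt 0 (k:ℝ) with h1 | h1
  · rw [max_eq_left h1, abs_of_nonneg h1]
  · rw [max_eq_right h1.le, abs_of_neg h1]; linarith

lemma Nice.Pp_le (h : Nice p) (hneg : Nice (fun n => p (-n))) : Pp p ≤ 1/2 := by
  have hk := h.k_mul_summable hneg
  have ha := h.abs_summable hneg
  have key : ∑' k : ℤ, max (k:ℝ) 0 * p k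
      = (1/2) * ((∑' k : ℤ, |(k:ℝ)| * p k) + ∑' k : ℤ, (k:ℝ) * p k) := by
    rw [← Summable.tsum_add ha hk, ← tsum_mul_left]
    apply tsum_congr
    intro k
    rcases le_or_gt 0 (k:ℝ) with h1 | h1
    · rw [max_eq_left h1, abs_of_nonneg h1]; ring
    · rw [max_eq_right h1.le, abs_of_neg h1]; ring
  rw [Pp, key, h.mean, add_zero]
  linarith [h.absm]

lemma Nice.markov (h : Nice p) (hneg : Nice (fun n => p (-n))) (m : ℤ) (hm : 1 ≤ m) :
    (m:ℝ) * T p m ≤ Pp p := by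
  rw [T, ← tsum_mul_left]
  apply Summable.tsum_le_tsum_of_inj (fun j : ℕ => m + (j:ℤ))
    (fun a b hab => by simpa using hab)
    (fun c _ => mul_nonneg (le_max_right _ _) (h.nonneg c))
    _ ((h.shift_summable m).mul_left _) (h.Pp_summable hneg)
  intro j
  apply mul_le_mul_of_nonneg_right _ (h.nonneg _)
  have : (m:ℝ) ≤ ((m + (j:ℤ) : ℤ):ℝ) := by push_cast; linarith [Nat.cast_nonneg (α := ℝ) j]
  exact le_trans this (le_max_left _ _)

lemma Nice.T1_le (h : Nice p) (hneg : Nice (fun n => p (-n))) : T p 1 ≤ 1/2 := by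
  have := h.markov hneg 1 le_rfl
  have h2 := h.Pp_le hneg
  push_cast at this
  linarith

lemma Nice.T2_le (h : Nice p) (hneg : Nice (fun n => p (-n))) : T p 2 ≤ 1/4 := by
  have := h.markov hneg 2 (by omega)
  have h2 := h.Pp_le hneg
  push_cast at this
  linarith

lemma Nice.T0_T0 (h : Nice p) (hneg : Nice (fun n => p (-n))) :
    T p 0 + T (fun n => p (-n)) 1 = 1 := by
  have h1 : HasSum (fun j : ℕ => p (j:ℤ)) (T p 0) := by
    have h0 := (h.shift_summable 0).hasSum
    rw [T]
    apply h0.congr_fun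
    intro j
    simp
  have h2 : HasSum (fun j : ℕ => p (-((j:ℤ)+1))) (T (fun n => p (-n)) 1) := by
    have h0 := (hneg.shift_summable 1).hasSum
    rw [T]
    apply h0.congr_fun
    intro j
    show p (-((j:ℤ)+1)) = p (-(1+(j:ℤ)))
    congr 1
    ring
  have key : HasSum p (T p 0 + T (fun n => p (-n)) 1) :=
    HasSum.of_nat_of_neg_add_one h1 h2
  exact (key.unique h.hassum)

lemma Nice.T0_ge (h : Nice p) (hneg : Nice (fun n => p (-n))) : 1/2 ≤ T p 0 := by
  have e : (fun n : ℤ => p (-(-n))) = p := by funext n; rw [neg_neg]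
  have hneg2 : Nice (fun n => (fun m : ℤ => p (-m)) (-n)) := by
    simpa only [e] using h
  have ht1 : T (fun n => p (-n)) 1 ≤ 1/2 := hneg.T1_le hneg2
  have := h.T0_T0 hneg
  linarith

lemma Nice.halve (h : Nice p) (hneg : Nice (fun n => p (-n))) (n : ℕ) :
    T p ((n:ℤ)+2) ≤ T p (n:ℤ) / 2 := by
  have h1 := h.halving n
  have h2 := h.T2_le hneg
  have h3 := h.T0_ge hneg
  have h4 := h.T_nonneg ((n:ℤ)+2)
  have h5 := h.T_nonneg (n:ℤ)
  nlinarith [mul_le_mul_of_nonneg_left h3 h4]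

lemma Nice.pairbound (h : Nice p) (hneg : Nice (fun n => p (-n))) :
    ∀ m : ℕ, T p (2*(m:ℤ)) ≤ (2⁻¹:ℝ)^m ∧ T p (2*(m:ℤ)+1) ≤ (2⁻¹:ℝ)^(m+1) := by
  intro m
  induction m with
  | zero =>
    constructor
    · simpa using h.T_le_one 0
    · simpa using h.T1_le hneg
  | succ m ih =>
    obtain ⟨ih1, ih2⟩ := ih
    constructor
    · have := h.halve hneg (2*m)
      push_cast at this ⊢
      rw [show 2*((m:ℤ)+1) = 2*(m:ℤ)+2 by ring]
      calc T p (2*(m:ℤ)+2) ≤ T p (2*(m:ℤ)) / 2 := by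
            rw [show 2*(m:ℤ)+2 = ((2*m:ℕ):ℤ)+2 by push_cast; ring,
              show 2*(m:ℤ) = ((2*m:ℕ):ℤ) by push_cast; ring]
            exact this
        _ ≤ (2⁻¹:ℝ)^m / 2 := by linarith
        _ = (2⁻¹:ℝ)^(m+1) := by rw [pow_succ]; ring
    · have := h.halve hneg (2*m+1)
      push_cast at this ⊢
      rw [show 2*((m:ℤ)+1)+1 = (2*(m:ℤ)+1)+2 by ring]
      calc T p ((2*(m:ℤ)+1)+2) ≤ T p (2*(m:ℤ)+1) / 2 := by
            rw [show (2*(m:ℤ)+1)+2 = ((2*m+1:ℕ):ℤ)+2 by push_cast; ring,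
              show 2*(m:ℤ)+1 = ((2*m+1:ℕ):ℤ) by push_cast; ring]
            exact this
        _ ≤ (2⁻¹:ℝ)^(m+1) / 2 := by linarith
        _ = (2⁻¹:ℝ)^(m+1+1) := by rw [pow_succ]; ring

lemma Nice.tailsum (h : Nice p) (hneg : Nice (fun n => p (-n))) (N : ℕ) :
    ∑' j : ℕ, ENNReal.ofReal (T p (2*(N:ℤ)+1 + (j:ℤ)))
      ≤ ENNReal.ofReal ((2⁻¹:ℝ)^N * 2) := by
  set f : ℕ → ENNReal := fun j => ENNReal.ofReal (T p (2*(N:ℤ)+1 + (j:ℤ))) with hf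
  have hsplit : ∑' k : ℕ, f (2*k) + ∑' k : ℕ, f (2*k+1) = ∑' k : ℕ, f k :=
    tsum_even_add_odd ENNReal.summable ENNReal.summable
  have hgeom : Summable (fun i : ℕ => (2⁻¹:ℝ)^(N+i+1)) := by
    apply Summable.congr ((summable_geometric_of_lt_one (by norm_num) (by norm_num :
      (2⁻¹:ℝ) < 1)).mul_left ((2⁻¹:ℝ)^(N+1)))
    intro i
    rw [← pow_add]
    congr 1
    ring
  have hgeomsum : ∑' i : ℕ, (2⁻¹:ℝ)^(N+i+1) = (2⁻¹:ℝ)^N := by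
    have : ∑' i : ℕ, (2⁻¹:ℝ)^(N+i+1) = ((2⁻¹:ℝ)^(N+1)) * ∑' i : ℕ, (2⁻¹:ℝ)^i := by
      rw [← tsum_mul_left]
      apply tsum_congr
      intro i
      rw [← pow_add]
      congr 1
      ring
    rw [this, tsum_geometric_of_lt_one (by norm_num) (by norm_num)]
    rw [show ((1:ℝ) - 2⁻¹)⁻¹ = 2 by norm_num, pow_succ]
    ring
  have heven : ∑' k : ℕ, f (2*k) ≤ ENNReal.ofReal ((2⁻¹:ℝ)^N) := by
    calc ∑' k : ℕ, f (2*k) ≤ ∑' k : ℕ, ENNReal.ofReal ((2⁻¹:ℝ)^(N+k+1)) := by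
          apply ENNReal.tsum_le_tsum
          intro k
          apply ENNReal.ofReal_le_ofReal
          have hb := (h.pairbound hneg (N+k)).2
          calc T p (2*(N:ℤ)+1+((2*k:ℕ):ℤ)) = T p (2*((N:ℤ)+(k:ℤ))+1) := by
                congr 1; push_cast; ring
            _ ≤ (2⁻¹:ℝ)^(N+k+1) := by
                rw [show 2*((N:ℤ)+(k:ℤ)) = 2*(((N+k:ℕ)):ℤ) by push_cast; ring]
                exact hb
      _ = ENNReal.ofReal ((2⁻¹:ℝ)^N) := by
          rw [← ENNReal.ofReal_tsum_of_nonneg (fun i => by positivity) hgeom, hgeomsum]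
    
  have hodd : ∑' k : ℕ, f (2*k+1) ≤ ENNReal.ofReal ((2⁻¹:ℝ)^N) := by
    calc ∑' k : ℕ, f (2*k+1) ≤ ∑' k : ℕ, ENNReal.ofReal ((2⁻¹:ℝ)^(N+k+1)) := by
          apply ENNReal.tsum_le_tsum
          intro k
          apply ENNReal.ofReal_le_ofReal
          have hb := (h.pairbound hneg (N+k+1)).1
          calc T p (2*(N:ℤ)+1+((2*k+1:ℕ):ℤ)) = T p (2*(((N+k+1:ℕ)):ℤ)) := by
                congr 1; push_cast; ring
            _ ≤ (2⁻¹:ℝ)^(N+k+1) := hb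
      _ = ENNReal.ofReal ((2⁻¹:ℝ)^N) := by
          rw [← ENNReal.ofReal_tsum_of_nonneg (fun i => by positivity) hgeom, hgeomsum]
  calc ∑' j : ℕ, f j = ∑' k : ℕ, f (2*k) + ∑' k : ℕ, f (2*k+1) := hsplit.symm
    _ ≤ ENNReal.ofReal ((2⁻¹:ℝ)^N) + ENNReal.ofReal ((2⁻¹:ℝ)^N) :=
        add_le_add heven hodd
    _ = ENNReal.ofReal ((2⁻¹:ℝ)^N * 2) := by
        rw [← ENNReal.ofReal_add (by positivity) (by positivity)]
        congr 1
        ring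

/-! ### Measure bridging -/

open MeasureTheory in
lemma meas_Ici (μ : Measure ℤ) (m : ℤ) : μ (Set.Ici m) = ∑' j : ℕ, μ {m + (j:ℤ)} := by
  have : Set.Ici m = ⋃ j : ℕ, {m + (j:ℤ)} := by
    ext x
    simp only [Set.mem_Ici, Set.mem_iUnion, Set.mem_singleton_iff]
    constructor
    · intro hx; exact ⟨(x - m).toNat, by omega⟩
    · rintro ⟨j, rfl⟩; omega
  rw [this, measure_iUnion _ (fun j => measurableSet_singleton _)]
  intro a b hab
  simp only [Set.disjoint_singleton]
  omega

open MeasureTheory in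
lemma tsum_meas_singleton (μ : Measure ℤ) : ∑' k : ℤ, μ {k} = μ Set.univ := by
  have : (Set.univ : Set ℤ) = ⋃ k : ℤ, {k} := by ext x; simp
  rw [this, measure_iUnion _ (fun j => measurableSet_singleton _)]
  intro a b hab
  simp only [Set.disjoint_singleton]
  exact hab

open MeasureTheory in
lemma hasSum_pmf (μ : Measure ℤ) [IsProbabilityMeasure μ] :
    HasSum (fun k => (μ {k}).toReal) 1 := by
  have h1 : ∑' k : ℤ, μ {k} = 1 := by rw [tsum_meas_singleton]; simp
  have h2 : Summable (fun k => (μ {k}).toReal) :=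
    ENNReal.summable_toReal (by rw [h1]; exact ENNReal.one_ne_top)
  have h3 := h2.hasSum
  have h4 : ∑' k : ℤ, (μ {k}).toReal = 1 := by
    rw [← ENNReal.tsum_toReal_eq (fun k => measure_ne_top μ _), h1, ENNReal.toReal_one]
  rwa [h4] at h3

open MeasureTheory in
lemma T_eq_Ici (μ : Measure ℤ) [IsProbabilityMeasure μ] (m : ℤ) :
    T (fun k => (μ {k}).toReal) m = (μ (Set.Ici m)).toReal := by
  rw [T, meas_Ici μ m, ENNReal.tsum_toReal_eq (fun j => measure_ne_top μ _)]

open MeasureTheory in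
lemma F_eq_neg_T (μ : Measure ℤ) [IsProbabilityMeasure μ] (k : ℤ) :
    (μ (Set.Iic k)).toReal = T (fun n => (μ {-n}).toReal) (-k) := by
  rw [T]
  have : Set.Iic k = ⋃ j : ℕ, {k - (j:ℤ)} := by
    ext x
    simp only [Set.mem_Iic, Set.mem_iUnion, Set.mem_singleton_iff]
    constructor
    · intro hx; exact ⟨(k - x).toNat, by omega⟩
    · rintro ⟨j, rfl⟩; omega
  rw [this, measure_iUnion _ (fun j => measurableSet_singleton _)]
  · rw [ENNReal.tsum_toReal_eq (fun j => measure_ne_top μ _)]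
    apply tsum_congr
    intro j
    show (μ {k - (j:ℤ)}).toReal = (μ {-(-k + (j:ℤ))}).toReal
    congr 2
    ring
  · intro a b hab
    simp only [Set.disjoint_singleton]
    omega

open MeasureTheory in
lemma F_eq_one_sub_T (μ : Measure ℤ) [IsProbabilityMeasure μ] (k : ℤ) :
    (μ (Set.Iic k)).toReal = 1 - T (fun n => (μ {n}).toReal) (k+1) := by
  rw [T_eq_Ici]
  have hdisj : Disjoint (Set.Iic k) (Set.Ici (k+1)) := by
    rw [Set.disjoint_iff]
    intro x ⟨h1, h2⟩
    simp only [Set.mem_Iic] at h1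
    simp only [Set.mem_Ici] at h2
    omega
  have hunion : Set.Iic k ∪ Set.Ici (k+1) = Set.univ := by
    ext x; simp only [Set.mem_union, Set.mem_Iic, Set.mem_Ici, Set.mem_univ, iff_true]; omega
  have := measure_union (μ := μ) hdisj (by trivial)
  rw [hunion] at this
  have h1 : (μ Set.univ).toReal = 1 := by simp
  rw [this] at h1
  rw [ENNReal.toReal_add (measure_ne_top μ _) (measure_ne_top μ _)] at h1
  linarith

/-! ### The quantile coupling -/

open MeasureTheory

variable {F : ℤ → ℝ}

/-- quantile function, sanitized outside `(0,1)`. -/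
def qf (F : ℤ → ℝ) (t : ℝ) : ℤ :=
  if t ∈ Set.Ioo (0:ℝ) 1 then sInf {k | t ≤ F k} else 0

structure CDF (F : ℤ → ℝ) : Prop where
  mono : Monotone F
  lo : ∀ t : ℝ, t ∈ Set.Ioo (0:ℝ) 1 → ∃ k, F k < t
  hi : ∀ t : ℝ, t ∈ Set.Ioo (0:ℝ) 1 → ∃ k, t ≤ F k
  nonneg : ∀ k, 0 ≤ F k
  le_one : ∀ k, F k ≤ 1

lemma CDF.bddBelow (hF : CDF F) {t : ℝ} (ht : t ∈ Set.Ioo (0:ℝ) 1) :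
    BddBelow {k | t ≤ F k} := by
  obtain ⟨k0, hk0⟩ := hF.lo t ht
  refine ⟨k0, fun j hj => ?_⟩
  by_contra hc
  push_neg at hc
  exact absurd (le_trans hj (hF.mono (by omega))) (not_le.mpr hk0)

lemma CDF.qf_le_iff (hF : CDF F) {t : ℝ} (ht : t ∈ Set.Ioo (0:ℝ) 1) (k : ℤ) :
    qf F t ≤ k ↔ t ≤ F k := by
  rw [qf, if_pos ht]
  constructor
  · intro h
    have hmem : sInf {k | t ≤ F k} ∈ {k | t ≤ F k} :=
      Int.csInf_mem (hF.hi t ht) (hF.bddBelow ht)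
    exact le_trans hmem (hF.mono h)
  · intro h
    exact csInf_le (hF.bddBelow ht) h

lemma CDF.measurable_qf (hF : CDF F) : Measurable (qf F) := by
  apply measurable_to_countable'
  intro k
  have hset : qf F ⁻¹' {k} =
      (Set.Ioc (F (k-1)) (F k) ∩ Set.Ioo (0:ℝ) 1) ∪
        (if k = 0 then (Set.Ioo (0:ℝ) 1)ᶜ else ∅) := by
    ext t
    by_cases ht : t ∈ Set.Ioo (0:ℝ) 1
    · simp only [Set.mem_preimage, Set.mem_singleton_iff, Set.mem_union, Set.mem_inter_iff,
        Set.mem_Ioc, ht, and_true]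
      have h1 : qf F t = k ↔ (qf F t ≤ k ∧ ¬ (qf F t ≤ k - 1)) := by omega
      rw [h1, hF.qf_le_iff ht, hF.qf_le_iff ht]
      constructor
      · rintro ⟨h2, h3⟩
        left
        exact ⟨not_le.mp h3, h2⟩
      · rintro (⟨h2, h3⟩ | hbad)
        · exact ⟨h3, not_le.mpr h2⟩
        · exfalso
          rcases Decidable.em (k = 0) with h | h
          · rw [if_pos h] at hbad; exact hbad ht
          · rw [if_neg h] at hbad; exact hbad
    · simp only [Set.mem_preimage, Set.mem_singleton_iff, Set.mem_union, Set.mem_inter_iff, ht,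
        and_false, false_or]
      rw [qf, if_neg ht]
      rcases Decidable.em (k = 0) with h | h
      · simp [h, ht]
      · simp [h, Ne.symm h]
  rw [hset]
  apply MeasurableSet.union
  · exact (measurableSet_Ioc.inter measurableSet_Ioo)
  · rcases Decidable.em (k = 0) with h | h
    · rw [if_pos h]; exact measurableSet_Ioo.compl
    · rw [if_neg h]; exact MeasurableSet.empty

lemma vol_Ioc_inter (a b : ℝ) (ha : 0 ≤ a) (hb : b ≤ 1) :
    volume (Set.Ioc a b ∩ Set.Ioo (0:ℝ) 1) = ENNReal.ofReal (b - a) := by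
  apply le_antisymm
  · calc volume (Set.Ioc a b ∩ Set.Ioo (0:ℝ) 1) ≤ volume (Set.Ioc a b) :=
        measure_mono Set.inter_subset_left
      _ = ENNReal.ofReal (b - a) := Real.volume_Ioc
  · calc ENNReal.ofReal (b - a) = volume (Set.Ioo a b) := Real.volume_Ioo.symm
      _ ≤ volume (Set.Ioc a b ∩ Set.Ioo (0:ℝ) 1) := by
        apply measure_mono
        intro t ⟨h1, h2⟩
        exact ⟨⟨h1, h2.le⟩, lt_of_le_of_lt ha h1, lt_of_lt_of_le h2 hb⟩

/-- the quantile function pushes uniform measure on (0,1) to μ. -/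
lemma qf_map_eq (μ : Measure ℤ) [IsProbabilityMeasure μ]
    (hF : CDF (fun k => (μ (Set.Iic k)).toReal)) :
    Measure.map (qf (fun k => (μ (Set.Iic k)).toReal))
      (volume.restrict (Set.Ioo (0:ℝ) 1)) = μ := by
  set F : ℤ → ℝ := fun k => (μ (Set.Iic k)).toReal with hFdef
  rw [Measure.ext_iff_singleton]
  intro k
  rw [Measure.map_apply hF.measurable_qf (measurableSet_singleton k),
    Measure.restrict_apply (hF.measurable_qf (measurableSet_singleton k))]
  have hset : qf F ⁻¹' {k} ∩ Set.Ioo (0:ℝ) 1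
      = Set.Ioc (F (k-1)) (F k) ∩ Set.Ioo (0:ℝ) 1 := by
    ext t
    simp only [Set.mem_inter_iff, Set.mem_preimage, Set.mem_singleton_iff, Set.mem_Ioc]
    constructor
    · rintro ⟨h1, ht⟩
      refine ⟨⟨?_, ?_⟩, ht⟩
      · have := (hF.qf_le_iff ht (k-1)).not
        rw [h1] at this
        exact not_le.mp (this.mp (by omega))
      · exact (hF.qf_le_iff ht k).mp (le_of_eq h1)
    · rintro ⟨⟨h1, h2⟩, ht⟩
      refine ⟨?_, ht⟩
      have ha := (hF.qf_le_iff ht k).mpr h2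
      have hb := (hF.qf_le_iff ht (k-1)).not.mpr (not_le.mpr h1)
      omega
  rw [hset, vol_Ioc_inter _ _ (ENNReal.toReal_nonneg) (by
    have : μ (Set.Iic k) ≤ 1 := prob_le_one
    exact ENNReal.toReal_le_of_le_ofReal zero_le_one (by simpa using this))]
  have hsplit : μ (Set.Iic k) = μ (Set.Iic (k-1)) + μ {k} := by
    have : Set.Iic k = Set.Iic (k-1) ∪ {k} := by
      ext x; simp only [Set.mem_Iic, Set.mem_union, Set.mem_singleton_iff]; omega
    rw [this, measure_union _ (measurableSet_singleton k)]
    rw [Set.disjoint_singleton_right]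
    simp only [Set.mem_Iic]
    omega
  have htr : F k - F (k-1) = (μ {k}).toReal := by
    rw [hFdef]
    simp only []
    rw [hsplit, ENNReal.toReal_add (measure_ne_top μ _) (measure_ne_top μ _)]
    ring
  rw [htr, ENNReal.ofReal_toReal (measure_ne_top μ _)]

/-- counting formula : |a - b| as a sum of indicators over ℤ. -/
lemma count_abs (a b : ℤ) :
    ENNReal.ofReal |(a:ℝ) - (b:ℝ)|
      = ∑' k : ℤ, (if (b ≤ k ∧ k < a) ∨ (a ≤ k ∧ k < b) then (1:ENNReal) else 0) := by
  rcases le_total a b with hab | hab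
  · have : ∀ k : ℤ, (if (b ≤ k ∧ k < a) ∨ (a ≤ k ∧ k < b) then (1:ENNReal) else 0)
        = (if a ≤ k ∧ k < b then (1:ENNReal) else 0) := by
      intro k
      rcases Decidable.em (a ≤ k ∧ k < b) with h | h
      · rw [if_pos h, if_pos (Or.inr h)]
      · rw [if_neg h, if_neg (by rintro (h2 | h2); omega; exact h h2)]
    rw [tsum_congr this, tsum_eq_sum (s := Finset.Ico a b)
      (fun k hk => by rw [if_neg]; simpa [Finset.mem_Ico] using hk)]
    rw [Finset.sum_congr rfl (fun k hk => by rw [if_pos (by simpa [Finset.mem_Ico] using hk)])]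
    rw [Finset.sum_const, nsmul_eq_mul, mul_one, Int.card_Ico]
    rw [abs_of_nonpos (by exact_mod_cast sub_nonpos.mpr ((Int.cast_le (R := ℝ)).mpr hab))]
    rw [show -((a:ℝ) - b) = ((b - a : ℤ) : ℝ) by push_cast; ring]
    rw [show ((b - a : ℤ) : ℝ) = (((b-a).toNat : ℕ) : ℝ) by
      exact_mod_cast congrArg (fun z : ℤ => (z:ℝ))
        (Int.toNat_of_nonneg (show (0:ℤ) ≤ b - a by omega)).symm]
    rw [ENNReal.ofReal_natCast]
  · have : ∀ k : ℤ, (if (b ≤ k ∧ k < a) ∨ (a ≤ k ∧ k < b) then (1:ENNReal) else 0)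
        = (if b ≤ k ∧ k < a then (1:ENNReal) else 0) := by
      intro k
      rcases Decidable.em (b ≤ k ∧ k < a) with h | h
      · rw [if_pos h, if_pos (Or.inl h)]
      · rw [if_neg h, if_neg (by rintro (h2 | h2); exact h h2; omega)]
    rw [tsum_congr this, tsum_eq_sum (s := Finset.Ico b a)
      (fun k hk => by rw [if_neg]; simpa [Finset.mem_Ico] using hk)]
    rw [Finset.sum_congr rfl (fun k hk => by rw [if_pos (by simpa [Finset.mem_Ico] using hk)])]
    rw [Finset.sum_const, nsmul_eq_mul, mul_one, Int.card_Ico]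
    rw [abs_of_nonneg (by exact_mod_cast sub_nonneg.mpr ((Int.cast_le (R := ℝ)).mpr hab))]
    rw [show ((a:ℝ) - b) = ((a - b : ℤ) : ℝ) by push_cast; ring]
    rw [show ((a - b : ℤ) : ℝ) = (((a-b).toNat : ℕ) : ℝ) by
      exact_mod_cast congrArg (fun z : ℤ => (z:ℝ))
        (Int.toNat_of_nonneg (show (0:ℤ) ≤ a - b by omega)).symm]
    rw [ENNReal.ofReal_natCast]

lemma ofReal_sub_add (x y : ℝ) :
    ENNReal.ofReal (y - x) + ENNReal.ofReal (x - y) = ENNReal.ofReal |x - y| := by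
  rcases le_total x y with h | h
  · rw [abs_of_nonpos (by linarith), ENNReal.ofReal_of_nonpos (by linarith : x - y ≤ 0),
      add_zero]
    congr 1
    ring
  · rw [abs_of_nonneg (by linarith), ENNReal.ofReal_of_nonpos (by linarith : y - x ≤ 0),
      zero_add]

lemma coupling_bound (μ ν : Measure ℤ) [IsProbabilityMeasure μ] [IsProbabilityMeasure ν]
    (hFμ : CDF (fun k => (μ (Set.Iic k)).toReal))
    (hFν : CDF (fun k => (ν (Set.Iic k)).toReal)) :
    (⨅ m ∈ {m : Measure (ℤ × ℤ) | m.map Prod.fst = μ ∧ m.map Prod.snd = ν},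
      ∫⁻ x, ENNReal.ofReal |(x.1 : ℝ) - (x.2 : ℝ)| ∂m)
    ≤ ∑' k : ℤ, ENNReal.ofReal
        |(μ (Set.Iic k)).toReal - (ν (Set.Iic k)).toReal| := by
  set Fμ : ℤ → ℝ := fun k => (μ (Set.Iic k)).toReal with hFμdef
  set Fν : ℤ → ℝ := fun k => (ν (Set.Iic k)).toReal with hFνdef
  set P : Measure ℝ := volume.restrict (Set.Ioo (0:ℝ) 1) with hP
  set pair : ℝ → ℤ × ℤ := fun t => (qf Fμ t, qf Fν t) with hpairdef
  have hpair : Measurable pair := hFμ.measurable_qf.prodMk hFν.measurable_qf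
  set pp : Measure (ℤ × ℤ) := P.map pair with hπ
  have hmarg1 : pp.map Prod.fst = μ := by
    rw [hπ, Measure.map_map measurable_fst hpair]
    exact qf_map_eq μ hFμ
  have hmarg2 : pp.map Prod.snd = ν := by
    rw [hπ, Measure.map_map measurable_snd hpair]
    exact qf_map_eq ν hFν
  have habs : Measurable (fun x : ℤ × ℤ => ENNReal.ofReal |(x.1 : ℝ) - (x.2 : ℝ)|) := by
    measurability
  have hcost : ∫⁻ x, ENNReal.ofReal |(x.1 : ℝ) - (x.2 : ℝ)| ∂pp
      = ∑' k : ℤ, ENNReal.ofReal |Fμ k - Fν k| := by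
    rw [hπ, lintegral_map habs hpair]
    have hstep1 : ∫⁻ t, ENNReal.ofReal |((qf Fμ t : ℤ) : ℝ) - ((qf Fν t : ℤ) : ℝ)| ∂P
        = ∫⁻ t, ∑' k : ℤ,
            (Set.Ioc (Fμ k) (Fν k) ∪ Set.Ioc (Fν k) (Fμ k)).indicator
              (fun _ => (1:ENNReal)) t ∂P := by
      rw [hP]
      apply setLIntegral_congr_fun measurableSet_Ioo
      intro t ht
      beta_reduce
      rw [count_abs]
      apply tsum_congr
      intro k
      have h1 : (qf Fν t ≤ k ∧ k < qf Fμ t) ↔ t ∈ Set.Ioc (Fμ k) (Fν k) := by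
        rw [Set.mem_Ioc, hFν.qf_le_iff ht k, ← not_le, hFμ.qf_le_iff ht k, not_le]
        tauto
      have h2 : (qf Fμ t ≤ k ∧ k < qf Fν t) ↔ t ∈ Set.Ioc (Fν k) (Fμ k) := by
        rw [Set.mem_Ioc, hFμ.qf_le_iff ht k, ← not_le, hFν.qf_le_iff ht k, not_le]
        tauto
      rw [Set.indicator_apply]
      have hcond : (qf Fν t ≤ k ∧ k < qf Fμ t ∨ qf Fμ t ≤ k ∧ k < qf Fν t)
          ↔ t ∈ Set.Ioc (Fμ k) (Fν k) ∪ Set.Ioc (Fν k) (Fμ k) := by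
        rw [Set.mem_union, ← h1, ← h2]
      simp only [hcond]
    rw [hstep1, lintegral_tsum (fun k => (Measurable.indicator measurable_const
      (measurableSet_Ioc.union measurableSet_Ioc)).aemeasurable)]
    apply tsum_congr
    intro k
    rw [lintegral_indicator (measurableSet_Ioc.union measurableSet_Ioc), setLIntegral_one,
      hP, Measure.restrict_apply (measurableSet_Ioc.union measurableSet_Ioc)]
    rw [Set.union_inter_distrib_right]
    rw [measure_union _ (measurableSet_Ioc.inter measurableSet_Ioo)]
    · rw [vol_Ioc_inter _ _ (hFμ.nonneg k) (hFν.le_one k),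
        vol_Ioc_inter _ _ (hFν.nonneg k) (hFμ.le_one k), ofReal_sub_add]
    · apply Set.disjoint_left.mpr
      rintro t ⟨⟨h1, h2⟩, _⟩ ⟨⟨h3, h4⟩, _⟩
      exact absurd (lt_of_le_of_lt h2 h3) (lt_irrefl t)
  calc (⨅ m ∈ {m : Measure (ℤ × ℤ) | m.map Prod.fst = μ ∧ m.map Prod.snd = ν},
      ∫⁻ x, ENNReal.ofReal |(x.1 : ℝ) - (x.2 : ℝ)| ∂m)
      ≤ ∫⁻ x, ENNReal.ofReal |(x.1 : ℝ) - (x.2 : ℝ)| ∂pp :=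
        iInf₂_le pp ⟨hmarg1, hmarg2⟩
    _ = ∑' k : ℤ, ENNReal.ofReal |Fμ k - Fν k| := hcost

lemma Nice.nn (h : Nice p) : Nice (fun n : ℤ => p (-(-n))) := by
  simp only [neg_neg]
  exact h

lemma nice_cdf (μ : Measure ℤ) [IsProbabilityMeasure μ]
    (hμ : Nice (fun k => (μ {k}).toReal)) : CDF (fun k => (μ (Set.Iic k)).toReal) := by
  set p : ℤ → ℝ := fun k => (μ {k}).toReal with hp
  have hneg : Nice (fun n => p (-n)) := hμ.neg
  have hnn : Nice (fun n : ℤ => p (-(-n))) := hμ.nn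
  constructor
  · intro a b hab
    apply ENNReal.toReal_le_toReal (measure_ne_top μ _) (measure_ne_top μ _) |>.mpr
    exact measure_mono (Set.Iic_subset_Iic.mpr hab)
  · intro t ht
    obtain ⟨m, hm⟩ := exists_pow_lt_of_lt_one ht.1 (by norm_num : (2⁻¹:ℝ) < 1)
    refine ⟨-(2*m), ?_⟩
    have he := F_eq_neg_T μ (-(2*(m:ℤ)))
    rw [neg_neg] at he
    calc (μ (Set.Iic (-(2*(m:ℤ))))).toReal = T (fun n => (μ {-n}).toReal) (2*(m:ℤ)) := he
      _ ≤ (2⁻¹:ℝ)^m := (hneg.pairbound hnn m).1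
      _ < t := hm
  · intro t ht
    obtain ⟨m, hm⟩ := exists_pow_lt_of_lt_one (by linarith [ht.2] : (0:ℝ) < 1 - t)
      (by norm_num : (2⁻¹:ℝ) < 1)
    refine ⟨2*m - 1, ?_⟩
    have he := F_eq_one_sub_T μ (2*(m:ℤ) - 1)
    rw [show 2*(m:ℤ) - 1 + 1 = 2*(m:ℤ) by ring] at he
    have hb := (hμ.pairbound hneg m).1
    rw [he]
    linarith
  · intro k; exact ENNReal.toReal_nonneg
  · intro k
    have : μ (Set.Iic k) ≤ 1 := prob_le_one
    exact ENNReal.toReal_le_of_le_ofReal zero_le_one (by simpa using this)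

lemma thickening_subset_int (ε : ℝ) (hε : ε ≤ 1) (A : Set ℤ) :
    Metric.thickening ε A ⊆ A := by
  intro x hx
  rw [Metric.mem_thickening_iff] at hx
  obtain ⟨z, hz, hd⟩ := hx
  have : dist x z = |((x - z : ℤ) : ℝ)| := by rw [Int.dist_eq]; push_cast; ring_nf
  by_cases hxz : x = z
  · rwa [hxz]
  · exfalso
    have h1 : (1:ℤ) ≤ |x - z| := Int.one_le_abs (by omega)
    have h2 : (1:ℝ) ≤ |((x - z : ℤ) : ℝ)| := by
      rw [← Int.cast_abs]
      exact_mod_cast h1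
    rw [this] at hd
    linarith

lemma F_diff_le (μ ν : Measure ℤ) [IsProbabilityMeasure μ] [IsProbabilityMeasure ν]
    (ε : ℝ) (hε0 : 0 < ε) (hε1 : ε ≤ 1)
    (hLP : ∀ A : Set ℤ, μ A ≤ ν (Metric.thickening ε A) + ENNReal.ofReal ε) (k : ℤ) :
    |(μ (Set.Iic k)).toReal - (ν (Set.Iic k)).toReal| ≤ ε := by
  have key : ∀ (A : Set ℤ), (μ A).toReal ≤ (ν A).toReal + ε := by
    intro A
    have h1 := hLP A
    have h2 : ν (Metric.thickening ε A) ≤ ν A :=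
      measure_mono (thickening_subset_int ε hε1 A)
    have h3 : μ A ≤ ν A + ENNReal.ofReal ε := le_trans h1 (add_le_add_left h2 _)
    calc (μ A).toReal ≤ ((ν A) + ENNReal.ofReal ε).toReal := by
          apply ENNReal.toReal_le_toReal (measure_ne_top μ _) _ |>.mpr h3
          exact ENNReal.add_ne_top.mpr ⟨measure_ne_top ν _, ENNReal.ofReal_ne_top⟩
      _ = (ν A).toReal + ε := by
          rw [ENNReal.toReal_add (measure_ne_top ν _) ENNReal.ofReal_ne_top,
            ENNReal.toReal_ofReal hε0.le]
  have hc : ∀ (ρ : Measure ℤ) (hρ : IsProbabilityMeasure ρ),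
      (ρ (Set.Ioi k)).toReal = 1 - (ρ (Set.Iic k)).toReal := by
    intro ρ hρ
    have : Set.Ioi k = (Set.Iic k)ᶜ := (Set.compl_Iic (a := k)).symm
    rw [this, measure_compl (by trivial) (measure_ne_top ρ _)]
    simp only [measure_univ]
    rw [ENNReal.toReal_sub_of_le prob_le_one ENNReal.one_ne_top, ENNReal.toReal_one]
  have d1 := key (Set.Iic k)
  have d2 := key (Set.Ioi k)
  rw [hc μ inferInstance, hc ν inferInstance] at d2
  rw [abs_le]
  constructor <;> linarith

lemma sum_region_right (c : ℤ → ENNReal) (K : ℤ) :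
    ∑' k : ℤ, (if K ≤ k then c k else 0) = ∑' j : ℕ, c (K + (j:ℤ)) := by
  have hinj : Function.Injective (fun j : ℕ => K + (j:ℤ)) := fun a b hab => by simpa using hab
  have hsupp : Function.support (fun k : ℤ => if K ≤ k then c k else 0)
      ⊆ Set.range (fun j : ℕ => K + (j:ℤ)) := by
    intro k hk
    have hKk : K ≤ k := by
      by_contra hc
      exact hk (by simp only []; rw [if_neg hc])
    exact ⟨(k - K).toNat, by simp only []; omega⟩
  rw [← Function.Injective.tsum_eq hinj hsupp]
  exact tsum_congr (fun j => by rw [if_pos (by omega)])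

lemma sum_region_left (c : ℤ → ENNReal) (K : ℤ) :
    ∑' k : ℤ, (if k ≤ K then c k else 0) = ∑' j : ℕ, c (K - (j:ℤ)) := by
  have hinj : Function.Injective (fun j : ℕ => K - (j:ℤ)) := fun a b hab => by
    simp only [sub_right_inj] at hab; exact_mod_cast hab
  have hsupp : Function.support (fun k : ℤ => if k ≤ K then c k else 0)
      ⊆ Set.range (fun j : ℕ => K - (j:ℤ)) := by
    intro k hk
    have hKk : k ≤ K := by
      by_contra hc
      exact hk (by simp only []; rw [if_neg hc])
    exact ⟨(K - k).toNat, by simp only []; omega⟩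
  rw [← Function.Injective.tsum_eq hinj hsupp]
  exact tsum_congr (fun j => by rw [if_pos (by omega)])

lemma sum_region_mid (x : ENNReal) (a b : ℤ) :
    ∑' k : ℤ, (if a ≤ k ∧ k ≤ b then x else 0) = ((b + 1 - a).toNat : ℕ) • x := by
  rw [tsum_eq_sum (s := Finset.Icc a b)
    (fun k hk => by rw [if_neg (by simpa [Finset.mem_Icc] using hk)])]
  rw [Finset.sum_congr rfl (fun k hk => by rw [if_pos (by simpa [Finset.mem_Icc] using hk)])]
  rw [Finset.sum_const, Int.card_Icc]

lemma arith1 (ε : ℝ) (N : ℕ) (hε0 : 0 < ε) (hεh : ε < 1/2) (hN1 : 1 ≤ N)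
    (hNle : (2⁻¹:ℝ)^N ≤ ε) (hNgt : ε < (2⁻¹:ℝ)^(N-1)) :
    4*(N:ℝ)*ε + 8*ε ≤ 12 * ε * Real.log (4 * Real.exp 1 / ε) := by
  have hlogd : Real.log (4 * Real.exp 1 / ε) = Real.log 4 + 1 - Real.log ε := by
    rw [Real.log_div (by positivity) (ne_of_gt hε0), Real.log_mul (by norm_num)
      (Real.exp_ne_zero 1), Real.log_exp]
  have hlog4 : Real.log 4 = 2 * Real.log 2 := by
    rw [show (4:ℝ) = 2^2 by norm_num, Real.log_pow]
    push_cast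
    ring
  have hL : ((N:ℝ) - 1) * Real.log 2 ≤ - Real.log ε := by
    have h1 : Real.log ε < Real.log ((2⁻¹:ℝ)^(N-1)) := Real.log_lt_log hε0 hNgt
    rw [Real.log_pow, Real.log_inv] at h1
    have hc : ((N - 1 : ℕ):ℝ) = (N:ℝ) - 1 := by
      rw [Nat.cast_sub hN1]; norm_num
    rw [hc] at h1
    linarith
  have hX := Real.log_two_gt_d9
  have hNc : (1:ℝ) ≤ (N:ℝ) := by exact_mod_cast hN1
  have hLpos : 0 < - Real.log ε := by
    have : Real.log ε < 0 := Real.log_neg hε0 (by linarith)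
    linarith
  have key : 4*(N:ℝ) + 8 ≤ 12 * (Real.log 4 + 1 - Real.log ε) := by
    rw [hlog4]
    nlinarith [hL, hX, hNc, hLpos]
  calc 4*(N:ℝ)*ε + 8*ε = (4*(N:ℝ) + 8) * ε := by ring
    _ ≤ (12 * (Real.log 4 + 1 - Real.log ε)) * ε :=
        mul_le_mul_of_nonneg_right key hε0.le
    _ = 12 * ε * Real.log (4 * Real.exp 1 / ε) := by rw [hlogd]; ring

lemma arith2 (ε : ℝ) (hεh : 1/2 ≤ ε) (hε2 : ε < 2) :
    (8:ℝ) ≤ 12 * ε * Real.log (4 * Real.exp 1 / ε) := by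
  have hε0 : 0 < ε := by linarith
  have hlogd : Real.log (4 * Real.exp 1 / ε) = Real.log 4 + 1 - Real.log ε := by
    rw [Real.log_div (by positivity) (ne_of_gt hε0), Real.log_mul (by norm_num)
      (Real.exp_ne_zero 1), Real.log_exp]
  have hlog4 : Real.log 4 = 2 * Real.log 2 := by
    rw [show (4:ℝ) = 2^2 by norm_num, Real.log_pow]
    push_cast
    ring
  have hle : Real.log ε ≤ Real.log 2 := Real.log_le_log hε0 hε2.le
  have hX := Real.log_two_gt_d9
  rw [hlogd, hlog4]
  nlinarith [mul_le_mul_of_nonneg_left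
    (show Real.log 2 + 1 ≤ 2 * Real.log 2 + 1 - Real.log ε by linarith)
    (show (0:ℝ) ≤ ε by linarith)]

lemma ofReal_G_le (x y a b : ℝ) (ha : 0 ≤ a) (hb : 0 ≤ b)
    (hxy : |x - y| ≤ a + b) :
    ENNReal.ofReal |x - y| ≤ ENNReal.ofReal a + ENNReal.ofReal b := by
  rw [← ENNReal.ofReal_add ha hb]
  exact ENNReal.ofReal_le_ofReal hxy

lemma main_eps (μ ν : Measure ℤ) [IsProbabilityMeasure μ] [IsProbabilityMeasure ν]
    (hμ : Nice (fun k => (μ {k}).toReal)) (hν : Nice (fun k => (ν {k}).toReal))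
    (ε : ℝ) (hε0 : 0 < ε) (hε2 : ε < 2)
    (hLP : ∀ A : Set ℤ, μ A ≤ ν (Metric.thickening ε A) + ENNReal.ofReal ε) :
    (⨅ m ∈ {m : Measure (ℤ × ℤ) | m.map Prod.fst = μ ∧ m.map Prod.snd = ν},
      ∫⁻ x, ENNReal.ofReal |(x.1 : ℝ) - (x.2 : ℝ)| ∂m)
      ≤ ENNReal.ofReal (12 * ε * Real.log (4 * Real.exp 1 / ε)) := by
  have hμn : Nice (fun n => (fun k => (μ {k}).toReal) (-n)) := hμ.neg
  have hνn : Nice (fun n => (fun k => (ν {k}).toReal) (-n)) := hν.neg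
  have hμnn := hμ.nn
  have hνnn := hν.nn
  have hcoup := coupling_bound μ ν (nice_cdf μ hμ) (nice_cdf ν hν)
  -- G bounds by tails
  have hGr : ∀ k : ℤ, |(μ (Set.Iic k)).toReal - (ν (Set.Iic k)).toReal|
      ≤ T (fun k => (μ {k}).toReal) (k+1) + T (fun k => (ν {k}).toReal) (k+1) := by
    intro k
    rw [F_eq_one_sub_T μ k, F_eq_one_sub_T ν k]
    have h1 := hμ.T_nonneg (k+1)
    have h2 := hν.T_nonneg (k+1)
    rw [abs_le]
    constructor <;> linarith
  have hGl : ∀ k : ℤ, |(μ (Set.Iic k)).toReal - (ν (Set.Iic k)).toReal|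
      ≤ T (fun n => (μ {-n}).toReal) (-k) + T (fun n => (ν {-n}).toReal) (-k) := by
    intro k
    rw [F_eq_neg_T μ k, F_eq_neg_T ν k]
    have h1 := hμn.T_nonneg (-k)
    have h2 := hνn.T_nonneg (-k)
    simp only [] at h1 h2
    rw [abs_le]
    constructor <;> linarith
  set cR : ℤ → ENNReal := fun k =>
    ENNReal.ofReal (T (fun k => (μ {k}).toReal) (k+1))
      + ENNReal.ofReal (T (fun k => (ν {k}).toReal) (k+1)) with hcR
  set cL : ℤ → ENNReal := fun k =>
    ENNReal.ofReal (T (fun n => (μ {-n}).toReal) (-k))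
      + ENNReal.ofReal (T (fun n => (ν {-n}).toReal) (-k)) with hcL
  have hRsum : ∀ N : ℕ, ∑' j : ℕ, cR (2*(N:ℤ) + (j:ℤ))
      ≤ ENNReal.ofReal ((2⁻¹:ℝ)^N * 2) + ENNReal.ofReal ((2⁻¹:ℝ)^N * 2) := by
    intro N
    rw [ENNReal.tsum_add]
    apply add_le_add
    · calc ∑' j : ℕ, ENNReal.ofReal (T (fun k => (μ {k}).toReal) (2*(N:ℤ) + (j:ℤ) + 1))
          = ∑' j : ℕ, ENNReal.ofReal (T (fun k => (μ {k}).toReal) (2*(N:ℤ)+1 + (j:ℤ))) := by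
            apply tsum_congr; intro j; congr 1; ring_nf
        _ ≤ ENNReal.ofReal ((2⁻¹:ℝ)^N * 2) := hμ.tailsum hμn N
    · calc ∑' j : ℕ, ENNReal.ofReal (T (fun k => (ν {k}).toReal) (2*(N:ℤ) + (j:ℤ) + 1))
          = ∑' j : ℕ, ENNReal.ofReal (T (fun k => (ν {k}).toReal) (2*(N:ℤ)+1 + (j:ℤ))) := by
            apply tsum_congr; intro j; congr 1; ring_nf
        _ ≤ ENNReal.ofReal ((2⁻¹:ℝ)^N * 2) := hν.tailsum hνn N
  have hLsum : ∀ N : ℕ, ∑' j : ℕ, cL (-(2*(N:ℤ)) - 1 - (j:ℤ))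
      ≤ ENNReal.ofReal ((2⁻¹:ℝ)^N * 2) + ENNReal.ofReal ((2⁻¹:ℝ)^N * 2) := by
    intro N
    rw [ENNReal.tsum_add]
    apply add_le_add
    · calc ∑' j : ℕ, ENNReal.ofReal (T (fun n => (μ {-n}).toReal) (-(-(2*(N:ℤ)) - 1 - (j:ℤ))))
          = ∑' j : ℕ, ENNReal.ofReal (T (fun n => (μ {-n}).toReal) (2*(N:ℤ)+1 + (j:ℤ))) := by
            apply tsum_congr; intro j
            rw [show (-(-(2*(N:ℤ)) - 1 - (j:ℤ))) = 2*(N:ℤ)+1+(j:ℤ) by ring]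
        _ ≤ ENNReal.ofReal ((2⁻¹:ℝ)^N * 2) := hμn.tailsum hμnn N
    · calc ∑' j : ℕ, ENNReal.ofReal (T (fun n => (ν {-n}).toReal) (-(-(2*(N:ℤ)) - 1 - (j:ℤ))))
          = ∑' j : ℕ, ENNReal.ofReal (T (fun n => (ν {-n}).toReal) (2*(N:ℤ)+1 + (j:ℤ))) := by
            apply tsum_congr; intro j
            rw [show (-(-(2*(N:ℤ)) - 1 - (j:ℤ))) = 2*(N:ℤ)+1+(j:ℤ) by ring]
        _ ≤ ENNReal.ofReal ((2⁻¹:ℝ)^N * 2) := hνn.tailsum hνnn N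
  have hcRbd : ∀ k : ℤ, ENNReal.ofReal |(μ (Set.Iic k)).toReal - (ν (Set.Iic k)).toReal| ≤ cR k :=
    fun k => ofReal_G_le _ _ _ _ (hμ.T_nonneg _) (hν.T_nonneg _) (hGr k)
  have hcLbd : ∀ k : ℤ, ENNReal.ofReal |(μ (Set.Iic k)).toReal - (ν (Set.Iic k)).toReal| ≤ cL k := by
    intro k
    have h1 := hμn.T_nonneg (-k)
    have h2 := hνn.T_nonneg (-k)
    simp only [] at h1 h2
    exact ofReal_G_le _ _ _ _ h1 h2 (hGl k)
  rcases lt_or_ge ε (1/2) with hcase | hcase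
  · -- small ε : three-region split
    have hex : ∃ n : ℕ, (2⁻¹:ℝ)^n ≤ ε := by
      obtain ⟨n, hn⟩ := exists_pow_lt_of_lt_one hε0 (by norm_num : (2⁻¹:ℝ) < 1)
      exact ⟨n, hn.le⟩
    set N : ℕ := Nat.find hex with hN
    have hNle : (2⁻¹:ℝ)^N ≤ ε := Nat.find_spec hex
    have hN0 : N ≠ 0 := by
      intro h0
      rw [h0, pow_zero] at hNle
      linarith
    have hN1 : 1 ≤ N := by omega
    have hNgt : ε < (2⁻¹:ℝ)^(N-1) := by
      have := Nat.find_min hex (m := N - 1) (by omega)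
      push_neg at this
      exact this
    have hFd := F_diff_le μ ν ε hε0 (by linarith) hLP
    have hpt : ∀ k : ℤ, ENNReal.ofReal |(μ (Set.Iic k)).toReal - (ν (Set.Iic k)).toReal|
        ≤ (if -(2*(N:ℤ)) ≤ k ∧ k ≤ 2*(N:ℤ)-1 then ENNReal.ofReal ε else 0)
          + ((if 2*(N:ℤ) ≤ k then cR k else 0) + (if k ≤ -(2*(N:ℤ))-1 then cL k else 0)) := by
      intro k
      by_cases h1 : 2*(N:ℤ) ≤ k
      · rw [if_neg (by omega), if_pos h1, if_neg (by omega)]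
        simpa using hcRbd k
      · by_cases h2 : k ≤ -(2*(N:ℤ))-1
        · rw [if_neg (by omega), if_neg h1, if_pos h2]
          simpa using hcLbd k
        · rw [if_pos (by omega), if_neg h1, if_neg h2]
          simpa using ENNReal.ofReal_le_ofReal (hFd k)
    calc (⨅ m ∈ {m : Measure (ℤ × ℤ) | m.map Prod.fst = μ ∧ m.map Prod.snd = ν},
        ∫⁻ x, ENNReal.ofReal |(x.1 : ℝ) - (x.2 : ℝ)| ∂m)
        ≤ ∑' k : ℤ, ENNReal.ofReal
            |(μ (Set.Iic k)).toReal - (ν (Set.Iic k)).toReal| := hcoup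
      _ ≤ ∑' k : ℤ, ((if -(2*(N:ℤ)) ≤ k ∧ k ≤ 2*(N:ℤ)-1 then ENNReal.ofReal ε else 0)
          + ((if 2*(N:ℤ) ≤ k then cR k else 0) + (if k ≤ -(2*(N:ℤ))-1 then cL k else 0))) :=
          ENNReal.tsum_le_tsum hpt
      _ = (∑' k : ℤ, (if -(2*(N:ℤ)) ≤ k ∧ k ≤ 2*(N:ℤ)-1 then ENNReal.ofReal ε else 0))
          + ((∑' k : ℤ, (if 2*(N:ℤ) ≤ k then cR k else 0))
            + (∑' k : ℤ, (if k ≤ -(2*(N:ℤ))-1 then cL k else 0))) := by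
          rw [ENNReal.tsum_add, ENNReal.tsum_add]
      _ ≤ ENNReal.ofReal (4*(N:ℝ)*ε)
          + ((ENNReal.ofReal ((2⁻¹:ℝ)^N * 2) + ENNReal.ofReal ((2⁻¹:ℝ)^N * 2))
            + (ENNReal.ofReal ((2⁻¹:ℝ)^N * 2) + ENNReal.ofReal ((2⁻¹:ℝ)^N * 2))) := by
          apply add_le_add
          · rw [sum_region_mid]
            rw [show ((2*(N:ℤ)-1 + 1 - (-(2*(N:ℤ)))).toNat : ℕ) = 4*N by omega]
            rw [nsmul_eq_mul, ← ENNReal.ofReal_natCast, ← ENNReal.ofReal_mul (by positivity)]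
            apply ENNReal.ofReal_le_ofReal
            push_cast
            ring_nf
            exact le_refl _
          · apply add_le_add
            · rw [sum_region_right]
              exact hRsum N
            · rw [sum_region_left]
              exact hLsum N
      _ ≤ ENNReal.ofReal (4*(N:ℝ)*ε) + ENNReal.ofReal (8*ε) := by
          apply add_le_add_right
          have he : ENNReal.ofReal ((2⁻¹:ℝ)^N * 2) + ENNReal.ofReal ((2⁻¹:ℝ)^N * 2)
              = ENNReal.ofReal ((2⁻¹:ℝ)^N * 4) := by
            rw [← ENNReal.ofReal_add (p := (2⁻¹:ℝ)^N * 2) (q := (2⁻¹:ℝ)^N * 2)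
              (by positivity) (by positivity)]
            congr 1
            ring
          rw [he, ← ENNReal.ofReal_add (p := (2⁻¹:ℝ)^N * 4) (q := (2⁻¹:ℝ)^N * 4)
            (by positivity) (by positivity)]
          apply ENNReal.ofReal_le_ofReal
          nlinarith [hNle]
      _ = ENNReal.ofReal (4*(N:ℝ)*ε + 8*ε) := by
          rw [← ENNReal.ofReal_add (p := 4*(N:ℝ)*ε) (q := 8*ε) (by positivity) (by positivity)]
      _ ≤ ENNReal.ofReal (12 * ε * Real.log (4 * Real.exp 1 / ε)) :=
          ENNReal.ofReal_le_ofReal (arith1 ε N hε0 hcase hN1 hNle hNgt)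
  · -- large ε : tails only
    have hpt : ∀ k : ℤ, ENNReal.ofReal |(μ (Set.Iic k)).toReal - (ν (Set.Iic k)).toReal|
        ≤ (if 2*((0:ℕ):ℤ) ≤ k then cR k else 0) + (if k ≤ -(2*((0:ℕ):ℤ))-1 then cL k else 0) := by
      intro k
      by_cases h1 : 2*((0:ℕ):ℤ) ≤ k
      · rw [if_pos h1, if_neg (by omega)]
        simpa using hcRbd k
      · rw [if_neg h1, if_pos (by omega)]
        simpa using hcLbd k
    calc (⨅ m ∈ {m : Measure (ℤ × ℤ) | m.map Prod.fst = μ ∧ m.map Prod.snd = ν},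
        ∫⁻ x, ENNReal.ofReal |(x.1 : ℝ) - (x.2 : ℝ)| ∂m)
        ≤ ∑' k : ℤ, ENNReal.ofReal
            |(μ (Set.Iic k)).toReal - (ν (Set.Iic k)).toReal| := hcoup
      _ ≤ ∑' k : ℤ, ((if 2*((0:ℕ):ℤ) ≤ k then cR k else 0)
            + (if k ≤ -(2*((0:ℕ):ℤ))-1 then cL k else 0)) :=
          ENNReal.tsum_le_tsum hpt
      _ = (∑' k : ℤ, (if 2*((0:ℕ):ℤ) ≤ k then cR k else 0))
            + (∑' k : ℤ, (if k ≤ -(2*((0:ℕ):ℤ))-1 then cL k else 0)) := by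
          rw [ENNReal.tsum_add]
      _ ≤ ((ENNReal.ofReal ((2⁻¹:ℝ)^(0:ℕ) * 2) + ENNReal.ofReal ((2⁻¹:ℝ)^(0:ℕ) * 2))
            + (ENNReal.ofReal ((2⁻¹:ℝ)^(0:ℕ) * 2) + ENNReal.ofReal ((2⁻¹:ℝ)^(0:ℕ) * 2))) := by
          apply add_le_add
          · rw [sum_region_right]
            exact hRsum 0
          · rw [sum_region_left]
            exact hLsum 0
      _ = ENNReal.ofReal 8 := by
          rw [pow_zero, one_mul,
            ← ENNReal.ofReal_add (p := (2:ℝ)) (q := (2:ℝ)) (by norm_num) (by norm_num),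
            ← ENNReal.ofReal_add (p := (2:ℝ)+2) (q := (2:ℝ)+2) (by norm_num) (by norm_num)]
          norm_num
      _ ≤ ENNReal.ofReal (12 * ε * Real.log (4 * Real.exp 1 / ε)) :=
          ENNReal.ofReal_le_ofReal (arith2 ε hcase hε2)

lemma measure_eq_of_sandwich (μ ν : Measure ℤ) [IsProbabilityMeasure μ] [IsProbabilityMeasure ν]
    (h : ∀ A : Set ℤ, μ A ≤ ν A) : μ = ν := by
  apply Measure.ext
  intro A _
  have h1 := h A
  have h2 := h Aᶜ
  have hμ1 : μ A + μ Aᶜ = 1 := by rw [measure_add_measure_compl (by trivial)]; simp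
  have hν1 : ν A + ν Aᶜ = 1 := by rw [measure_add_measure_compl (by trivial)]; simp
  have hfin : ∀ (ρ : Measure ℤ) [IsProbabilityMeasure ρ] (B : Set ℤ), ρ B ≠ ⊤ :=
    fun ρ _ B => measure_ne_top ρ B
  -- toReal equalities
  have ht1 : (μ A).toReal ≤ (ν A).toReal :=
    ENNReal.toReal_le_toReal (measure_ne_top μ _) (measure_ne_top ν _) |>.mpr h1
  have ht2 : (μ Aᶜ).toReal ≤ (ν Aᶜ).toReal :=
    ENNReal.toReal_le_toReal (measure_ne_top μ _) (measure_ne_top ν _) |>.mpr h2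
  have hs1 : (μ A).toReal + (μ Aᶜ).toReal = 1 := by
    rw [← ENNReal.toReal_add (measure_ne_top μ _) (measure_ne_top μ _), hμ1, ENNReal.toReal_one]
  have hs2 : (ν A).toReal + (ν Aᶜ).toReal = 1 := by
    rw [← ENNReal.toReal_add (measure_ne_top ν _) (measure_ne_top ν _), hν1, ENNReal.toReal_one]
  have : (μ A).toReal = (ν A).toReal := by linarith
  exact (ENNReal.toReal_eq_toReal_iff' (measure_ne_top μ _) (measure_ne_top ν _)).mp this

lemma diag_cost_zero (μ : Measure ℤ) [IsProbabilityMeasure μ] :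
    (⨅ m ∈ {m : Measure (ℤ × ℤ) | m.map Prod.fst = μ ∧ m.map Prod.snd = μ},
      ∫⁻ x, ENNReal.ofReal |(x.1 : ℝ) - (x.2 : ℝ)| ∂m) = 0 := by
  have hdiag : Measurable (fun k : ℤ => (k, k)) := by measurability
  have habs : Measurable (fun x : ℤ × ℤ => ENNReal.ofReal |(x.1 : ℝ) - (x.2 : ℝ)|) := by
    measurability
  set pd : Measure (ℤ × ℤ) := μ.map (fun k => (k, k)) with hpd
  have hm1 : pd.map Prod.fst = μ := by
    rw [hpd, Measure.map_map measurable_fst hdiag]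
    have : (Prod.fst ∘ fun k : ℤ => (k, k)) = id := rfl
    rw [this, Measure.map_id]
  have hm2 : pd.map Prod.snd = μ := by
    rw [hpd, Measure.map_map measurable_snd hdiag]
    have : (Prod.snd ∘ fun k : ℤ => (k, k)) = id := rfl
    rw [this, Measure.map_id]
  have hcost : ∫⁻ x, ENNReal.ofReal |(x.1 : ℝ) - (x.2 : ℝ)| ∂pd = 0 := by
    rw [hpd, lintegral_map habs hdiag]
    simp
  apply le_antisymm _ zero_le
  calc (⨅ m ∈ {m : Measure (ℤ × ℤ) | m.map Prod.fst = μ ∧ m.map Prod.snd = μ},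
      ∫⁻ x, ENNReal.ofReal |(x.1 : ℝ) - (x.2 : ℝ)| ∂m)
      ≤ ∫⁻ x, ENNReal.ofReal |(x.1 : ℝ) - (x.2 : ℝ)| ∂pd := iInf₂_le pd ⟨hm1, hm2⟩
    _ = 0 := hcost

end
end W1aux



open MeasureTheory ProbabilityTheory
open scoped ProbabilityTheory

/-- A function `p : ℤ → ℝ` is a log-concave probability mass function if
`p(k)² ≥ p(k-1)·p(k+1)` for all `k ∈ ℤ` and its support is an integer interval. -/
def IsLogConcavePMF (p : ℤ → ℝ) : Prop :=
  (∀ k : ℤ, p (k - 1) * p (k + 1) ≤ p k ^ 2) ∧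
  (∀ a b c : ℤ, a ≤ b → b ≤ c → 0 < p a → 0 < p c → 0 < p b)

/-- The 1-Wasserstein distance `W₁(μ,ν) = inf E[|X − Y|]`, the infimum running over
all couplings of `μ` and `ν`. -/
noncomputable def W1 (μ ν : Measure ℤ) : ℝ :=
  (⨅ π ∈ {π : Measure (ℤ × ℤ) | π.map Prod.fst = μ ∧ π.map Prod.snd = ν},
    ∫⁻ x, ENNReal.ofReal |(x.1 : ℝ) - (x.2 : ℝ)| ∂π).toReal

/-- The Lévy–Prokhorov distance
`d_LP(μ,ν) = inf{ε > 0 : μ(A) ≤ ν(Aᵉ) + ε for all A}`, where `Aᵉ` is the open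
`ε`-thickening of `A`. -/
noncomputable def dLP (μ ν : Measure ℤ) : ℝ :=
  sInf {ε : ℝ | 0 < ε ∧
    ∀ A : Set ℤ, μ A ≤ ν (Metric.thickening ε A) + ENNReal.ofReal ε}

/-- For centered log-concave probability measures `μ, ν` on `ℤ` with first absolute
moment at most 1, `W₁(μ,ν) ≤ 12·d_LP(μ,ν)·log(4e/d_LP(μ,ν))`. -/
theorem W1_le_dLP_universal
    (μ ν : Measure ℤ) [IsProbabilityMeasure μ] [IsProbabilityMeasure ν]
    (hμlc : IsLogConcavePMF (fun k => (μ {k}).toReal))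
    (hνlc : IsLogConcavePMF (fun k => (ν {k}).toReal))
    (hμc : (∑' k : ℤ, (k : ℝ) * (μ {k}).toReal) = 0)
    (hνc : (∑' k : ℤ, (k : ℝ) * (ν {k}).toReal) = 0)
    (hμm : (∑' k : ℤ, |(k : ℝ)| * (μ {k}).toReal) ≤ 1)
    (hνm : (∑' k : ℤ, |(k : ℝ)| * (ν {k}).toReal) ≤ 1) :
    W1 μ ν ≤ 12 * dLP μ ν * Real.log (4 * Real.exp 1 / dLP μ ν) := by
  classical
  have hμN : W1aux.Nice (fun k => (μ {k}).toReal) :=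
    ⟨fun k => ENNReal.toReal_nonneg, hμlc.1, hμlc.2, W1aux.hasSum_pmf μ, hμc, hμm⟩
  have hνN : W1aux.Nice (fun k => (ν {k}).toReal) :=
    ⟨fun k => ENNReal.toReal_nonneg, hνlc.1, hνlc.2, W1aux.hasSum_pmf ν, hνc, hνm⟩
  set U : Set ℝ := {ε : ℝ | 0 < ε ∧
    ∀ A : Set ℤ, μ A ≤ ν (Metric.thickening ε A) + ENNReal.ofReal ε} with hU
  have hUb : BddBelow U := ⟨0, fun u hu => hu.1.le⟩
  have hmem : ∀ c : ℝ, 1 ≤ c → c ∈ U := by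
    intro c hc
    refine ⟨by linarith, fun A => ?_⟩
    calc μ A ≤ 1 := prob_le_one
      _ ≤ ENNReal.ofReal c := by
          rw [← ENNReal.ofReal_one]
          exact ENNReal.ofReal_le_ofReal hc
      _ ≤ ν (Metric.thickening c A) + ENNReal.ofReal c := le_add_left (le_refl _)
  have hUne : U.Nonempty := ⟨1, hmem 1 le_rfl⟩
  have hddef : dLP μ ν = sInf U := rfl
  have hd0 : 0 ≤ dLP μ ν := by
    rw [hddef]
    exact le_csInf hUne (fun u hu => hu.1.le)
  have hd12 : dLP μ ν ≤ 1 := by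
    rw [hddef]
    exact csInf_le hUb (hmem 1 le_rfl)
  have hup : ∀ ε : ℝ, dLP μ ν < ε → ε ∈ U := by
    intro ε hε
    rw [hddef] at hε
    obtain ⟨u, huU, hu⟩ := exists_lt_of_csInf_lt hUne hε
    refine ⟨lt_trans huU.1 hu, fun A => ?_⟩
    calc μ A ≤ ν (Metric.thickening u A) + ENNReal.ofReal u := huU.2 A
      _ ≤ ν (Metric.thickening ε A) + ENNReal.ofReal ε :=
          add_le_add (measure_mono (Metric.thickening_mono hu.le A))
            (ENNReal.ofReal_le_ofReal hu.le)
  rcases eq_or_lt_of_le hd0 with hdz | hdpos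
  · -- dLP = 0 : the measures agree
    have hμν : μ = ν := by
      apply W1aux.measure_eq_of_sandwich
      intro A
      apply ENNReal.le_of_forall_pos_le_add
      intro η hη _
      have hmin : (0:ℝ) < min (η:ℝ) 1 := lt_min (by exact_mod_cast hη) one_pos
      have hεU : (min (η:ℝ) 1) ∈ U := hup _ (by rw [← hdz]; exact hmin)
      calc μ A ≤ ν (Metric.thickening (min (η:ℝ) 1) A) + ENNReal.ofReal (min (η:ℝ) 1) :=
            hεU.2 A
        _ ≤ ν A + (η : ENNReal) := by
            apply add_le_add
            · exact measure_mono (W1aux.thickening_subset_int _ (min_le_right _ _) A)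
            · calc ENNReal.ofReal (min (η:ℝ) 1) ≤ ENNReal.ofReal (η:ℝ) :=
                  ENNReal.ofReal_le_ofReal (min_le_left _ _)
                _ = (η : ENNReal) := ENNReal.ofReal_coe_nnreal
    rw [← hdz]
    norm_num
    rw [hμν]
    have hz := W1aux.diag_cost_zero ν
    unfold W1
    rw [hz]
    simp
  · -- dLP > 0
    set e : ℕ → ℝ := fun n => dLP μ ν + (1/2) * (1/((n:ℝ)+1)) with he
    have hepos : ∀ n : ℕ, dLP μ ν < e n := by
      intro n
      rw [he]
      have : (0:ℝ) < 1/((n:ℝ)+1) := by positivity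
      simp only []
      linarith
    have hen : ∀ n : ℕ, e n ∈ U := fun n => hup _ (hepos n)
    have hen2 : ∀ n : ℕ, e n < 2 := by
      intro n
      have h1 : (1:ℝ)/((n:ℝ)+1) ≤ 1 := by
        rw [div_le_one (by positivity)]
        linarith [Nat.cast_nonneg (α := ℝ) n]
      rw [he]
      simp only []
      linarith [hd12]
    have hbound : ∀ n : ℕ, W1 μ ν
        ≤ 12 * e n * Real.log (4 * Real.exp 1 / e n) := by
      intro n
      have hen0 : 0 < e n := lt_of_le_of_lt hd0 (hepos n)
      have h1 := W1aux.main_eps μ ν hμN hνN (e n) hen0 (hen2 n) (hen n).2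
      unfold W1
      apply ENNReal.toReal_le_of_le_ofReal _ h1
      have hexp := Real.exp_one_gt_d9
      have hloge : 0 ≤ Real.log (4 * Real.exp 1 / e n) := by
        apply Real.log_nonneg
        rw [le_div_iff₀ hen0, one_mul]
        nlinarith [hen2 n]
      positivity
    have hconn : ContinuousAt (fun x : ℝ => 12 * x * Real.log (4 * Real.exp 1 / x))
        (dLP μ ν) := by
      have h1 : ContinuousAt (fun x : ℝ => 4 * Real.exp 1 / x) (dLP μ ν) :=
        continuousAt_const.div continuousAt_id (ne_of_gt hdpos)
      have h2 : ContinuousAt Real.log (4 * Real.exp 1 / dLP μ ν) :=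
        Real.continuousAt_log (by positivity)
      exact (continuousAt_const.mul continuousAt_id).mul (h2.comp h1)
    have hetend : Filter.Tendsto e Filter.atTop (nhds (dLP μ ν)) := by
      have h0 := tendsto_one_div_add_atTop_nhds_zero_nat (𝕜 := ℝ)
      have h2 : Filter.Tendsto (fun n : ℕ => (1/2:ℝ) * (1/((n:ℝ)+1)))
          Filter.atTop (nhds ((1/2) * 0)) := h0.const_mul _
      rw [mul_zero] at h2
      have h3 := Filter.Tendsto.add (tendsto_const_nhds (x := dLP μ ν)
        (f := Filter.atTop (α := ℕ))) h2
      rw [add_zero] at h3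
      exact h3
    exact ge_of_tendsto' (hconn.tendsto.comp hetend) hbound
end

section
/- Let λ ∈ (0, ∞) and let q(k) = C·λ^{|k|}/|k|!, k ∈ ℤ, with C = (2e^λ − 1)^{−1}, be the probability mass function of the symmetric Poisson distribution, and assume its variance equals 1, i.e., Σ_{k∈ℤ} k²·q(k) = 1. Then λ ∈ [1/4, 1], and q belongs to the class Q(1 + log 4, 2e − 1); that is, for every k ∈ ℤ, log(1/q(k)) ≤ (1 + log 4)·k² + log(2e − 1). -/
open MeasureTheory ProbabilityTheory
open scoped ProbabilityTheory

/-- The class `Q(a,c)` of functions `q : ℤ → [0,1]` such that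
`log(1/q(k)) ≤ a·k² + log(c)` for all `k` in the support of `q`. -/
def MemQClass (a c : ℝ) (q : ℤ → ℝ) : Prop :=
  (∀ k : ℤ, 0 ≤ q k ∧ q k ≤ 1) ∧
  (∀ k : ℤ, 0 < q k → Real.log (1 / q k) ≤ a * (k : ℝ) ^ 2 + Real.log c)

private lemma hasSum_exp_real (x : ℝ) : HasSum (fun n : ℕ => x ^ n / n.factorial) (Real.exp x) := by
  rw [Real.exp_eq_exp_ℝ]
  exact NormedSpace.expSeries_div_hasSum_exp x

private lemma hasSum_mul_real (x : ℝ) :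
    HasSum (fun n : ℕ => (n : ℝ) * x ^ n / n.factorial) (x * Real.exp x) := by
  have h := (hasSum_exp_real x).mul_left x
  have h2 : HasSum (fun n : ℕ => ((n + 1 : ℕ) : ℝ) * x ^ (n + 1) / (n+1).factorial) (x * Real.exp x) := by
    convert h using 1
    · rfl
    funext n
    have hn : ((n.factorial : ℝ)) ≠ 0 := by positivity
    rw [Nat.factorial_succ]
    push_cast
    field_simp
    ring
  have h3 := (hasSum_nat_add_iff (f := fun n : ℕ => (n : ℝ) * x ^ n / n.factorial) 1).mp (by simpa using h2)
  simpa using h3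

private lemma hasSum_desc_real (x : ℝ) :
    HasSum (fun n : ℕ => (n : ℝ) * ((n : ℝ) - 1) * x ^ n / n.factorial) (x ^ 2 * Real.exp x) := by
  have h := (hasSum_exp_real x).mul_left (x ^ 2)
  have h2 : HasSum (fun n : ℕ => ((n + 2 : ℕ) : ℝ) * (((n + 2 : ℕ) : ℝ) - 1) * x ^ (n + 2) / (n+2).factorial)
      (x ^ 2 * Real.exp x) := by
    convert h using 1
    · rfl
    funext n
    have hn : ((n.factorial : ℝ)) ≠ 0 := by positivity
    have : (n+2).factorial = (n + 2) * ((n + 1) * n.factorial) := by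
      rw [Nat.factorial_succ, Nat.factorial_succ]
    rw [this]
    push_cast
    field_simp
    ring
  have h3 := (hasSum_nat_add_iff (f := fun n : ℕ => (n : ℝ) * ((n : ℝ) - 1) * x ^ n / n.factorial) 2).mp
    (by simpa [Finset.sum_range_succ] using h2)
  simpa [Finset.sum_range_succ] using h3

private lemma hasSum_sq_real (x : ℝ) :
    HasSum (fun n : ℕ => (n : ℝ) ^ 2 * x ^ n / n.factorial) (x * (x + 1) * Real.exp x) := by
  have h := (hasSum_desc_real x).add (hasSum_mul_real x)
  convert h using 1
  · funext n
    rw [← add_div]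
    congr 1
    ring
  · ring

/-- If `q(k) = C·λ^{|k|}/|k|!` with `C = (2e^λ − 1)⁻¹` is the symmetric Poisson
p.m.f. with variance 1, then `λ ∈ [1/4, 1]` and `q ∈ Q(1 + log 4, 2e − 1)`, i.e.
`log(1/q(k)) ≤ (1 + log 4)·k² + log(2e − 1)` for every `k ∈ ℤ`. -/
theorem symmetric_poisson_memQClass
    (lam : ℝ) (hlam : 0 < lam)
    (q : ℤ → ℝ)
    (hq : ∀ k : ℤ, q k = (2 * Real.exp lam - 1)⁻¹ * lam ^ k.natAbs /
      (Nat.factorial k.natAbs : ℝ))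
    (hvar : (∑' k : ℤ, (k : ℝ) ^ 2 * q k) = 1) :
    lam ∈ Set.Icc (1 / 4 : ℝ) 1 ∧
    MemQClass (1 + Real.log 4) (2 * Real.exp 1 - 1) q ∧
    (∀ k : ℤ, Real.log (1 / q k) ≤
      (1 + Real.log 4) * (k : ℝ) ^ 2 + Real.log (2 * Real.exp 1 - 1)) := by
  have hE1 : lam + 1 ≤ Real.exp lam := Real.add_one_le_exp lam
  have hEpos : (0 : ℝ) < Real.exp lam := Real.exp_pos lam
  have hC : (0 : ℝ) < 2 * Real.exp lam - 1 := by nlinarith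
  set C : ℝ := (2 * Real.exp lam - 1)⁻¹ with hCdef
  have hCpos : 0 < C := inv_pos.mpr hC
  set S : ℝ := C * (lam * (lam + 1) * Real.exp lam) with hSdef
  -- positive part
  have hg : HasSum (fun n : ℕ => (n : ℝ) ^ 2 * (C * lam ^ n / (n.factorial : ℝ))) S := by
    have := (hasSum_sq_real lam).mul_left C
    convert this using 1
    · rfl
    funext n
    ring
  have hpos : HasSum (fun n : ℕ => ((n : ℤ) : ℝ) ^ 2 * q (n : ℤ)) S := by
    convert hg using 1
    funext n
    rw [hq]
    simp
  have hFneg : ∀ m : ℤ, ((-m : ℤ) : ℝ) ^ 2 * q (-m) = ((m : ℤ) : ℝ) ^ 2 * q m := by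
    intro m
    rw [hq, hq, Int.natAbs_neg]
    push_cast
    ring
  have hshift : HasSum (fun n : ℕ => ((((n + 1 : ℕ)) : ℤ) : ℝ) ^ 2 * q (((n + 1 : ℕ)) : ℤ)) S := by
    refine (hasSum_nat_add_iff (f := fun n : ℕ => ((n : ℤ) : ℝ) ^ 2 * q (n : ℤ)) 1).mpr ?_
    simpa using hpos
  have hneg : HasSum (fun n : ℕ => ((-(n + 1) : ℤ) : ℝ) ^ 2 * q (-(n + 1))) S := by
    convert hshift using 1
    funext n
    have := hFneg (((n + 1 : ℕ) : ℤ))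
    push_cast at this ⊢
    convert this using 3
  have htotal : HasSum (fun k : ℤ => (k : ℝ) ^ 2 * q k) (S + S) :=
    HasSum.of_nat_of_neg_add_one hpos hneg
  have hSS : S + S = 1 := by rw [← htotal.tsum_eq, hvar]
  have hEq : 2 * (lam * (lam + 1) * Real.exp lam) = 2 * Real.exp lam - 1 := by
    have h2 : 2 * S = 1 := by linarith
    rw [hSdef, hCdef] at h2
    field_simp at h2
    linarith
  have hle1 : lam ≤ 1 := by nlinarith [mul_pos hlam hEpos]
  have hge : (1 : ℝ) / 4 ≤ lam := by nlinarith [mul_pos hlam hEpos, sq_nonneg lam]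
  -- basic positivity of q
  have hqpos : ∀ k : ℤ, 0 < q k := by
    intro k
    rw [hq]
    positivity
  have hfac1 : ∀ n : ℕ, (1 : ℝ) ≤ (n.factorial : ℝ) := by
    intro n; exact_mod_cast Nat.one_le_iff_ne_zero.mpr n.factorial_ne_zero
  have hqle1 : ∀ k : ℤ, q k ≤ 1 := by
    intro k
    rw [hq]
    set n := k.natAbs
    have h1 : lam ^ n ≤ 1 := pow_le_one₀ hlam.le hle1
    have h2 : C ≤ 1 := by
      rw [hCdef]
      apply inv_le_one_of_one_le₀
      nlinarith
    rw [div_le_one (by positivity)]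
    calc C * lam ^ n ≤ 1 * 1 := by
          apply mul_le_mul h2 h1 (by positivity) (by linarith [hCpos])
      _ ≤ (n.factorial : ℝ) := by simpa using hfac1 n
  -- main log bound
  have hmain : ∀ k : ℤ, Real.log (1 / q k) ≤
      (1 + Real.log 4) * (k : ℝ) ^ 2 + Real.log (2 * Real.exp 1 - 1) := by
    intro k
    set n := k.natAbs with hn
    have hksq : (k : ℝ) ^ 2 = (n : ℝ) ^ 2 := by
      rw [hn]
      have : ((k.natAbs : ℤ) : ℝ) = (k.natAbs : ℝ) := Int.cast_natCast k.natAbs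
      rw [← this]
      have h2 := Int.natAbs_sq k
      exact_mod_cast h2.symm
    have hinv : 1 / q k = (2 * Real.exp lam - 1) * (n.factorial : ℝ) / lam ^ n := by
      rw [hq k]
      rw [hCdef]
      field_simp
      rw [hn]
      ring
    have hlogsplit : Real.log (1 / q k) =
        Real.log (2 * Real.exp lam - 1) + Real.log (n.factorial : ℝ) - n * Real.log lam := by
      rw [hinv, Real.log_div (by positivity) (by positivity),
        Real.log_mul hC.ne' (by positivity), Real.log_pow]
    -- (a)
    have ha : Real.log (2 * Real.exp lam - 1) ≤ Real.log (2 * Real.exp 1 - 1) := by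
      apply Real.log_le_log hC
      have := Real.exp_le_exp.mpr hle1
      linarith
    -- (b)
    have hb : Real.log (n.factorial : ℝ) ≤ (n : ℝ) ^ 2 := by
      rcases Nat.eq_zero_or_pos n with h0 | h0
      · simp [h0]
      · have hfp : (n.factorial : ℝ) ≤ ((n : ℝ)) ^ n := by
          exact_mod_cast Nat.factorial_le_pow n
        have hnpos : (0 : ℝ) < n := by exact_mod_cast h0
        calc Real.log (n.factorial : ℝ) ≤ Real.log ((n : ℝ) ^ n) :=
              Real.log_le_log (by positivity) hfp
          _ = n * Real.log n := Real.log_pow n _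
          _ ≤ n * n := by
              apply mul_le_mul_of_nonneg_left _ (by positivity)
              have := Real.log_le_sub_one_of_pos hnpos
              linarith
          _ = (n : ℝ) ^ 2 := by ring
    -- (c)
    have hc : -(n : ℝ) * Real.log lam ≤ Real.log 4 * (n : ℝ) ^ 2 := by
      have hlog4 : -Real.log lam ≤ Real.log 4 := by
        rw [← Real.log_inv]
        apply Real.log_le_log (by positivity)
        rw [inv_le_comm₀ hlam (by norm_num)]
        linarith
      have hlognonneg : 0 ≤ -Real.log lam := by
        simpa using Real.log_nonpos hlam.le hle1
      have hnn : (n : ℝ) ≤ (n : ℝ) ^ 2 := by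
        rcases Nat.eq_zero_or_pos n with h0 | h0
        · simp [h0]
        · have h1 : (1 : ℝ) ≤ (n : ℝ) := by exact_mod_cast h0
          nlinarith
      calc -(n : ℝ) * Real.log lam = (n : ℝ) * (-Real.log lam) := by ring
        _ ≤ (n : ℝ) ^ 2 * Real.log 4 := by
            apply mul_le_mul hnn hlog4 hlognonneg (by positivity)
        _ = Real.log 4 * (n : ℝ) ^ 2 := by ring
    rw [hlogsplit, hksq]
    nlinarith [ha, hb, hc]
  refine ⟨⟨hge, hle1⟩, ⟨fun k => ⟨(hqpos k).le, hqle1 k⟩, fun k _ => hmain k⟩, hmain⟩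
end

section
/- Let a > 0 and c ≥ 1. Let ν be a probability measure on ℤ whose probability mass function belongs to the class Q(a, c), and let μ be a centered (mean-zero) log-concave probability measure on ℤ with variance at most 1 whose support is contained in the support of ν. Let Y be a random variable with distribution μ and assume E[e^{2aY²}] < ∞. Then d_{χ²}(μ‖ν) ≤ c·( d_TV(μ, ν) + √(d_TV(μ, ν)) ) + c·√(E[e^{2aY²}])·√2·exp( −(1/12)·√( (1/a)·log( 1 + 1/√(d_TV(μ, ν)) ) ) ). -/
open MeasureTheory ProbabilityTheory
open scoped ProbabilityTheory

/-- The `χ²`-divergence `d_{χ²}(μ‖ν) = Σ_k ν({k})·(μ({k})/ν({k}) − 1)²`, expressed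
through the probability mass functions `p` of `μ` and `q` of `ν`. -/
noncomputable def chiSqDiv (p q : ℤ → ℝ) : ℝ :=
  ∑' k : ℤ, q k * (p k / q k - 1) ^ 2

/-- The total variation distance `d_TV(μ,ν) = Σ_k |μ({k}) − ν({k})|`, expressed
through the probability mass functions `p` of `μ` and `q` of `ν`. -/
noncomputable def dTV (p q : ℤ → ℝ) : ℝ :=
  ∑' k : ℤ, |p k - q k|


set_option maxHeartbeats 1000000


lemma lc_step1 (g : ℤ → ℝ) (h0 : ∀ k, 0 ≤ g k)
    (hlc1 : ∀ k : ℤ, g (k - 1) * g (k + 1) ≤ g k ^ 2)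
    (hlc2 : ∀ a b c : ℤ, a ≤ b → b ≤ c → 0 < g a → 0 < g c → 0 < g b) :
    ∀ u v : ℤ, u ≤ v → g (v + 1) * g u ≤ g v * g (u + 1) := by
  have main : ∀ n : ℕ, ∀ u : ℤ, g (u + n + 1) * g u ≤ g (u + n) * g (u + 1) := by
    intro n
    induction n with
    | zero => intro u; simp [mul_comm]
    | succ n IH =>
      intro u
      set v : ℤ := u + n with hv
      have hIH : g (v + 1) * g u ≤ g v * g (u + 1) := IH u
      have hkey : g v * g (v + 2) ≤ g (v + 1) ^ 2 := by
        have := hlc1 (v + 1)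
        rw [show v + 1 - 1 = v by ring, show v + 1 + 1 = v + 2 by ring] at this
        exact this
      have goal2 : g (v + 2) * g u ≤ g (v + 1) * g (u + 1) := by
        rcases lt_or_ge 0 (g (v + 1)) with hpos | hle
        · have h2 : g (v + 2) * g u * g (v + 1) ≤ g (v + 1) * g (u + 1) * g (v + 1) := by
            nlinarith [mul_le_mul_of_nonneg_right hIH (h0 (v + 2)),
              mul_le_mul_of_nonneg_left hkey (h0 (u + 1))]
          exact (mul_le_mul_iff_left₀ hpos).mp h2
        · have hz : g (v + 1) = 0 := le_antisymm hle (h0 _)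
          have hzz : g (v + 2) * g u = 0 := by
            by_contra h
            have hgu : 0 < g u := lt_of_le_of_ne (h0 u) fun h' => h (by rw [← h']; ring)
            have hgv2 : 0 < g (v + 2) := lt_of_le_of_ne (h0 _) fun h' => h (by rw [← h']; ring)
            have := hlc2 u (v + 1) (v + 2) (by omega) (by omega) hgu hgv2
            rw [hz] at this; exact lt_irrefl 0 this
          rw [hzz, hz, zero_mul]
      rw [show u + (n + 1 : ℕ) + 1 = v + 2 by push_cast [hv]; ring,
        show u + (n + 1 : ℕ) = v + 1 by push_cast [hv]; ring]
      exact goal2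
  intro u v huv
  obtain ⟨n, rfl⟩ : ∃ n : ℕ, v = u + n := ⟨(v - u).toNat, by omega⟩
  exact main n u

lemma lc_shift (g : ℤ → ℝ) (h0 : ∀ k, 0 ≤ g k)
    (hlc1 : ∀ k : ℤ, g (k - 1) * g (k + 1) ≤ g k ^ 2)
    (hlc2 : ∀ a b c : ℤ, a ≤ b → b ≤ c → 0 < g a → 0 < g c → 0 < g b) :
    ∀ t : ℕ, ∀ u v : ℤ, u ≤ v → g (v + t) * g u ≤ g v * g (u + t) := by
  intro t
  induction t with
  | zero => intro u v huv; simp [mul_comm]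
  | succ t IH =>
    intro u v huv
    rcases eq_or_lt_of_le huv with h | h
    · subst h; exact le_of_eq (mul_comm _ _)
    · calc g (v + (t + 1 : ℕ)) * g u = g ((v + t) + 1) * g u := by
            rw [show v + (t + 1 : ℕ) = (v + t) + 1 by push_cast; ring]
        _ ≤ g (v + t) * g (u + 1) := lc_step1 g h0 hlc1 hlc2 u (v + t) (by omega)
        _ ≤ g v * g ((u + 1) + t) := IH (u + 1) v (by omega)
        _ = g v * g (u + (t + 1 : ℕ)) := by rw [show (u + 1) + (t:ℤ) = u + (t + 1 : ℕ) by push_cast; ring]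

lemma tail_bound (p : ℤ → ℝ) (hp0 : ∀ k, 0 ≤ p k)
    (hsum : Summable p) (htot : ∑' k, p k = 1)
    (hlc1 : ∀ k : ℤ, p (k - 1) * p (k + 1) ≤ p k ^ 2)
    (hlc2 : ∀ a b c : ℤ, a ≤ b → b ≤ c → 0 < p a → 0 < p c → 0 < p b)
    (hsqsum : Summable (fun k : ℤ => (k : ℝ) ^ 2 * p k))
    (hvar : ∑' k : ℤ, (k : ℝ) ^ 2 * p k ≤ 1)
    (hksum : Summable (fun k : ℤ => (k : ℝ) * p k))
    (hcent : ∑' k : ℤ, (k : ℝ) * p k = 0)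
    (n : ℤ) (hn : 1 ≤ n) :
    (∑' k : ℤ, if n ≤ k then p k else 0) ≤ Real.exp (-(n : ℝ) / 6) := by
  have hp1 : ∀ k, p k ≤ 1 := fun k => htot ▸ Summable.le_tsum hsum k (fun j _ => hp0 j)
  -- summability of |k| * p k
  have habs : Summable (fun k : ℤ => |(k : ℝ)| * p k) := by
    apply Summable.of_nonneg_of_le (fun k => mul_nonneg (abs_nonneg _) (hp0 k))
      (fun k => ?_) ((hsqsum.add hsum).div_const 2)
    have h := hp0 k
    nlinarith [sq_nonneg (|(k:ℝ)| - 1), sq_abs (k:ℝ)]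
  have sumF : ∀ m : ℤ, Summable (fun k : ℤ => if m ≤ k then p k else 0) := fun m =>
    Summable.of_nonneg_of_le (fun k => by by_cases h : m ≤ k <;> simp [h, hp0 k])
      (fun k => by by_cases h : m ≤ k <;> simp [h, hp0 k]) hsum
  set F : ℤ → ℝ := fun m => ∑' k : ℤ, if m ≤ k then p k else 0 with hF
  have Fnn : ∀ m, 0 ≤ F m := fun m => tsum_nonneg (fun k => by
    by_cases h : m ≤ k <;> simp [h, hp0 k])
  have Fmono : ∀ m m' : ℤ, m ≤ m' → F m' ≤ F m := by
    intro m m' h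
    exact Summable.tsum_le_tsum (fun k => by
      by_cases h1 : m' ≤ k
      · simp [h1, le_trans h h1]
      · by_cases h2 : m ≤ k <;> simp [h1, h2, hp0 k]) (sumF m') (sumF m)
  have Fstep : ∀ m : ℤ, F m = p m + F (m + 1) := by
    intro m
    have hcg : ∀ k : ℤ, (if m ≤ k then p k else 0) =
        (if k = m then p m else 0) + (if m + 1 ≤ k then p k else 0) := by
      intro k
      rcases eq_or_ne k m with h | h
      · subst h; simp
      · by_cases h2 : m ≤ k
        · have : m + 1 ≤ k := by omega
          simp [h, h2, this]
        · have : ¬ (m + 1 ≤ k) := by omega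
          simp [h, h2, this]
    simp only [hF]
    rw [tsum_congr hcg, Summable.tsum_add ((hasSum_ite_eq m (p m)).summable) (sumF (m + 1)),
      tsum_ite_eq]
  have Fshiftrep : ∀ m : ℤ, F (m + 1) = ∑' k : ℤ, if m ≤ k then p (k + 1) else 0 := by
    intro m
    have := (Equiv.addRight (1 : ℤ)).tsum_eq (fun k => if m + 1 ≤ k then p k else 0)
    simp only [Equiv.coe_addRight] at this
    simp only [hF]
    rw [← this]
    exact tsum_congr (fun k => by simp [Int.add_le_add_iff_right])
  have sump1 : Summable (fun k : ℤ => p (k + 1)) := by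
    have := (Equiv.addRight (1 : ℤ)).summable_iff (f := p)
    simp only [Equiv.coe_addRight] at this
    exact this.mpr hsum
  have key : ∀ m : ℤ, p (m - 1) * F (m + 1) ≤ p m * F m := by
    intro m
    rw [Fshiftrep m]
    simp only [hF]
    rw [← tsum_mul_left, ← tsum_mul_left]
    apply Summable.tsum_le_tsum _ _ _
    · intro k
      by_cases h : m ≤ k
      · simp only [h, if_true, mul_ite, mul_zero]
        have := lc_step1 p hp0 hlc1 hlc2 (m - 1) k (by omega)
        rw [show m - 1 + 1 = m by ring] at this
        nlinarith [this]
      · simp [h]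
    · apply Summable.of_nonneg_of_le (fun k => ?_) (fun k => ?_) sump1
      · by_cases h : m ≤ k <;> simp [h] <;> exact mul_nonneg (hp0 _) (hp0 _)
      · by_cases h : m ≤ k <;> simp [h, hp0]
        nlinarith [hp0 (k+1), hp1 (m-1), hp0 (m-1)]
    · apply Summable.of_nonneg_of_le (fun k => ?_) (fun k => ?_) hsum
      · by_cases h : m ≤ k <;> simp [h] <;> exact mul_nonneg (hp0 _) (hp0 _)
      · by_cases h : m ≤ k <;> simp [h, hp0]
        nlinarith [hp0 k, hp1 m, hp0 m]
  have Flc : ∀ m : ℤ, F (m - 1) * F (m + 1) ≤ F m ^ 2 := by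
    intro m
    have h1 : F (m - 1) = p (m - 1) + F m := by
      have := Fstep (m - 1); rwa [show m - 1 + 1 = m by ring] at this
    have h2 : F m = p m + F (m + 1) := Fstep m
    nlinarith [key m, Fnn (m + 1), Fnn m]
  have Fint : ∀ a b c : ℤ, a ≤ b → b ≤ c → 0 < F a → 0 < F c → 0 < F b :=
    fun a b c hab hbc _ hc => lt_of_lt_of_le hc (Fmono b c hbc)
  -- A and B
  set A : ℝ := ∑' k : ℤ, if 1 ≤ k then (k : ℝ) * p k else 0 with hA
  set B : ℝ := ∑' k : ℤ, if k ≤ -1 then -(k : ℝ) * p k else 0 with hB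
  have sA : Summable (fun k : ℤ => if 1 ≤ k then (k : ℝ) * p k else 0) := by
    apply Summable.of_nonneg_of_le (fun k => ?_) (fun k => ?_) habs
    · by_cases h : 1 ≤ k <;> simp [h]
      have hk : (0:ℝ) ≤ (k:ℝ) := by exact_mod_cast (by omega : (0:ℤ) ≤ k)
      exact mul_nonneg hk (hp0 k)
    · by_cases h : 1 ≤ k <;> simp [h]
      · exact mul_le_mul_of_nonneg_right (le_abs_self _) (hp0 k)
      · exact mul_nonneg (abs_nonneg _) (hp0 k)
  have sB : Summable (fun k : ℤ => if k ≤ -1 then -(k : ℝ) * p k else 0) := by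
    apply Summable.of_nonneg_of_le (fun k => ?_) (fun k => ?_) habs
    · by_cases h : k ≤ -1 <;> simp [h]
      have : (k:ℝ) ≤ -1 := by exact_mod_cast h
      nlinarith [hp0 k]
    · by_cases h : k ≤ -1 <;> simp [h]
      · have := mul_le_mul_of_nonneg_right (neg_le_abs (k:ℝ)) (hp0 k)
        nlinarith [this]
      · exact mul_nonneg (abs_nonneg _) (hp0 k)
  have hAB1 : A - B = 0 := by
    have hterm : ∀ k : ℤ, (if 1 ≤ k then (k : ℝ) * p k else 0) -
        (if k ≤ -1 then -(k : ℝ) * p k else 0) = (k : ℝ) * p k := by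
      intro k
      rcases lt_trichotomy k 0 with h | h | h
      · have h1 : ¬ (1 ≤ k) := by omega
        have h2 : k ≤ -1 := by omega
        simp [h1, h2]
      · subst h; simp
      · have h1 : 1 ≤ k := by omega
        have h2 : ¬ (k ≤ -1) := by omega
        simp [h1, h2]
    rw [hA, hB, ← Summable.tsum_sub sA sB, tsum_congr hterm, hcent]
  have hAB2 : A + B ≤ 1 := by
    rw [hA, hB, ← Summable.tsum_add sA sB]
    have step1 : ∑' k : ℤ, ((if 1 ≤ k then (k : ℝ) * p k else 0) +
        (if k ≤ -1 then -(k : ℝ) * p k else 0)) ≤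
        ∑' k : ℤ, ((k : ℝ) ^ 2 * p k + p k) / 2 := by
      apply Summable.tsum_le_tsum _ (sA.add sB) ((hsqsum.add hsum).div_const 2)
      intro k
      rcases lt_trichotomy k 0 with h | h | h
      · have h1 : ¬ (1 ≤ k) := by omega
        have h2 : k ≤ -1 := by omega
        have h3 : (k:ℝ) ≤ -1 := by exact_mod_cast h2
        simp only [h1, if_false, h2, if_true, zero_add]
        nlinarith [hp0 k, sq_nonneg ((k:ℝ) + 1)]
      · subst h
        simp only [show ¬ ((1:ℤ) ≤ 0) by omega, if_false,
          show ¬ ((0:ℤ) ≤ -1) by omega, if_false]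
        push_cast
        simp [hp0 0]
        linarith [hp0 0]
      · have h1 : 1 ≤ k := by omega
        have h2 : ¬ (k ≤ -1) := by omega
        have h3 : (1:ℝ) ≤ k := by exact_mod_cast h1
        simp only [h1, if_true, h2, if_false, add_zero]
        nlinarith [hp0 k, sq_nonneg ((k:ℝ) - 1)]
    have step2 : ∑' k : ℤ, ((k : ℝ) ^ 2 * p k + p k) / 2 ≤ 1 := by
      rw [tsum_div_const, Summable.tsum_add hsqsum hsum, htot]
      linarith
    linarith
  have hAle : A ≤ 1/2 := by linarith
  have hBle : B ≤ 1/2 := by linarith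
  have F1le : F 1 ≤ 1/2 := by
    have : F 1 ≤ A := by
      rw [hF, hA]
      apply Summable.tsum_le_tsum _ (sumF 1) sA
      intro k
      by_cases h : 1 ≤ k
      · have h3 : (1:ℝ) ≤ k := by exact_mod_cast h
        simp only [h, if_true]
        nlinarith [hp0 k]
      · simp [h]
    linarith
  have F0ge : 1/2 ≤ F 0 := by
    have hsplit : F 0 + (∑' k : ℤ, if k ≤ -1 then p k else 0) = 1 := by
      have sC : Summable (fun k : ℤ => if k ≤ -1 then p k else 0) :=
        Summable.of_nonneg_of_le (fun k => by by_cases h : k ≤ -1 <;> simp [h, hp0 k])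
          (fun k => by by_cases h : k ≤ -1 <;> simp [h, hp0 k]) hsum
      rw [hF]
      simp only []
      rw [← Summable.tsum_add (sumF 0) sC, ← htot]
      apply tsum_congr
      intro k
      by_cases h : 0 ≤ k
      · have h2 : ¬ (k ≤ -1) := by omega
        simp [h, h2]
      · have h2 : k ≤ -1 := by omega
        simp [h, h2]
    have hCB : (∑' k : ℤ, if k ≤ -1 then p k else 0) ≤ B := by
      rw [hB]
      apply Summable.tsum_le_tsum _ _ sB
      · intro k
        by_cases h : k ≤ -1
        · have h3 : (k:ℝ) ≤ -1 := by exact_mod_cast h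
          simp only [h, if_true]
          nlinarith [hp0 k]
        · simp [h]
      · exact Summable.of_nonneg_of_le (fun k => by by_cases h : k ≤ -1 <;> simp [h, hp0 k])
          (fun k => by by_cases h : k ≤ -1 <;> simp [h, hp0 k]) hsum
    linarith
  have F3le : F 3 ≤ 1/9 := by
    have : F 3 ≤ ∑' k : ℤ, 1/9 * ((k : ℝ) ^ 2 * p k) := by
      rw [hF]
      apply Summable.tsum_le_tsum _ (sumF 3) (hsqsum.mul_left _)
      intro k
      by_cases h : 3 ≤ k
      · have h3 : (3:ℝ) ≤ k := by exact_mod_cast h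
        simp only [h, if_true]
        have h9 : (9:ℝ) ≤ (k:ℝ)^2 := by nlinarith
        nlinarith [mul_le_mul_of_nonneg_right h9 (hp0 k)]
      · simp only [h, if_false]
        exact mul_nonneg (by norm_num) (mul_nonneg (sq_nonneg _) (hp0 k))
    rw [tsum_mul_left] at this
    linarith
  have Fdecay : ∀ m : ℤ, 0 ≤ m → F (m + 3) ≤ 2/9 * F m := by
    intro m hm
    have hsub := lc_shift F Fnn Flc Fint 3 0 m hm
    push_cast at hsub
    norm_num at hsub
    nlinarith [Fnn (m + 3), Fnn m, F3le, F0ge, Fnn 3, hsub,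
      mul_le_mul_of_nonneg_left F3le (Fnn m),
      mul_le_mul_of_nonneg_left F0ge (Fnn (m + 3))]
  have claim : ∀ m : ℕ, ∀ j : ℤ, 3 * (m : ℤ) + 1 ≤ j → F j ≤ (1/2) * (2/9) ^ m := by
    intro m
    induction m with
    | zero =>
      intro j hj
      simp only [Nat.cast_zero, mul_zero, zero_add] at hj
      simpa using le_trans (Fmono 1 j hj) F1le
    | succ m IH =>
      intro j hj
      have hcast : 3 * ((m : ℤ) + 1) + 1 ≤ j := by push_cast at hj ⊢; omega
      have h1 : F j ≤ F (3 * (m : ℤ) + 1 + 3) := Fmono _ _ (by omega)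
      have h2 : F (3 * (m : ℤ) + 1 + 3) ≤ 2/9 * F (3 * (m : ℤ) + 1) :=
        Fdecay _ (by positivity)
      have h3 : F (3 * (m : ℤ) + 1) ≤ (1/2) * (2/9) ^ m := IH _ le_rfl
      calc F j ≤ 2/9 * F (3 * (m : ℤ) + 1) := le_trans h1 h2
        _ ≤ 2/9 * ((1/2) * (2/9) ^ m) := by nlinarith [Fnn (3 * (m : ℤ) + 1)]
        _ = (1/2) * (2/9) ^ (m + 1) := by ring
  -- choose m
  obtain ⟨m, hm1, hm2⟩ : ∃ m : ℕ, 3 * (m : ℤ) + 1 ≤ n ∧ n ≤ 3 * (m : ℤ) + 3 := by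
    refine ⟨((n - 1) / 3).toNat, ?_, ?_⟩ <;>
    · have h1 := Int.mul_ediv_add_emod (n - 1) 3
      have h2 := Int.emod_nonneg (n - 1) (by norm_num : (3:ℤ) ≠ 0)
      have h3 := Int.emod_lt_of_pos (n - 1) (by norm_num : (0:ℤ) < 3)
      have h4 : 0 ≤ (n - 1) / 3 := Int.ediv_nonneg (by omega) (by norm_num)
      rw [Int.toNat_of_nonneg h4]
      omega
  have hFn := claim m n hm1
  -- numeric
  have hlog2 : (1/2 : ℝ) < Real.log 2 := by
    have := Real.log_two_gt_d9; linarith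
  have hexp2 : Real.exp (1/2) < 2 := by
    calc Real.exp (1/2) < Real.exp (Real.log 2) := Real.exp_lt_exp.mpr hlog2
      _ = 2 := Real.exp_log (by norm_num)
  have h1 : (1/2 : ℝ) ≤ Real.exp (-(1/2)) := by
    rw [Real.exp_neg]
    rw [le_inv_comm₀ (by norm_num) (Real.exp_pos _)]
    linarith
  have h29 : (2/9 : ℝ) ≤ Real.exp (-(1/2)) := by linarith
  have hnum : (1/2 : ℝ) * (2/9) ^ m ≤ Real.exp (-(1/2)) * Real.exp (-(1/2)) ^ m :=
    mul_le_mul h1 (pow_le_pow_left₀ (by norm_num) h29 m) (by positivity) (Real.exp_pos _).le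
  have hexpeq : Real.exp (-(1/2)) * Real.exp (-(1/2)) ^ m
      = Real.exp (-(1/2) + (m : ℝ) * (-(1/2))) := by
    rw [← Real.exp_nat_mul, ← Real.exp_add]
  have hfin : Real.exp (-(1/2) + (m : ℝ) * (-(1/2))) ≤ Real.exp (-(n : ℝ) / 6) := by
    apply Real.exp_le_exp.mpr
    have : (n : ℝ) ≤ 3 * (m : ℝ) + 3 := by exact_mod_cast hm2
    linarith
  calc F n ≤ (1/2) * (2/9) ^ m := hFn
    _ ≤ Real.exp (-(1/2)) * Real.exp (-(1/2)) ^ m := hnum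
    _ = Real.exp (-(1/2) + (m : ℝ) * (-(1/2))) := hexpeq
    _ ≤ Real.exp (-(n : ℝ) / 6) := hfin

lemma amgm_term (c lam x pk : ℝ) (hc0 : 0 < c) (hlam : 0 < lam) (hx0 : 0 < x)
    (hpk0 : 0 ≤ pk) (hpk1 : pk ≤ 1) :
    c * x * pk ^ 2 ≤ c * (lam / 2 * (x * x * pk) + 1 / (2 * lam) * pk) := by
  have hp3 : pk ^ 3 ≤ pk := by
    nlinarith [mul_nonneg (mul_nonneg hpk0 hpk0) (sub_nonneg.mpr hpk1),
      mul_nonneg hpk0 (sub_nonneg.mpr hpk1)]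
  have key2 : 2 * lam * (x * pk ^ 2) ≤ lam ^ 2 * (x * x * pk) + pk := by
    nlinarith [mul_nonneg hpk0 (sq_nonneg (lam * x - pk)), hp3]
  have hrhs : 2 * lam * (lam / 2 * (x * x * pk) + 1 / (2 * lam) * pk)
      = lam ^ 2 * (x * x * pk) + pk := by
    field_simp
  have hgoal : 2 * lam * (c * (x * pk ^ 2)) ≤
      2 * lam * (c * (lam / 2 * (x * x * pk) + 1 / (2 * lam) * pk)) := by
    have hc2 := mul_le_mul_of_nonneg_left key2 hc0.le
    calc 2 * lam * (c * (x * pk ^ 2)) = c * (2 * lam * (x * pk ^ 2)) := by ring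
      _ ≤ c * (lam ^ 2 * (x * x * pk) + pk) := hc2
      _ = c * (2 * lam * (lam / 2 * (x * x * pk) + 1 / (2 * lam) * pk)) := by rw [hrhs]
      _ = 2 * lam * (c * (lam / 2 * (x * x * pk) + 1 / (2 * lam) * pk)) := by ring
  have hfin := (mul_le_mul_iff_right₀ (by positivity : (0:ℝ) < 2 * lam)).mp hgoal
  calc c * x * pk ^ 2 = c * (x * pk ^ 2) := by ring
    _ ≤ c * (lam / 2 * (x * x * pk) + 1 / (2 * lam) * pk) := hfin


/-- For `a > 0`, `c ≥ 1`, `ν` with p.m.f. `q ∈ Q(a,c)`, `μ` centered log-concave with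
variance at most 1 and p.m.f. `p` supported in the support of `q`, and `Y ~ μ` with
`E[e^{2aY²}] < ∞`:
`d_{χ²}(μ‖ν) ≤ c(d_TV + √d_TV) + c·√E[e^{2aY²}]·√2·exp(−(1/12)√((1/a)·log(1 + 1/√d_TV)))`. -/
theorem chiSq_le_dTV
    {Ω : Type*} [MeasureSpace Ω] [IsProbabilityMeasure (ℙ : Measure Ω)]
    (a c : ℝ) (ha : 0 < a) (hc : 1 ≤ c)
    (μ ν : Measure ℤ) [IsProbabilityMeasure μ] [IsProbabilityMeasure ν]
    (p q : ℤ → ℝ)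
    (hp : ∀ k : ℤ, p k = (μ {k}).toReal) (hq : ∀ k : ℤ, q k = (ν {k}).toReal)
    (hqQ : MemQClass a c q)
    (hlc : IsLogConcavePMF p)
    (hcent : (∑' k : ℤ, (k : ℝ) * p k) = 0)
    (hvar : (∑' k : ℤ, (k : ℝ) ^ 2 * p k) ≤ 1)
    (hsupp : ∀ k : ℤ, 0 < p k → 0 < q k)
    (Y : Ω → ℤ) (hY : Measurable Y) (hYlaw : ∀ k : ℤ, (ℙ (Y ⁻¹' {k})).toReal = p k)
    (hmom : Integrable (fun ω => Real.exp (2 * a * (Y ω : ℝ) ^ 2)) ℙ) :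
    chiSqDiv p q ≤ c * (dTV p q + Real.sqrt (dTV p q)) +
      c * Real.sqrt (∫ ω, Real.exp (2 * a * (Y ω : ℝ) ^ 2)) * Real.sqrt 2 *
        Real.exp (-(1 / 12) *
          Real.sqrt ((1 / a) * Real.log (1 + 1 / Real.sqrt (dTV p q)))) := by
  have hc0 : (0:ℝ) < c := lt_of_lt_of_le one_pos hc
  -- basic p facts
  have hp0 : ∀ k, 0 ≤ p k := fun k => (hp k) ▸ ENNReal.toReal_nonneg
  have hp1 : ∀ k, p k ≤ 1 := by
    intro k
    rw [hp k]
    exact ENNReal.toReal_le_of_le_ofReal zero_le_one (by simpa using prob_le_one)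
  have htsum1 : (∑' k : ℤ, μ {k}) = 1 := by
    have h := Measure.tsum_indicator_apply_singleton μ Set.univ MeasurableSet.univ
    simpa [Set.indicator_univ] using h
  have hsum_p : Summable p := by
    have : Summable (fun k : ℤ => (μ {k}).toReal) :=
      ENNReal.summable_toReal (htsum1 ▸ ENNReal.one_ne_top)
    exact this.congr (fun k => (hp k).symm)
  have htot_p : ∑' k : ℤ, p k = 1 := by
    have h2 : ∑' k : ℤ, (μ {k}).toReal = (∑' k : ℤ, μ {k}).toReal :=
      (ENNReal.tsum_toReal_eq (fun k => measure_ne_top μ _)).symm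
    rw [tsum_congr hp, h2, htsum1, ENNReal.toReal_one]
  -- q facts
  have hq0 : ∀ k, 0 ≤ q k := fun k => (hqQ.1 k).1
  have hq1 : ∀ k, q k ≤ 1 := fun k => (hqQ.1 k).2
  have htsum1q : (∑' k : ℤ, ν {k}) = 1 := by
    have h := Measure.tsum_indicator_apply_singleton ν Set.univ MeasurableSet.univ
    simpa [Set.indicator_univ] using h
  have hsum_q : Summable q := by
    have : Summable (fun k : ℤ => (ν {k}).toReal) :=
      ENNReal.summable_toReal (htsum1q ▸ ENNReal.one_ne_top)
    exact this.congr (fun k => (hq k).symm)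
  -- |p - q|
  have hpq_sum : Summable (fun k : ℤ => |p k - q k|) := by
    apply Summable.of_nonneg_of_le (fun k => abs_nonneg _) (fun k => ?_) (hsum_p.add hsum_q)
    rw [abs_sub_le_iff]
    constructor <;> [linarith [hp0 k, hq0 k, hp1 k, hq1 k]; linarith [hp0 k, hq0 k]]
  have hpq1 : ∀ k, |p k - q k| ≤ 1 := by
    intro k
    rw [abs_sub_le_iff]
    constructor <;> [linarith [hp1 k, hq0 k]; linarith [hq1 k, hp0 k]]
  -- map measure aspects
  set m' : Measure ℤ := Measure.map Y ℙ with hm'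
  have hmap : ∀ k : ℤ, (m' {k}).toReal = p k := by
    intro k
    rw [hm', Measure.map_apply hY (measurableSet_singleton k)]
    exact hYlaw k
  have hfmeas : Measurable (fun k : ℤ => Real.exp (2 * a * (k : ℝ) ^ 2)) :=
    measurable_of_countable _
  have hfint : Integrable (fun k : ℤ => Real.exp (2 * a * (k : ℝ) ^ 2)) m' := by
    rw [hm', integrable_map_measure hfmeas.aestronglyMeasurable hY.aemeasurable]
    exact hmom
  have hE_eq : (∫ ω, Real.exp (2 * a * (Y ω : ℝ) ^ 2)) =
      ∑' k : ℤ, Real.exp (2 * a * (k : ℝ) ^ 2) * p k := by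
    have h1 : (∫ ω, Real.exp (2 * a * (Y ω : ℝ) ^ 2)) =
        ∫ k, Real.exp (2 * a * (k : ℝ) ^ 2) ∂m' := by
      rw [hm', integral_map hY.aemeasurable hfmeas.aestronglyMeasurable]
    rw [h1, integral_countable' hfint]
    exact tsum_congr (fun k => by rw [measureReal_def, hmap k, smul_eq_mul, mul_comm])
  have hEsum : Summable (fun k : ℤ => Real.exp (2 * a * (k : ℝ) ^ 2) * p k) := by
    have hfin := hfint.hasFiniteIntegral
    rw [MeasureTheory.HasFiniteIntegral] at hfin
    rw [lintegral_countable'] at hfin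
    have hs := ENNReal.summable_toReal hfin.ne
    apply hs.congr
    intro k
    rw [ENNReal.toReal_mul, hmap k, toReal_enorm, Real.norm_eq_abs,
      abs_of_pos (Real.exp_pos _)]
  set E' : ℝ := ∑' k : ℤ, Real.exp (2 * a * (k : ℝ) ^ 2) * p k with hE'
  have hE'1 : 1 ≤ E' := by
    rw [hE', ← htot_p]
    apply Summable.tsum_le_tsum (fun k => ?_) hsum_p hEsum
    nlinarith [Real.one_le_exp (by positivity : 0 ≤ 2 * a * (k:ℝ)^2), hp0 k]
  have hsqsum : Summable (fun k : ℤ => (k : ℝ) ^ 2 * p k) := by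
    apply Summable.of_nonneg_of_le (fun k => mul_nonneg (sq_nonneg _) (hp0 k))
      (fun k => ?_) (hEsum.mul_left (1 / (2 * a)))
    have hx : 2 * a * (k : ℝ) ^ 2 ≤ Real.exp (2 * a * (k : ℝ) ^ 2) := by
      linarith [Real.add_one_le_exp (2 * a * (k : ℝ) ^ 2)]
    have h2 := mul_le_mul_of_nonneg_right hx (hp0 k)
    rw [div_mul_eq_mul_div, le_div_iff₀ (by linarith : (0:ℝ) < 2 * a)]
    nlinarith [h2]
  have hksum : Summable (fun k : ℤ => (k : ℝ) * p k) := by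
    apply Summable.of_abs
    apply Summable.of_nonneg_of_le (fun k => abs_nonneg _) (fun k => ?_)
      ((hsqsum.add hsum_p).div_const 2)
    rw [abs_mul, abs_of_nonneg (hp0 k)]
    nlinarith [sq_nonneg (|(k:ℝ)| - 1), sq_abs (k:ℝ), hp0 k, abs_nonneg (k:ℝ)]
  -- D
  set D : ℝ := dTV p q with hDdef
  have hD0 : 0 ≤ D := tsum_nonneg (fun k => abs_nonneg _)
  rcases eq_or_lt_of_le hD0 with hDzero | hDpos
  · -- D = 0 case
    have hpq : ∀ k, p k = q k := by
      intro k
      have h1 : |p k - q k| ≤ D := Summable.le_tsum hpq_sum k (fun j _ => abs_nonneg _)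
      have h2 : |p k - q k| = 0 := le_antisymm (by rw [← hDzero] at h1; exact h1) (abs_nonneg _)
      have := abs_eq_zero.mp h2
      linarith
    have hchi : chiSqDiv p q = 0 := by
      rw [chiSqDiv]
      rw [tsum_congr (fun k => ?_), tsum_zero]
      rcases eq_or_lt_of_le (hq0 k) with hq' | hq'
      · rw [← hq']; ring
      · rw [hpq k, div_self (ne_of_gt hq')]; ring
    rw [hchi, ← hDzero]
    have h1 : Real.sqrt 0 = 0 := Real.sqrt_zero
    rw [h1]
    positivity
  · -- D > 0 case
    set s : ℝ := Real.sqrt D with hs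
    have hs0 : 0 < s := Real.sqrt_pos.mpr hDpos
    have hss : s * s = D := Real.mul_self_sqrt hD0
    have hlognn : 0 ≤ Real.log (1 + 1 / s) := Real.log_nonneg (by
      have : 0 ≤ 1 / s := by positivity
      linarith)
    set K : ℝ := Real.sqrt ((1 / a) * Real.log (1 + 1 / s)) with hK
    have hK0 : 0 ≤ K := Real.sqrt_nonneg _
    have hK2 : a * K ^ 2 = Real.log (1 + 1 / s) := by
      rw [hK, Real.sq_sqrt (by positivity)]
      field_simp
    have hexpK : Real.exp (a * K ^ 2) = 1 + 1 / s := by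
      rw [hK2, Real.exp_log (by positivity)]
    set n : ℤ := ⌊K⌋ + 1 with hn
    have hn1 : 1 ≤ n := by
      have : 0 ≤ ⌊K⌋ := Int.floor_nonneg.mpr hK0
      omega
    have hnK : K < (n : ℝ) := by
      rw [hn]
      push_cast
      exact Int.lt_floor_add_one K
    -- the three functions
    set A : ℤ → ℝ := fun k => c * (1 + 1 / s) * |p k - q k| with hA
    set B : ℤ → ℝ := fun k =>
      if (k : ℝ) ^ 2 ≤ K ^ 2 then 0 else c * Real.exp (a * (k : ℝ) ^ 2) * p k ^ 2 with hB
    set f : ℤ → ℝ := fun k => q k * (p k / q k - 1) ^ 2 with hf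
    have hfnn : ∀ k, 0 ≤ f k := fun k => mul_nonneg (hq0 k) (sq_nonneg _)
    have hAnn : ∀ k, 0 ≤ A k := fun k =>
      mul_nonneg (by positivity) (abs_nonneg _)
    have hBnn : ∀ k, 0 ≤ B k := by
      intro k
      rw [hB]
      by_cases h : (k : ℝ) ^ 2 ≤ K ^ 2
      · simp [h]
      · simp only [h, if_false]
        exact mul_nonneg (mul_nonneg hc0.le (Real.exp_pos _).le) (sq_nonneg _)
    have hconst1 : 1 ≤ c * (1 + 1 / s) := by
      have h1 : (1:ℝ) ≤ 1 + 1 / s := by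
        have : 0 ≤ 1 / s := by positivity
        linarith
      nlinarith
    have hqinv : ∀ k : ℤ, 0 < q k → 1 / q k ≤ c * Real.exp (a * (k : ℝ) ^ 2) := by
      intro k hk
      have h1 := hqQ.2 k hk
      have h2 : 1 / q k = Real.exp (Real.log (1 / q k)) :=
        (Real.exp_log (by positivity)).symm
      rw [h2]
      calc Real.exp (Real.log (1 / q k)) ≤ Real.exp (a * (k:ℝ)^2 + Real.log c) :=
            Real.exp_le_exp.mpr h1
        _ = Real.exp (a * (k:ℝ)^2) * c := by rw [Real.exp_add, Real.exp_log hc0]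
        _ = c * Real.exp (a * (k:ℝ)^2) := mul_comm _ _
    -- termwise bound
    have hfAB : ∀ k, f k ≤ A k + B k := by
      intro k
      rcases eq_or_lt_of_le (hq0 k) with hqk | hqk
      · have hfk : f k = 0 := by rw [hf]; simp only []; rw [← hqk]; ring
        rw [hfk]
        exact add_nonneg (hAnn k) (hBnn k)
      · have hinv := hqinv k hqk
        have hqne : q k ≠ 0 := ne_of_gt hqk
        by_cases hk : (k : ℝ) ^ 2 ≤ K ^ 2
        · -- main region
          have hBk : B k = 0 := by rw [hB]; simp [hk]
          have h1 : f k = (p k - q k) ^ 2 * (1 / q k) := by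
            rw [hf]; field_simp
          have h2 : f k ≤ (p k - q k) ^ 2 * (c * Real.exp (a * (k:ℝ)^2)) := by
            rw [h1]
            exact mul_le_mul_of_nonneg_left hinv (sq_nonneg _)
          have h3 : Real.exp (a * (k:ℝ)^2) ≤ 1 + 1 / s := by
            rw [← hexpK]
            exact Real.exp_le_exp.mpr (mul_le_mul_of_nonneg_left hk ha.le)
          have h4 : (p k - q k) ^ 2 * (c * Real.exp (a * (k:ℝ)^2)) ≤
              c * (1 + 1 / s) * (p k - q k) ^ 2 := by
            nlinarith [mul_le_mul_of_nonneg_right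
              (mul_le_mul_of_nonneg_left h3 hc0.le) (sq_nonneg (p k - q k))]
          have h5 : (p k - q k) ^ 2 ≤ |p k - q k| := by
            rw [← sq_abs]
            nlinarith [abs_nonneg (p k - q k), hpq1 k]
          have h6 : c * (1 + 1 / s) * (p k - q k) ^ 2 ≤ A k := by
            rw [hA]
            exact mul_le_mul_of_nonneg_left h5 (by positivity)
          rw [hBk]
          linarith
        · -- tail region
          have hBk : B k = c * Real.exp (a * (k:ℝ)^2) * p k ^ 2 := by
            rw [hB]; simp [hk]
          have h1 : f k = p k ^ 2 * (1 / q k) - 2 * p k + q k := by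
            rw [hf]; field_simp; ring
          have h2 : p k ^ 2 * (1 / q k) ≤ c * Real.exp (a * (k:ℝ)^2) * p k ^ 2 := by
            nlinarith [mul_le_mul_of_nonneg_left hinv (sq_nonneg (p k))]
          have h3 : q k - 2 * p k ≤ |p k - q k| := by
            rcases abs_cases (p k - q k) with ⟨h, _⟩ | ⟨h, _⟩ <;> rw [h] <;>
              linarith [hp0 k]
          have h4 : |p k - q k| ≤ A k := by
            rw [hA]
            nlinarith [abs_nonneg (p k - q k), hconst1]
          rw [h1, hBk]
          linarith
    -- sum of A
    have hAsum : Summable A := by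
      rw [hA]
      exact hpq_sum.mul_left _
    have hAval : ∑' k, A k = c * (D + s) := by
      rw [hA]
      rw [tsum_mul_left]
      have htv : (∑' (k : ℤ), |p k - q k|) = D := rfl
      have h2 : (1 + 1 / s) * D = D + s := by
        field_simp
        nlinarith [hss]
      rw [htv]
      nlinarith [h2]
    -- tail sum T
    set T : ℝ := ∑' k : ℤ, (if (k : ℝ) ^ 2 ≤ K ^ 2 then 0 else p k) with hT
    have hTsummand_nn : ∀ k : ℤ, 0 ≤ (if (k : ℝ) ^ 2 ≤ K ^ 2 then 0 else p k) := by
      intro k; by_cases h : (k : ℝ) ^ 2 ≤ K ^ 2 <;> simp [h, hp0 k]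
    have hTsum : Summable (fun k : ℤ => if (k : ℝ) ^ 2 ≤ K ^ 2 then 0 else p k) := by
      apply Summable.of_nonneg_of_le hTsummand_nn (fun k => ?_) hsum_p
      by_cases h : (k : ℝ) ^ 2 ≤ K ^ 2 <;> simp [h, hp0 k]
    have hT0 : 0 ≤ T := tsum_nonneg hTsummand_nn
    -- T ≤ 2 exp(-K/6)
    have hTbound : T ≤ 2 * Real.exp (-K / 6) := by
      -- right and left tails
      have hrsummand : Summable (fun k : ℤ => if n ≤ k then p k else 0) :=
        Summable.of_nonneg_of_le (fun k => by by_cases h : n ≤ k <;> simp [h, hp0 k])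
          (fun k => by by_cases h : n ≤ k <;> simp [h, hp0 k]) hsum_p
      have hlsummand : Summable (fun k : ℤ => if k ≤ -n then p k else 0) :=
        Summable.of_nonneg_of_le (fun k => by by_cases h : k ≤ -n <;> simp [h, hp0 k])
          (fun k => by by_cases h : k ≤ -n <;> simp [h, hp0 k]) hsum_p
      have hsplit : T ≤ (∑' k : ℤ, if n ≤ k then p k else 0) +
          (∑' k : ℤ, if k ≤ -n then p k else 0) := by
        rw [hT, ← Summable.tsum_add hrsummand hlsummand]
        apply Summable.tsum_le_tsum (fun k => ?_) hTsum (hrsummand.add hlsummand)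
        by_cases h : (k : ℝ) ^ 2 ≤ K ^ 2
        · simp only [h, if_true]
          have h1 := fun (h' : n ≤ k) => hp0 k
          by_cases h2 : n ≤ k <;> by_cases h3 : k ≤ -n <;>
            simp [h2, h3, hp0 k] <;> linarith [hp0 k]
        · simp only [h, if_false]
          have habs : K < |(k : ℝ)| := by
            by_contra hcon
            push_neg at hcon
            have : (k:ℝ)^2 ≤ K^2 := by
              rw [← sq_abs]
              nlinarith [abs_nonneg (k:ℝ)]
            exact h this
          rcases abs_cases ((k : ℝ)) with ⟨he, _⟩ | ⟨he, _⟩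
          · -- k ≥ 0, K < k so n ≤ k
            rw [he] at habs
            have hkk : n ≤ k := by
              rw [hn]
              have := Int.floor_lt.mpr habs
              omega
            have h3 : ¬ (k ≤ -n) := by omega
            simp [hkk, h3, hp0 k]
          · rw [he] at habs
            have hkk : n ≤ -k := by
              rw [hn]
              have : K < ((-k : ℤ) : ℝ) := by push_cast; linarith
              have := Int.floor_lt.mpr this
              omega
            have h2 : ¬ (n ≤ k) := by omega
            have h3 : k ≤ -n := by omega
            simp [h2, h3, hp0 k]
      have hright : (∑' k : ℤ, if n ≤ k then p k else 0) ≤ Real.exp (-(n:ℝ) / 6) :=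
        tail_bound p hp0 hsum_p htot_p hlc.1 hlc.2 hsqsum hvar hksum hcent n hn1
      have hleft : (∑' k : ℤ, if k ≤ -n then p k else 0) ≤ Real.exp (-(n:ℝ) / 6) := by
        -- reflect
        set p' : ℤ → ℝ := fun k => p (-k) with hp'
        have hp'0 : ∀ k, 0 ≤ p' k := fun k => hp0 (-k)
        have hrefl : ∀ g : ℤ → ℝ, ∑' k : ℤ, g (-k) = ∑' k : ℤ, g k := by
          intro g
          have := (Equiv.neg ℤ).tsum_eq g
          simpa using this
        have hreflsum : ∀ g : ℤ → ℝ, Summable g → Summable (fun k : ℤ => g (-k)) := by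
          intro g hg
          have := ((Equiv.neg ℤ).summable_iff (f := g)).mpr hg
          exact this
        have hsum_p' : Summable p' := hreflsum p hsum_p
        have htot_p' : ∑' k, p' k = 1 := by rw [hp']; rw [hrefl p]; exact htot_p
        have hlc1' : ∀ k : ℤ, p' (k - 1) * p' (k + 1) ≤ p' k ^ 2 := by
          intro k
          rw [hp']
          simp only []
          rw [show -(k - 1) = -k + 1 by ring, show -(k + 1) = -k - 1 by ring]
          rw [mul_comm]
          exact hlc.1 (-k)
        have hlc2' : ∀ x y z : ℤ, x ≤ y → y ≤ z → 0 < p' x → 0 < p' z → 0 < p' y := by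
          intro x y z hxy hyz h1 h3
          exact hlc.2 (-z) (-y) (-x) (by omega) (by omega) h3 h1
        have hsq' : Summable (fun k : ℤ => (k : ℝ) ^ 2 * p' k) := by
          have h1 := hreflsum (fun k : ℤ => (k : ℝ) ^ 2 * p k) hsqsum
          apply h1.congr
          intro k
          push_cast
          ring
        have hvar' : ∑' k : ℤ, (k : ℝ) ^ 2 * p' k ≤ 1 := by
          have h1 : ∑' k : ℤ, (k : ℝ) ^ 2 * p' k
              = ∑' k : ℤ, ((-k : ℤ) : ℝ) ^ 2 * p (-k) := by
            apply tsum_congr; intro k; push_cast; ring_nf; rfl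
          rw [h1, hrefl (fun k : ℤ => (k : ℝ) ^ 2 * p k)]
          exact hvar
        have hk' : Summable (fun k : ℤ => (k : ℝ) * p' k) := by
          have h1 := (hreflsum (fun k : ℤ => (k : ℝ) * p k) hksum).neg
          apply h1.congr
          intro k
          push_cast
          ring
        have hcent' : ∑' k : ℤ, (k : ℝ) * p' k = 0 := by
          have h1 : ∑' k : ℤ, (k : ℝ) * p' k
              = ∑' k : ℤ, -(((-k : ℤ) : ℝ) * p (-k)) := by
            apply tsum_congr; intro k; push_cast; ring_nf; rfl
          rw [h1, tsum_neg, hrefl (fun k : ℤ => (k : ℝ) * p k), hcent, neg_zero]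
        have htb := tail_bound p' hp'0 hsum_p' htot_p' hlc1' hlc2' hsq' hvar' hk' hcent' n hn1
        have heq : (∑' k : ℤ, if k ≤ -n then p k else 0)
            = ∑' k : ℤ, if n ≤ k then p' k else 0 := by
          rw [← hrefl (fun k : ℤ => if k ≤ -n then p k else 0)]
          apply tsum_congr
          intro k
          rw [hp']
          simp only []
          by_cases h : n ≤ k
          · have : -k ≤ -n := by omega
            simp [h, this]
          · have : ¬ (-k ≤ -n) := by omega
            simp [h, this]
        rw [heq]
        exact htb
      have hexpmono : Real.exp (-(n:ℝ) / 6) ≤ Real.exp (-K / 6) :=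
        Real.exp_le_exp.mpr (by linarith)
      linarith
    -- Summable B
    have hBsum : Summable B := by
      apply Summable.of_nonneg_of_le hBnn (fun k => ?_) (hEsum.mul_left c)
      rw [hB]
      by_cases h : (k : ℝ) ^ 2 ≤ K ^ 2
      · simp only [h, if_true]
        exact mul_nonneg hc0.le (mul_nonneg (Real.exp_pos _).le (hp0 k))
      · simp only [h, if_false]
        have h1 : Real.exp (a * (k:ℝ)^2) ≤ Real.exp (2 * a * (k:ℝ)^2) :=
          Real.exp_le_exp.mpr (by nlinarith [sq_nonneg (k:ℝ)])
        have h2 : p k ^ 2 ≤ p k := by nlinarith [hp0 k, hp1 k]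
        calc c * Real.exp (a * (k:ℝ)^2) * p k ^ 2
            ≤ c * Real.exp (2 * a * (k:ℝ)^2) * p k := by
              apply mul_le_mul
              · exact mul_le_mul_of_nonneg_left h1 hc0.le
              · exact h2
              · exact sq_nonneg _
              · positivity
          _ = c * (Real.exp (2 * a * (k:ℝ)^2) * p k) := by ring
    -- bound on sum of B
    have hE'0 : (0:ℝ) < E' := lt_of_lt_of_le one_pos hE'1
    set sE : ℝ := Real.sqrt E' with hsE
    have hsE0 : 0 < sE := Real.sqrt_pos.mpr hE'0
    have hBval : ∑' k, B k ≤ c * sE * Real.sqrt T := by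
      rcases eq_or_lt_of_le hT0 with hTz | hTz
      · -- T = 0
        have hall : ∀ k, B k = 0 := by
          intro k
          rw [hB]
          by_cases h : (k : ℝ) ^ 2 ≤ K ^ 2
          · simp [h]
          · simp only [h, if_false]
            have h1 : (if (k : ℝ) ^ 2 ≤ K ^ 2 then 0 else p k) ≤ T :=
              Summable.le_tsum hTsum k (fun j _ => hTsummand_nn j)
            rw [if_neg h] at h1
            have : p k = 0 := le_antisymm (by rw [← hTz] at h1; exact h1) (hp0 k)
            rw [this]
            ring
        rw [tsum_congr hall, tsum_zero, ← hTz, Real.sqrt_zero]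
        simp
      · set sT : ℝ := Real.sqrt T with hsT
        have hsT0 : 0 < sT := Real.sqrt_pos.mpr hTz
        set lam : ℝ := sT / sE with hlam
        have hlam0 : 0 < lam := by positivity
        have hterm : ∀ k, B k ≤ c * (lam / 2 * (Real.exp (2 * a * (k:ℝ)^2) * p k) +
            1 / (2 * lam) * (if (k : ℝ) ^ 2 ≤ K ^ 2 then 0 else p k)) := by
          intro k
          rw [hB]
          by_cases h : (k : ℝ) ^ 2 ≤ K ^ 2
          · simp only [h, if_true]
            have h1 := Real.exp_pos (2 * a * (k:ℝ)^2)
            have h2 := hp0 k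
            positivity
          · simp only [h, if_false]
            have hx0 : 0 < Real.exp (a * (k:ℝ)^2) := Real.exp_pos _
            have hx2 : Real.exp (2 * a * (k:ℝ)^2)
                = Real.exp (a * (k:ℝ)^2) * Real.exp (a * (k:ℝ)^2) := by
              rw [← Real.exp_add]
              congr 1
              ring
            rw [hx2]
            exact amgm_term c lam (Real.exp (a * (k:ℝ)^2)) (p k) hc0 hlam0 hx0
              (hp0 k) (hp1 k)
        have hmaj : Summable (fun k : ℤ => c * (lam / 2 * (Real.exp (2 * a * (k:ℝ)^2) * p k) +
            1 / (2 * lam) * (if (k : ℝ) ^ 2 ≤ K ^ 2 then 0 else p k))) :=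
          (((hEsum.mul_left (lam / 2)).add (hTsum.mul_left (1 / (2 * lam)))).mul_left c)
        have hsum1 : ∑' k, B k ≤ ∑' k : ℤ, c * (lam / 2 * (Real.exp (2 * a * (k:ℝ)^2) * p k) +
            1 / (2 * lam) * (if (k : ℝ) ^ 2 ≤ K ^ 2 then 0 else p k)) :=
          Summable.tsum_le_tsum hterm hBsum hmaj
        have hsum2 : ∑' k : ℤ, c * (lam / 2 * (Real.exp (2 * a * (k:ℝ)^2) * p k) +
            1 / (2 * lam) * (if (k : ℝ) ^ 2 ≤ K ^ 2 then 0 else p k))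
            = c * (lam / 2 * E' + 1 / (2 * lam) * T) := by
          rw [tsum_mul_left]
          congr 1
          rw [Summable.tsum_add (hEsum.mul_left (lam / 2)) (hTsum.mul_left (1 / (2 * lam))),
            tsum_mul_left, tsum_mul_left]
        have hval : c * (lam / 2 * E' + 1 / (2 * lam) * T) = c * sE * sT := by
          have hEeq : E' = sE ^ 2 := (Real.sq_sqrt hE'0.le).symm
          have hTeq : T = sT ^ 2 := (Real.sq_sqrt hT0).symm
          rw [hlam]
          rw [hEeq, hTeq]
          field_simp
          ring
        calc ∑' k, B k ≤ c * (lam / 2 * E' + 1 / (2 * lam) * T) := le_trans hsum1 (le_of_eq hsum2)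
          _ = c * sE * sT := hval
    -- √T ≤ √2 exp(-K/12)
    have hsqrtT : Real.sqrt T ≤ Real.sqrt 2 * Real.exp (-K / 12) := by
      have h1 : Real.sqrt T ≤ Real.sqrt (2 * Real.exp (-K / 6)) :=
        Real.sqrt_le_sqrt hTbound
      have h2 : Real.sqrt (2 * Real.exp (-K / 6)) =
          Real.sqrt 2 * Real.sqrt (Real.exp (-K / 6)) :=
        Real.sqrt_mul (by norm_num) _
      have h3 : Real.sqrt (Real.exp (-K / 6)) = Real.exp (-K / 12) := by
        have hsq2 : Real.exp (-K / 12) ^ 2 = Real.exp (-K / 6) := by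
          rw [sq, ← Real.exp_add]
          congr 1
          ring
        rw [← hsq2]
        exact Real.sqrt_sq (Real.exp_pos _).le
      rw [h2, h3] at h1
      exact h1
    -- final assembly
    have hfsum : Summable f := Summable.of_nonneg_of_le hfnn hfAB (hAsum.add hBsum)
    have hchile : chiSqDiv p q ≤ (∑' k, A k) + (∑' k, B k) := by
      rw [show chiSqDiv p q = ∑' k, f k from rfl]
      calc ∑' k, f k ≤ ∑' k, (A k + B k) := Summable.tsum_le_tsum hfAB hfsum (hAsum.add hBsum)
        _ = (∑' k, A k) + (∑' k, B k) := Summable.tsum_add hAsum hBsum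
    have hfinalB : (∑' k, B k) ≤ c * sE * (Real.sqrt 2 * Real.exp (-K / 12)) := by
      calc (∑' k, B k) ≤ c * sE * Real.sqrt T := hBval
        _ ≤ c * sE * (Real.sqrt 2 * Real.exp (-K / 12)) :=
            mul_le_mul_of_nonneg_left hsqrtT (by positivity)
    have hEroot : Real.sqrt (∫ ω, Real.exp (2 * a * (Y ω : ℝ) ^ 2)) = sE := by
      rw [hsE, hE_eq]
    have hKeq : Real.exp (-(1 / 12) * K) = Real.exp (-K / 12) := by
      congr 1
      ring
    calc chiSqDiv p q ≤ (∑' k, A k) + (∑' k, B k) := hchile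
      _ ≤ c * (D + s) + c * sE * (Real.sqrt 2 * Real.exp (-K / 12)) := by
          rw [hAval]; linarith [hfinalB]
      _ = c * (dTV p q + Real.sqrt (dTV p q)) +
          c * Real.sqrt (∫ ω, Real.exp (2 * a * (Y ω : ℝ) ^ 2)) * Real.sqrt 2 *
          Real.exp (-(1 / 12) * Real.sqrt ((1 / a) * Real.log (1 + 1 / Real.sqrt (dTV p q)))) := by
          rw [hEroot]
          rw [show dTV p q = D from rfl]
          rw [show Real.sqrt D = s from rfl]
          rw [show Real.sqrt ((1 / a) * Real.log (1 + 1 / s)) = K from rfl]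
          rw [hKeq]
          ring
end

section
/- If X is a log-concave integer-valued random variable with Var(X) ≤ 1, then for all t ≥ 0, P(|X − E[X]| ≥ t) ≤ 2·e^{−t/6}. -/
open MeasureTheory ProbabilityTheory Real
open scoped ProbabilityTheory

open Real

lemma seq_ratio_mono (Q : ℤ → ℝ) (hnn : ∀ n, 0 ≤ Q n)
    (hlc : ∀ n : ℤ, Q (n - 1) * Q (n + 1) ≤ Q n ^ 2)
    (hint : ∀ a b c : ℤ, a ≤ b → b ≤ c → 0 < Q a → 0 < Q c → 0 < Q b)
    (k : ℤ) : ∀ n, k ≤ n → Q (n + 1) * Q k ≤ Q (k + 1) * Q n := by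
  refine Int.le_induction ?_ ?_
  · exact le_refl _
  · intro n hkn ih
    have hlcn := hlc (n + 1)
    simp only [add_sub_cancel_right] at hlcn
    rcases le_or_gt (Q k) 0 with hk | hk
    · have hk0 : Q k = 0 := le_antisymm hk (hnn k)
      rw [hk0, mul_zero]
      exact mul_nonneg (hnn _) (hnn _)
    rcases le_or_gt (Q (n + 1 + 1)) 0 with h2 | h2
    · have h20 : Q (n + 1 + 1) = 0 := le_antisymm h2 (hnn _)
      rw [h20, zero_mul]
      exact mul_nonneg (hnn _) (hnn _)
    · have hQn : 0 < Q n := hint k n (n + 1 + 1) hkn (by linarith) hk h2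
      have hQn1 : 0 < Q (n + 1) := hint k (n + 1) (n + 1 + 1) (by linarith) (by linarith) hk h2
      nlinarith [mul_le_mul_of_nonneg_left ih (le_of_lt hQn1)]

lemma seq_pow_step (Q : ℤ → ℝ) (hnn : ∀ n, 0 ≤ Q n)
    (hlc : ∀ n : ℤ, Q (n - 1) * Q (n + 1) ≤ Q n ^ 2)
    (hint : ∀ a b c : ℤ, a ≤ b → b ≤ c → 0 < Q a → 0 < Q c → 0 < Q b)
    (a : ℤ) : ∀ d : ℕ, ∀ n : ℤ, a + d ≤ n →
      Q (n + 1) ^ d * Q a ≤ Q n ^ d * Q (a + d) := by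
  intro d
  induction d with
  | zero => intro n _; simp
  | succ d ih =>
    intro n hn
    have hdn : a + d ≤ n := by push_cast at hn ⊢; linarith
    have step := seq_ratio_mono Q hnn hlc hint (a + d) n (by linarith)
    have h1 : Q (n + 1) ^ (d + 1) * Q a = Q (n + 1) * (Q (n + 1) ^ d * Q a) := by ring
    have h2 := ih n hdn
    calc Q (n + 1) ^ (d + 1) * Q a = Q (n + 1) * (Q (n + 1) ^ d * Q a) := by ring
      _ ≤ Q (n + 1) * (Q n ^ d * Q (a + d)) :=
          mul_le_mul_of_nonneg_left h2 (hnn _)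
      _ = Q n ^ d * (Q (n + 1) * Q (a + d)) := by ring
      _ ≤ Q n ^ d * (Q (a + d + 1) * Q n) :=
          mul_le_mul_of_nonneg_left step (pow_nonneg (hnn _) _)
      _ = Q n ^ (d + 1) * Q (a + d + 1) := by ring
      _ = Q n ^ (d + 1) * Q (a + (d + 1 : ℕ)) := by push_cast; ring_nf

lemma seq_decay (Q : ℤ → ℝ) (hnn : ∀ n, 0 ≤ Q n)
    (hlc : ∀ n : ℤ, Q (n - 1) * Q (n + 1) ≤ Q n ^ 2)
    (hint : ∀ a b c : ℤ, a ≤ b → b ≤ c → 0 < Q a → 0 < Q c → 0 < Q b)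
    (a b : ℤ) (hab : a < b) {A B : ℝ} (hA : A ≤ Q a) (hB : Q b ≤ B) (hApos : 0 < A) :
    ∀ s : ℕ, Q (b + s) ^ (b - a).toNat * A ^ s ≤ B ^ (b - a).toNat * B ^ s := by
  set d := (b - a).toNat with hd
  have hbd : b = a + d := by
    have : (d : ℤ) = b - a := Int.toNat_of_nonneg (by linarith)
    linarith
  have hBnn : 0 ≤ B := le_trans (hnn b) hB
  have key : ∀ n : ℤ, b ≤ n → Q (n + 1) ^ d * A ≤ Q n ^ d * B := by
    intro n hbn
    have h := seq_pow_step Q hnn hlc hint a d n (by omega)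
    calc Q (n + 1) ^ d * A ≤ Q (n + 1) ^ d * Q a :=
          mul_le_mul_of_nonneg_left hA (pow_nonneg (hnn _) _)
      _ ≤ Q n ^ d * Q (a + d) := h
      _ = Q n ^ d * Q b := by rw [← hbd]
      _ ≤ Q n ^ d * B := mul_le_mul_of_nonneg_left hB (pow_nonneg (hnn _) _)
  intro s
  induction s with
  | zero =>
    simpa using pow_le_pow_left₀ (hnn b) hB d
  | succ s ih =>
    have hkey := key (b + s) (by omega)
    calc Q (b + (s + 1 : ℕ)) ^ d * A ^ (s + 1)
        = (Q (b + s + 1) ^ d * A) * A ^ s := by push_cast; ring_nf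
      _ ≤ (Q (b + s) ^ d * B) * A ^ s :=
          mul_le_mul_of_nonneg_right hkey (pow_nonneg hApos.le _)
      _ = (Q (b + s) ^ d * A ^ s) * B := by ring
      _ ≤ (B ^ d * B ^ s) * B := mul_le_mul_of_nonneg_right ih hBnn
      _ = B ^ d * B ^ (s + 1) := by ring
set_option linter.unusedSectionVars false
set_option linter.unusedVariables false

open MeasureTheory ProbabilityTheory Real
open scoped ProbabilityTheory

section Meas
variable {Ω : Type*} [MeasureSpace Ω] [IsProbabilityMeasure (ℙ : Measure Ω)]
variable (X : Ω → ℤ)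

noncomputable def pmfOf (X : Ω → ℤ) : ℤ → ℝ := fun k => (ℙ (X ⁻¹' {k})).toReal

noncomputable def tailOf (X : Ω → ℤ) : ℤ → ℝ := fun n => (ℙ {ω | n ≤ X ω}).toReal

variable {X}

lemma measSet (hX : Measurable X) (S : Set ℤ) : MeasurableSet (X ⁻¹' S) := hX trivial

lemma tail_set_eq (n : ℤ) : {ω | n ≤ X ω} = X ⁻¹' (Set.Ici n) := rfl

lemma pmf_nonneg (k : ℤ) : 0 ≤ pmfOf X k := ENNReal.toReal_nonneg

lemma pmf_le_one (k : ℤ) : pmfOf X k ≤ 1 := by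
  have := prob_le_one (μ := (ℙ : Measure Ω)) (s := X ⁻¹' {k})
  simpa [pmfOf] using ENNReal.toReal_mono (by simp) this

lemma pmf_eq_ofReal (k : ℤ) : ℙ (X ⁻¹' {k}) = ENNReal.ofReal (pmfOf X k) := by
  simp [pmfOf, ENNReal.ofReal_toReal (measure_ne_top _ _)]

lemma tail_nonneg (n : ℤ) : 0 ≤ tailOf X n := ENNReal.toReal_nonneg

lemma tail_mono (hX : Measurable X) {a b : ℤ} (hab : a ≤ b) : tailOf X b ≤ tailOf X a := by
  apply ENNReal.toReal_mono (measure_ne_top _ _)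
  exact measure_mono (fun ω hω => le_trans hab hω)

lemma tail_step (hX : Measurable X) (n : ℤ) :
    tailOf X n = pmfOf X n + tailOf X (n + 1) := by
  have hset : {ω | n ≤ X ω} = X ⁻¹' {n} ∪ {ω | n + 1 ≤ X ω} := by
    ext ω; simp only [Set.mem_setOf_eq, Set.mem_union, Set.mem_preimage, Set.mem_singleton_iff]
    omega
  have hdisj : Disjoint (X ⁻¹' {n}) {ω | n + 1 ≤ X ω} := by
    rw [Set.disjoint_left]; intro ω h1 h2
    simp only [Set.mem_preimage, Set.mem_singleton_iff] at h1
    simp only [Set.mem_setOf_eq] at h2; omega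
  have hm : ℙ (X ⁻¹' {n} ∪ {ω | n + 1 ≤ X ω}) = ℙ (X ⁻¹' {n}) + ℙ {ω | n + 1 ≤ X ω} :=
    measure_union hdisj (measSet hX (Set.Ici (n+1)))
  simp only [tailOf, pmfOf, hset, hm,
    ENNReal.toReal_add (measure_ne_top _ _) (measure_ne_top _ _)]

lemma tail_eq_tsum (hX : Measurable X) (n : ℤ) :
    ℙ {ω | n ≤ X ω} = ∑' j : ℕ, ℙ (X ⁻¹' {n + (j : ℤ)}) := by
  have hset : {ω | n ≤ X ω} = ⋃ j : ℕ, X ⁻¹' {n + (j : ℤ)} := by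
    ext ω
    simp only [Set.mem_setOf_eq, Set.mem_iUnion, Set.mem_preimage, Set.mem_singleton_iff]
    constructor
    · intro h; exact ⟨(X ω - n).toNat, by omega⟩
    · rintro ⟨j, hj⟩; omega
  rw [hset, measure_iUnion ?_ (fun j => measSet hX _)]
  intro i j hij
  simp only [Function.onFun, Set.disjoint_left]
  intro ω h1 h2
  simp only [Set.mem_preimage, Set.mem_singleton_iff] at h1 h2
  omega

lemma tail_null (hX : Measurable X) (n : ℤ) (h : ∀ j : ℕ, pmfOf X (n + j) = 0) :
    tailOf X n = 0 := by
  have : ℙ {ω | n ≤ X ω} = 0 := by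
    rw [tail_eq_tsum hX n]
    have : ∀ j : ℕ, ℙ (X ⁻¹' {n + (j : ℤ)}) = 0 := by
      intro j
      have := h j
      rw [pmfOf] at this
      exact (ENNReal.toReal_eq_zero_iff _).mp this |>.resolve_right (measure_ne_top _ _)
    simp [this]
  simp [tailOf, this]

end Meas

section Meas2
set_option linter.unusedSectionVars false
variable {Ω : Type*} [MeasureSpace Ω] [IsProbabilityMeasure (ℙ : Measure Ω)]
variable {X : Ω → ℤ}

-- termwise geometric decay of the pmf
lemma pmf_term_geom (hX : Measurable X)
    (hlc : IsLogConcavePMF (pmfOf X)) {k : ℤ} (hk : 0 < pmfOf X k) :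
    ∀ j : ℕ, pmfOf X (k + j) ≤ pmfOf X k * (pmfOf X (k + 1) / pmfOf X k) ^ j := by
  intro j
  induction j with
  | zero => simp
  | succ j ih =>
    have hrm := seq_ratio_mono (pmfOf X) (fun n => pmf_nonneg n) hlc.1 hlc.2 k (k + j)
      (by omega)
    -- pmf (k+j+1) * pmf k ≤ pmf (k+1) * pmf (k+j)
    have h1 : pmfOf X (k + j + 1) ≤ (pmfOf X (k + 1) / pmfOf X k) * pmfOf X (k + j) := by
      rw [div_mul_eq_mul_div, le_div_iff₀ hk]
      linarith [hrm]
    have h2 : (pmfOf X (k + 1) / pmfOf X k) * pmfOf X (k + j) ≤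
        (pmfOf X (k + 1) / pmfOf X k) * (pmfOf X k * (pmfOf X (k + 1) / pmfOf X k) ^ j) :=
      mul_le_mul_of_nonneg_left ih (div_nonneg (pmf_nonneg _) (pmf_nonneg _))
    calc pmfOf X (k + (j + 1 : ℕ)) = pmfOf X (k + j + 1) := by push_cast; ring_nf
      _ ≤ (pmfOf X (k + 1) / pmfOf X k) * pmfOf X (k + j) := h1
      _ ≤ (pmfOf X (k + 1) / pmfOf X k) * (pmfOf X k * (pmfOf X (k + 1) / pmfOf X k) ^ j) := h2
      _ = pmfOf X k * (pmfOf X (k + 1) / pmfOf X k) ^ (j + 1) := by ring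

-- geometric series bound on the tail
lemma tail_geom_bound (hX : Measurable X)
    (hlc : IsLogConcavePMF (pmfOf X)) {k : ℤ} (hk : 0 < pmfOf X k)
    (hdec : pmfOf X (k + 1) < pmfOf X k) :
    tailOf X k * (pmfOf X k - pmfOf X (k + 1)) ≤ pmfOf X k ^ 2 := by
  set r := pmfOf X (k + 1) / pmfOf X k with hr
  have hr0 : 0 ≤ r := div_nonneg (pmf_nonneg _) hk.le
  have hr1 : r < 1 := (div_lt_one hk).mpr hdec
  have hsum : Summable (fun j : ℕ => pmfOf X k * r ^ j) :=
    (summable_geometric_of_lt_one hr0 hr1).mul_left _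
  have htsum : ∑' j : ℕ, pmfOf X k * r ^ j = pmfOf X k * (1 - r)⁻¹ := by
    rw [tsum_mul_left, tsum_geometric_of_lt_one hr0 hr1]
  have hle : ℙ {ω | k ≤ X ω} ≤ ENNReal.ofReal (pmfOf X k * (1 - r)⁻¹) := by
    rw [tail_eq_tsum hX k, ← htsum,
      ENNReal.ofReal_tsum_of_nonneg (fun j => mul_nonneg hk.le (pow_nonneg hr0 j)) hsum]
    apply ENNReal.tsum_le_tsum
    intro j
    rw [pmf_eq_ofReal]
    exact ENNReal.ofReal_le_ofReal (pmf_term_geom hX hlc hk j)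
  have hQ : tailOf X k ≤ pmfOf X k * (1 - r)⁻¹ := by
    rw [tailOf]
    exact ENNReal.toReal_le_of_le_ofReal
      (mul_nonneg hk.le (inv_nonneg.mpr (by linarith))) hle
  have h1r : 0 < 1 - r := by linarith
  have hrpk : r * pmfOf X k = pmfOf X (k + 1) := by
    rw [hr, div_mul_cancel₀ _ hk.ne']
  have h2 : tailOf X k * (1 - r) ≤ pmfOf X k := by
    have := mul_le_mul_of_nonneg_right hQ h1r.le
    calc tailOf X k * (1 - r) ≤ pmfOf X k * (1 - r)⁻¹ * (1 - r) := this
      _ = pmfOf X k := by field_simp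
  calc tailOf X k * (pmfOf X k - pmfOf X (k + 1))
      = (tailOf X k * (1 - r)) * pmfOf X k := by rw [← hrpk]; ring
    _ ≤ pmfOf X k * pmfOf X k := mul_le_mul_of_nonneg_right h2 hk.le
    _ = pmfOf X k ^ 2 := by ring

end Meas2

section Meas3
set_option linter.unusedSectionVars false
variable {Ω : Type*} [MeasureSpace Ω] [IsProbabilityMeasure (ℙ : Measure Ω)]
variable {X : Ω → ℤ}

lemma tail_lc (hX : Measurable X) (hlc : IsLogConcavePMF (pmfOf X)) (n : ℤ) :
    tailOf X (n - 1) * tailOf X (n + 1) ≤ tailOf X n ^ 2 := by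
  have hstep1 : tailOf X (n - 1) = pmfOf X (n - 1) + tailOf X n := by
    have := tail_step hX (n - 1); simpa using this
  have hstep2 : tailOf X n = pmfOf X n + tailOf X (n + 1) := tail_step hX n
  rcases le_or_gt (pmfOf X (n - 1)) (pmfOf X n) with hcase | hcase
  · nlinarith [tail_nonneg (X := X) (n + 1), pmf_nonneg (X := X) n,
      pmf_nonneg (X := X) (n - 1), tail_nonneg (X := X) n]
  · -- pmf (n-1) > pmf n ≥ 0
    have hpn1 : 0 < pmfOf X (n - 1) := lt_of_le_of_lt (pmf_nonneg _) hcase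
    rcases eq_or_lt_of_le (pmf_nonneg (X := X) n) with hpn0 | hpn
    · -- pmf n = 0 : tail n = 0
      have hQn : tailOf X n = 0 := by
        apply tail_null hX
        intro j
        rcases Nat.eq_zero_or_pos j with hj | hj
        · simp [hj, ← hpn0]
        · by_contra hpos
          have hpos' : 0 < pmfOf X (n + j) :=
            lt_of_le_of_lt (le_refl 0) (lt_of_le_of_ne (pmf_nonneg _) (Ne.symm hpos))
          have := hlc.2 (n - 1) n (n + j) (by omega) (by omega) hpn1 hpos'
          rw [← hpn0] at this; exact lt_irrefl _ this
      have hQn1 : tailOf X (n + 1) = 0 := by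
        have h1 := tail_mono hX (show n ≤ n + 1 by omega)
        have h2 := tail_nonneg (X := X) (n + 1)
        linarith [hQn ▸ h1]
      rw [hQn1, hQn]; simp
    · -- 0 < pmf n < pmf (n-1)
      have hgeom := tail_geom_bound hX hlc (k := n - 1) hpn1 (by simpa using hcase)
      simp only [sub_add_cancel] at hgeom
      -- hgeom : tail (n-1) * (pmf (n-1) - pmf n) ≤ pmf (n-1)^2
      -- tail n = tail (n-1) - pmf (n-1)
      have key : tailOf X n * (pmfOf X (n - 1) - pmfOf X n) ≤ pmfOf X (n - 1) * pmfOf X n := by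
        nlinarith [hstep1]
      nlinarith [tail_nonneg (X := X) n, pmf_nonneg (X := X) n]

end Meas3

section RT
set_option linter.unusedSectionVars false
variable {Ω : Type*} [MeasureSpace Ω] [IsProbabilityMeasure (ℙ : Measure Ω)]
variable {X : Ω → ℤ}

lemma log3_ge_one : (1:ℝ) ≤ Real.log 3 := by
  rw [Real.le_log_iff_exp_le (by norm_num)]
  linarith [Real.exp_one_lt_d9]

lemma log4_ge_one : (1:ℝ) ≤ Real.log 4 := by
  rw [Real.le_log_iff_exp_le (by norm_num)]
  linarith [Real.exp_one_lt_d9]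

lemma right_tail (hX : Measurable X) (hlc : IsLogConcavePMF (pmfOf X))
    (m t : ℝ) (ht : 3 ≤ t)
    (hcheb : (ℙ {ω | (2:ℝ) ≤ |(X ω : ℝ) - m|}).toReal ≤ 1/4) :
    (ℙ {ω | m + t ≤ (X ω : ℝ)}).toReal ≤ Real.exp (-t/6) := by
  set a0 : ℤ := ⌈m⌉ - 2 with ha0
  set b0 : ℤ := ⌊m⌋ + 3 with hb0
  have hfc : (⌊m⌋ : ℝ) ≤ m := Int.floor_le m
  have hcf : m ≤ (⌈m⌉ : ℝ) := Int.le_ceil m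
  have hfc1 : m - 1 ≤ (⌊m⌋ : ℝ) := by
    have := Int.lt_floor_add_one m; linarith
  have hcf1 : (⌈m⌉ : ℝ) ≤ m + 1 := by
    have := Int.ceil_lt_add_one m; linarith
  have hab : a0 < b0 := by
    have := Int.ceil_le_floor_add_one m; omega
  set d : ℕ := (b0 - a0).toNat with hd
  have hd1 : 1 ≤ d := by omega
  have hd5 : d ≤ 5 := by
    have := Int.floor_le_ceil m; omega
  -- anchor at b0
  have hQb : tailOf X b0 ≤ 1/4 := by
    refine le_trans ?_ hcheb
    apply ENNReal.toReal_mono (measure_ne_top _ _)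
    apply measure_mono
    intro ω hω
    simp only [Set.mem_setOf_eq] at hω ⊢
    have hx : (b0 : ℝ) ≤ (X ω : ℝ) := by exact_mod_cast hω
    have : (2:ℝ) ≤ (X ω : ℝ) - m := by
      have : (b0 : ℝ) = (⌊m⌋ : ℝ) + 3 := by push_cast [hb0]; ring
      linarith [this ▸ hx]
    exact le_trans this (le_abs_self _)
  -- anchor at a0
  have hQa : 3/4 ≤ tailOf X a0 := by
    have hAm : MeasurableSet (X ⁻¹' (Set.Iic (a0 - 1))) := measSet hX _
    have hcompl : (X ⁻¹' (Set.Iic (a0 - 1)))ᶜ = {ω | a0 ≤ X ω} := by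
      ext ω
      simp only [Set.mem_compl_iff, Set.mem_preimage, Set.mem_Iic, Set.mem_setOf_eq, not_le]
      omega
    have hsub : (ℙ (X ⁻¹' (Set.Iic (a0 - 1)))).toReal ≤ 1/4 := by
      refine le_trans ?_ hcheb
      apply ENNReal.toReal_mono (measure_ne_top _ _)
      apply measure_mono
      intro ω hω
      simp only [Set.mem_preimage, Set.mem_Iic] at hω
      simp only [Set.mem_setOf_eq]
      have hx : (X ω : ℝ) ≤ (a0 : ℝ) - 1 := by exact_mod_cast hω
      have ha0r : (a0 : ℝ) = (⌈m⌉ : ℝ) - 2 := by push_cast [ha0]; ring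
      have : (2:ℝ) ≤ -((X ω : ℝ) - m) := by linarith [ha0r ▸ hx]
      exact le_trans this (neg_le_abs _)
    have hcm : ℙ {ω | a0 ≤ X ω} = 1 - ℙ (X ⁻¹' (Set.Iic (a0 - 1))) := by
      rw [← hcompl]; exact prob_compl_eq_one_sub hAm
    have : tailOf X a0 = 1 - (ℙ (X ⁻¹' (Set.Iic (a0 - 1)))).toReal := by
      rw [tailOf, hcm, ENNReal.toReal_sub_of_le (prob_le_one) (by norm_num)]
      simp
    linarith [this]
  -- decay
  have hdecay := seq_decay (tailOf X) (fun n => tail_nonneg n)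
    (fun n => tail_lc hX hlc n)
    (fun a b c hab hbc hpa hpc =>
      lt_of_lt_of_le hpc (tail_mono hX hbc))
    a0 b0 hab (A := 3/4) (B := 1/4) hQa hQb (by norm_num)
  -- pick s
  have hbn : b0 ≤ ⌈m + t⌉ := by
    have h1 : (b0 : ℝ) ≤ m + t := by
      have : (b0 : ℝ) = (⌊m⌋ : ℝ) + 3 := by push_cast [hb0]; ring
      linarith
    exact_mod_cast le_trans h1 (Int.le_ceil _)
  set s : ℕ := (⌈m + t⌉ - b0).toNat with hs
  have hbs : b0 + (s : ℤ) = ⌈m + t⌉ := by omega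
  have hsr : t - 3 ≤ (s : ℝ) := by
    have h1 : m + t ≤ ((b0 + (s:ℤ) : ℤ) : ℝ) := by rw [hbs]; exact Int.le_ceil _
    have h2 : ((b0 + (s:ℤ) : ℤ) : ℝ) = (⌊m⌋ : ℝ) + 3 + s := by push_cast [hb0]; ring
    linarith [h2 ▸ h1]
  -- event inclusion
  have hev : (ℙ {ω | m + t ≤ (X ω : ℝ)}).toReal ≤ tailOf X (b0 + s) := by
    apply ENNReal.toReal_mono (measure_ne_top _ _)
    apply measure_mono
    intro ω hω
    simp only [Set.mem_setOf_eq] at hω ⊢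
    rw [hbs]
    exact Int.ceil_le.mpr hω
  -- numeric
  have hdecay_s := hdecay s
  have hQd : tailOf X (b0 + s) ^ d ≤ (1/4:ℝ) ^ d * (1/3) ^ s := by
    have h34 : (0:ℝ) < (3/4) ^ s := by positivity
    rw [← mul_le_mul_iff_of_pos_right h34]
    calc tailOf X (b0 + s) ^ d * (3/4) ^ s ≤ (1/4:ℝ) ^ d * (1/4) ^ s := hdecay_s
      _ = (1/4:ℝ) ^ d * (1/3) ^ s * (3/4) ^ s := by
          rw [mul_assoc, ← mul_pow]; norm_num
  have hnum : (1/4:ℝ) ^ d * (1/3) ^ s ≤ Real.exp (-t/6) ^ d := by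
    have e4 : (1/4:ℝ) ^ d = Real.exp ((d:ℝ) * (-Real.log 4)) := by
      rw [Real.exp_nat_mul, Real.exp_neg, Real.exp_log (by norm_num : (0:ℝ) < 4)]
      norm_num
    have e3 : (1/3:ℝ) ^ s = Real.exp ((s:ℝ) * (-Real.log 3)) := by
      rw [Real.exp_nat_mul, Real.exp_neg, Real.exp_log (by norm_num : (0:ℝ) < 3)]
      norm_num
    rw [e4, e3, ← Real.exp_add, ← Real.exp_nat_mul, Real.exp_le_exp]
    have hl3 := log3_ge_one
    have hl4 := log4_ge_one
    have hdr1 : (1:ℝ) ≤ (d:ℝ) := by exact_mod_cast hd1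
    have hdr5 : (d:ℝ) ≤ 5 := by exact_mod_cast hd5
    have hsr0 : (0:ℝ) ≤ (s:ℝ) := Nat.cast_nonneg s
    have h1 : (d:ℝ) ≤ (d:ℝ) * Real.log 4 := le_mul_of_one_le_right (by linarith) hl4
    have h2 : (s:ℝ) ≤ (s:ℝ) * Real.log 3 := le_mul_of_one_le_right hsr0 hl3
    rcases le_or_gt t 6 with h6 | h6
    · nlinarith
    · nlinarith
  have hQfinal : tailOf X (b0 + s) ≤ Real.exp (-t/6) := by
    by_contra hcon
    push_neg at hcon
    have := pow_lt_pow_left₀ hcon (Real.exp_pos _).le (by omega : d ≠ 0)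
    linarith [le_trans hQd hnum]
  linarith [hev, hQfinal]

end RT

section Integr
set_option linter.unusedSectionVars false
variable {Ω : Type*} [MeasureSpace Ω] [IsProbabilityMeasure (ℙ : Measure Ω)]
variable {X : Ω → ℤ}

lemma exists_pmf_pos (hX : Measurable X) : ∃ k, 0 < pmfOf X k := by
  by_contra h
  push_neg at h
  have hz : ∀ k : ℤ, ℙ (X ⁻¹' {k}) = 0 := by
    intro k
    have h1 := h k
    have h2 := pmf_nonneg (X := X) k
    have : pmfOf X k = 0 := le_antisymm h1 h2
    rw [pmfOf] at this
    exact ((ENNReal.toReal_eq_zero_iff _).mp this).resolve_right (measure_ne_top _ _)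
  have huniv : (Set.univ : Set Ω) = ⋃ k : ℤ, X ⁻¹' {k} := by
    ext ω; simp
  have : ℙ (Set.univ : Set Ω) = 0 := by
    rw [huniv]
    exact measure_iUnion_null hz
  simp at this

lemma exists_desc (hX : Measurable X) :
    ∃ k, 0 < pmfOf X k ∧ pmfOf X (k + 1) < pmfOf X k := by
  by_contra h
  push_neg at h
  obtain ⟨k0, hk0⟩ := exists_pmf_pos hX
  have grow : ∀ j : ℕ, pmfOf X k0 ≤ pmfOf X (k0 + j) := by
    intro j
    induction j with
    | zero => simp
    | succ j ih =>
      have hpos : 0 < pmfOf X (k0 + j) := lt_of_lt_of_le hk0 ih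
      have := h (k0 + j) hpos
      calc pmfOf X k0 ≤ pmfOf X (k0 + j) := ih
        _ ≤ pmfOf X (k0 + j + 1) := this
        _ = pmfOf X (k0 + (j + 1 : ℕ)) := by push_cast; ring_nf
  have sumN : ∀ N : ℕ, (N : ℝ) * pmfOf X k0 ≤ 1 := by
    intro N
    have hdisj : (Finset.range N : Set ℕ).PairwiseDisjoint
        (fun j : ℕ => X ⁻¹' {k0 + (j : ℤ)}) := by
      intro i _ j _ hij
      simp only [Function.onFun, Set.disjoint_left]
      intro ω h1 h2
      simp only [Set.mem_preimage, Set.mem_singleton_iff] at h1 h2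
      omega
    have hm : ℙ (⋃ j ∈ Finset.range N, X ⁻¹' {k0 + (j : ℤ)}) =
        ∑ j ∈ Finset.range N, ℙ (X ⁻¹' {k0 + (j : ℤ)}) :=
      measure_biUnion_finset hdisj (fun j _ => measSet hX ({k0 + (j : ℤ)} : Set ℤ))
    have hle : ℙ (⋃ j ∈ Finset.range N, X ⁻¹' {k0 + (j : ℤ)}) ≤ 1 := prob_le_one
    rw [hm] at hle
    have htr : ∑ j ∈ Finset.range N, pmfOf X (k0 + (j : ℤ)) ≤ 1 := by
      have := ENNReal.toReal_mono (by norm_num) hle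
      rw [ENNReal.toReal_sum (fun a _ => measure_ne_top _ _)] at this
      simpa [pmfOf] using this
    calc (N : ℝ) * pmfOf X k0 = ∑ _j ∈ Finset.range N, pmfOf X k0 := by
          rw [Finset.sum_const, Finset.card_range]; ring
      _ ≤ ∑ j ∈ Finset.range N, pmfOf X (k0 + (j : ℤ)) :=
          Finset.sum_le_sum (fun j _ => grow j)
      _ ≤ 1 := htr
  obtain ⟨N, hN⟩ := exists_nat_gt (1 / pmfOf X k0)
  have : (1:ℝ) < (N:ℝ) * pmfOf X k0 := by
    rw [div_lt_iff₀ hk0] at hN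
    linarith
  linarith [sumN N]

lemma lc_reflect {p : ℤ → ℝ} (h : IsLogConcavePMF p) :
    IsLogConcavePMF (fun k => p (-k)) := by
  constructor
  · intro k
    have h1 := h.1 (-k)
    have e1 : -(k - 1) = (-k) + 1 := by ring
    have e2 : -(k + 1) = (-k) - 1 := by ring
    simp only [e1, e2]
    nlinarith [h1]
  · intro a b c hab hbc ha hc
    exact h.2 (-c) (-b) (-a) (by omega) (by omega) hc ha

lemma pmf_neg (X : Ω → ℤ) : pmfOf (fun ω => -X ω) = fun k => pmfOf X (-k) := by
  funext k
  have : (fun ω => -X ω) ⁻¹' {k} = X ⁻¹' {-k} := by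
    ext ω; simp only [Set.mem_preimage, Set.mem_singleton_iff]; omega
  simp [pmfOf, this]

lemma measurable_negX (hX : Measurable X) : Measurable (fun ω => -X ω) :=
  (Measurable.of_discrete (f := fun k : ℤ => -k)).comp hX

lemma lc_negX (hlc : IsLogConcavePMF (pmfOf X)) :
    IsLogConcavePMF (pmfOf (fun ω => -X ω)) := by
  rw [pmf_neg X]
  exact lc_reflect hlc

end Integr

section Integr2
set_option linter.unusedSectionVars false
variable {Ω : Type*} [MeasureSpace Ω] [IsProbabilityMeasure (ℙ : Measure Ω)]
variable {X : Ω → ℤ}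

lemma summable_quad_geom (c ρ : ℝ) (hρ0 : 0 ≤ ρ) (hρ1 : ρ < 1) :
    Summable (fun n : ℕ => (c + n) ^ 2 * ρ ^ n) := by
  have hn : ‖ρ‖ < 1 := by rwa [Real.norm_eq_abs, abs_of_nonneg hρ0]
  have h0 : Summable (fun n : ℕ => ((n : ℝ) ^ 0 * ρ ^ n)) :=
    summable_pow_mul_geometric_of_norm_lt_one 0 hn
  have h1 : Summable (fun n : ℕ => ((n : ℝ) ^ 1 * ρ ^ n)) :=
    summable_pow_mul_geometric_of_norm_lt_one 1 hn
  have h2 : Summable (fun n : ℕ => ((n : ℝ) ^ 2 * ρ ^ n)) :=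
    summable_pow_mul_geometric_of_norm_lt_one 2 hn
  have := ((h0.mul_left (c ^ 2)).add ((h1.mul_left (2 * c)).add h2))
  apply this.congr
  intro n
  simp only [pow_zero, pow_one]
  ring

lemma lint_ray (hX : Measurable X) (g : ℕ → ℤ) (hg : Function.Injective g)
    {C ρ c : ℝ} (hC : 0 ≤ C) (hρ0 : 0 ≤ ρ) (hρ1 : ρ < 1)
    (hb : ∀ n, pmfOf X (g n) ≤ C * ρ ^ n) (m : ℝ)
    (hw : ∀ n : ℕ, (((g n : ℝ)) - m) ^ 2 ≤ (c + n) ^ 2) :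
    ∫⁻ ω in ⋃ n : ℕ, X ⁻¹' {g n}, ENNReal.ofReal (((X ω : ℝ) - m) ^ 2) ∂ℙ < ⊤ := by
  have hdisj : Pairwise (Function.onFun Disjoint fun n : ℕ => X ⁻¹' {g n}) := by
    intro i j hij
    simp only [Function.onFun, Set.disjoint_left]
    intro ω h1 h2
    simp only [Set.mem_preimage, Set.mem_singleton_iff] at h1 h2
    exact hij (hg (h1 ▸ h2 ▸ rfl))
  rw [lintegral_iUnion (fun n => measSet hX _) hdisj]
  have hconst : ∀ n : ℕ, ∫⁻ ω in X ⁻¹' {g n}, ENNReal.ofReal (((X ω : ℝ) - m) ^ 2) ∂ℙ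
      = ENNReal.ofReal (((g n : ℝ) - m) ^ 2) * ℙ (X ⁻¹' {g n}) := by
    intro n
    rw [setLIntegral_congr_fun (measSet hX _)
      ((fun ω hω => by
        simp only [Set.mem_preimage, Set.mem_singleton_iff] at hω
        rw [hω]))]
    exact setLIntegral_const _ _
  calc ∑' n : ℕ, ∫⁻ ω in X ⁻¹' {g n}, ENNReal.ofReal (((X ω : ℝ) - m) ^ 2) ∂ℙ
      = ∑' n : ℕ, ENNReal.ofReal (((g n : ℝ) - m) ^ 2) * ℙ (X ⁻¹' {g n}) := by
        exact tsum_congr hconst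
    _ ≤ ∑' n : ℕ, ENNReal.ofReal ((c + n) ^ 2 * (C * ρ ^ n)) := by
        apply ENNReal.tsum_le_tsum
        intro n
        rw [pmf_eq_ofReal, ← ENNReal.ofReal_mul (by positivity)]
        apply ENNReal.ofReal_le_ofReal
        exact mul_le_mul (hw n) (hb n) (pmf_nonneg _) (by positivity)
    _ = ENNReal.ofReal (∑' n : ℕ, (c + n) ^ 2 * (C * ρ ^ n)) := by
        rw [ENNReal.ofReal_tsum_of_nonneg]
        · intro n; positivity
        · have := (summable_quad_geom c ρ hρ0 hρ1).mul_left C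
          apply this.congr
          intro n; ring
    _ < ⊤ := ENNReal.ofReal_lt_top

lemma integrable_sq (hX : Measurable X) (hlc : IsLogConcavePMF (pmfOf X)) (m : ℝ) :
    Integrable (fun ω => ((X ω : ℝ) - m) ^ 2) ℙ := by
  obtain ⟨k1, hk1, hd1⟩ := exists_desc hX
  obtain ⟨k2', hk2'0, hd2'0⟩ := exists_desc (measurable_negX hX)
  rw [pmf_neg X] at hk2'0 hd2'0
  simp only at hk2'0 hd2'0
  obtain ⟨k2, hk2def⟩ : ∃ k : ℤ, k = -k2' := ⟨_, rfl⟩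
  have e1 : (-k2' : ℤ) = k2 := hk2def.symm
  have e2 : (-(k2' + 1) : ℤ) = k2 - 1 := by omega
  have hk2 : 0 < pmfOf X k2 := by rwa [e1] at hk2'0
  have hd2 : pmfOf X (k2 - 1) < pmfOf X k2 := by rwa [e2, e1] at hd2'0
  set r1 : ℝ := pmfOf X (k1 + 1) / pmfOf X k1 with hr1def
  set r2 : ℝ := pmfOf X (k2 - 1) / pmfOf X k2 with hr2def
  set ρ : ℝ := max (max r1 r2) (1/2) with hρdef
  have hρ0 : 0 < ρ := lt_of_lt_of_le (by norm_num) (le_max_right _ _)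
  have hρ1 : ρ < 1 := by
    apply max_lt (max_lt _ _) (by norm_num)
    · exact (div_lt_one hk1).mpr hd1
    · exact (div_lt_one hk2).mpr hd2
  -- right ray bound
  have hbr : ∀ n : ℕ, pmfOf X (k1 + n) ≤ pmfOf X k1 * ρ ^ n := by
    intro n
    calc pmfOf X (k1 + n) ≤ pmfOf X k1 * r1 ^ n := pmf_term_geom hX hlc hk1 n
      _ ≤ pmfOf X k1 * ρ ^ n := by
          apply mul_le_mul_of_nonneg_left _ (pmf_nonneg _)
          apply pow_le_pow_left₀ (div_nonneg (pmf_nonneg _) (pmf_nonneg _))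
          exact le_trans (le_max_left _ _) (le_max_left _ _)
  -- left ray bound via reflection
  have hbl' : ∀ n : ℕ, pmfOf X (k2 - n) ≤ pmfOf X k2 * ρ ^ n := by
    intro n
    have hthis := pmf_term_geom (measurable_negX hX) (lc_negX hlc) (k := k2') (by
      rw [pmf_neg X]; simpa using hk2'0) n
    rw [pmf_neg X] at hthis
    simp only at hthis
    have e3 : (-(k2' + (n : ℤ)) : ℤ) = k2 - n := by omega
    rw [e3, e2, e1] at hthis
    calc pmfOf X (k2 - n) ≤ pmfOf X k2 * r2 ^ n := hthis
      _ ≤ pmfOf X k2 * ρ ^ n := by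
          apply mul_le_mul_of_nonneg_left _ (pmf_nonneg _)
          apply pow_le_pow_left₀ (div_nonneg (pmf_nonneg _) (pmf_nonneg _))
          exact le_trans (le_max_right _ _) (le_max_left _ _)
  -- left ray bound re-centered at k1 - 1
  set C : ℝ := max (pmfOf X k2) 1 * ρ ^ (-(k1 - 1 - k2)) with hCdef
  have hC0 : 0 ≤ C := by positivity
  have hbl : ∀ n : ℕ, pmfOf X (k1 - 1 - n) ≤ C * ρ ^ n := by
    intro n
    have hzp : (ρ : ℝ) ^ ((n : ℤ) - (k1 - 1 - k2)) = ρ ^ (-(k1 - 1 - k2)) * ρ ^ (n : ℤ) := by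
      rw [← zpow_add₀ (ne_of_gt hρ0)]; ring_nf
    rcases le_or_gt (k1 - 1 - (n : ℤ)) k2 with hcase | hcase
    · have hj : (k2 - (k1 - 1 - (n : ℤ))).toNat = ((n : ℤ) - (k1 - 1 - k2)).toNat := by omega
      have hb2 := hbl' (k2 - (k1 - 1 - (n : ℤ))).toNat
      have he : k2 - ((k2 - (k1 - 1 - (n : ℤ))).toNat : ℤ) = k1 - 1 - n := by omega
      rw [he] at hb2
      calc pmfOf X (k1 - 1 - n)
          ≤ pmfOf X k2 * ρ ^ (k2 - (k1 - 1 - (n : ℤ))).toNat := hb2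
        _ = pmfOf X k2 * ρ ^ ((n : ℤ) - (k1 - 1 - k2)) := by
            rw [← zpow_natCast ρ,
              Int.toNat_of_nonneg (a := k2 - (k1 - 1 - (n:ℤ))) (by omega),
              (show k2 - (k1 - 1 - (n:ℤ)) = (n:ℤ) - (k1 - 1 - k2) by omega)]
        _ = pmfOf X k2 * ρ ^ (-(k1 - 1 - k2)) * ρ ^ (n : ℤ) := by rw [hzp]; ring
        _ ≤ C * ρ ^ n := by
            rw [hCdef, zpow_natCast]
            apply mul_le_mul_of_nonneg_right _ (pow_nonneg hρ0.le n)
            apply mul_le_mul_of_nonneg_right (le_max_left _ _) (zpow_nonneg hρ0.le _)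
    · calc pmfOf X (k1 - 1 - n) ≤ 1 := pmf_le_one _
        _ ≤ ρ ^ ((n : ℤ) - (k1 - 1 - k2)) :=
            one_le_zpow_of_nonpos₀ hρ0 (le_of_lt hρ1) (by omega)
        _ = ρ ^ (-(k1 - 1 - k2)) * ρ ^ (n : ℤ) := hzp
        _ ≤ C * ρ ^ n := by
            rw [hCdef, zpow_natCast]
            apply mul_le_mul_of_nonneg_right _ (pow_nonneg hρ0.le n)
            nlinarith [zpow_nonneg hρ0.le (-(k1 - 1 - k2)) (a := ρ),
              le_max_right (pmfOf X k2) 1]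
  -- assemble
  constructor
  · exact ((Measurable.of_discrete (f := fun k : ℤ => ((k : ℝ) - m) ^ 2)).comp
      hX).aestronglyMeasurable
  · rw [hasFiniteIntegral_iff_ofReal (Filter.Eventually.of_forall (fun ω => by positivity))]
    have hcover : (Set.univ : Set Ω) =
        (⋃ n : ℕ, X ⁻¹' {k1 + (n : ℤ)}) ∪ (⋃ n : ℕ, X ⁻¹' {k1 - 1 - (n : ℤ)}) := by
      ext ω
      simp only [Set.mem_univ, Set.mem_union, Set.mem_iUnion, Set.mem_preimage,
        Set.mem_singleton_iff, true_iff]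
      rcases le_or_gt k1 (X ω) with hc | hc
      · left; exact ⟨(X ω - k1).toNat, by omega⟩
      · right; exact ⟨(k1 - 1 - X ω).toNat, by omega⟩
    have hBmeas : MeasurableSet (⋃ n : ℕ, X ⁻¹' {k1 - 1 - (n : ℤ)}) :=
      MeasurableSet.iUnion (fun n => measSet hX _)
    have hdisj2 : Disjoint (⋃ n : ℕ, X ⁻¹' {k1 + (n : ℤ)})
        (⋃ n : ℕ, X ⁻¹' {k1 - 1 - (n : ℤ)}) := by
      simp only [Set.disjoint_left, Set.mem_iUnion, Set.mem_preimage, Set.mem_singleton_iff]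
      rintro ω ⟨i, hi⟩ ⟨j, hj⟩
      omega
    rw [← setLIntegral_univ, hcover, lintegral_union hBmeas hdisj2]
    have hright := lint_ray hX (fun n : ℕ => k1 + (n : ℤ))
      (fun a b hab => by simpa using hab)
      (pmf_nonneg (X := X) k1) hρ0.le hρ1 hbr m
      (c := |(k1 : ℝ) - m|)
      (fun n => by
        have : ((k1 + (n:ℤ) : ℤ) : ℝ) - m = ((k1 : ℝ) - m) + n := by push_cast; ring
        rw [this]
        nlinarith [abs_nonneg ((k1:ℝ) - m), le_abs_self ((k1:ℝ) - m),
          neg_abs_le ((k1:ℝ) - m), Nat.cast_nonneg (α := ℝ) n])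
    have hleft := lint_ray hX (fun n : ℕ => k1 - 1 - (n : ℤ))
      (fun a b hab => by simpa using hab)
      hC0 hρ0.le hρ1 hbl m
      (c := |(k1 : ℝ) - 1 - m|)
      (fun n => by
        have : ((k1 - 1 - (n:ℤ) : ℤ) : ℝ) - m = ((k1 : ℝ) - 1 - m) - n := by push_cast; ring
        rw [this]
        nlinarith [abs_nonneg ((k1:ℝ) - 1 - m), le_abs_self ((k1:ℝ) - 1 - m),
          neg_abs_le ((k1:ℝ) - 1 - m), Nat.cast_nonneg (α := ℝ) n])
    exact ENNReal.add_lt_top.mpr ⟨hright, hleft⟩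

end Integr2

section Main
set_option linter.unusedSectionVars false
variable {Ω : Type*} [MeasureSpace Ω] [IsProbabilityMeasure (ℙ : Measure Ω)]
variable {X : Ω → ℤ}

lemma cheb_bound (hX : Measurable X) (hlc : IsLogConcavePMF (pmfOf X)) (m : ℝ)
    (hvar : (∫ ω, ((X ω : ℝ) - m) ^ 2) ≤ 1) :
    (ℙ {ω | (2:ℝ) ≤ |(X ω : ℝ) - m|}).toReal ≤ 1/4 := by
  have hint := integrable_sq hX hlc m
  have hmark := mul_meas_ge_le_integral_of_nonneg (μ := (ℙ : Measure Ω))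
    (f := fun ω => ((X ω : ℝ) - m) ^ 2)
    (Filter.Eventually.of_forall (fun ω => by positivity)) hint 4
  have hseteq : {ω | (4:ℝ) ≤ ((X ω : ℝ) - m) ^ 2} = {ω | (2:ℝ) ≤ |(X ω : ℝ) - m|} := by
    ext ω
    simp only [Set.mem_setOf_eq]
    constructor <;> intro h <;>
      nlinarith [sq_abs ((X ω : ℝ) - m), abs_nonneg ((X ω : ℝ) - m)]
  rw [hseteq, measureReal_def] at hmark
  linarith

end Main

/-- If `X` is a log-concave integer-valued random variable with `Var(X) ≤ 1`, then
for all `t ≥ 0`, `P(|X − E[X]| ≥ t) ≤ 2·e^{−t/6}`. -/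
theorem concentration_bound_isotropic
    {Ω : Type*} [MeasureSpace Ω] [IsProbabilityMeasure (ℙ : Measure Ω)]
    (X : Ω → ℤ) (hX : Measurable X)
    (hlc : IsLogConcavePMF (fun k => (ℙ (X ⁻¹' {k})).toReal))
    (m : ℝ) (hm : m = ∫ ω, (X ω : ℝ))
    (hvar : (∫ ω, ((X ω : ℝ) - m) ^ 2) ≤ 1)
    (t : ℝ) (ht : 0 ≤ t) :
    (ℙ {ω | t ≤ |(X ω : ℝ) - m|}).toReal ≤ 2 * Real.exp (-t / 6) := by
  have hlc' : IsLogConcavePMF (pmfOf X) := hlc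
  rcases le_or_gt t 3 with ht3 | ht3
  · -- trivial regime
    have hexp2 : Real.exp (1/2) * Real.exp (1/2) = Real.exp 1 := by
      rw [← Real.exp_add]; norm_num
    have he2 : Real.exp (1/2) ≤ 2 := by nlinarith [Real.exp_one_lt_d9, Real.exp_pos (1/2)]
    have hmono : Real.exp (-(1/2)) ≤ Real.exp (-t / 6) := by
      apply Real.exp_le_exp.mpr; linarith
    have hinv : (1:ℝ) ≤ 2 * Real.exp (-(1/2)) := by
      rw [Real.exp_neg]
      have hp := Real.exp_pos (1/2)
      have hid : (Real.exp (1/2))⁻¹ * Real.exp (1/2) = 1 := inv_mul_cancel₀ (ne_of_gt hp)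
      nlinarith [inv_pos.mpr hp]
    have h1 : (ℙ {ω | t ≤ |(X ω : ℝ) - m|}).toReal ≤ 1 := by
      have := prob_le_one (μ := (ℙ : Measure Ω)) (s := {ω | t ≤ |(X ω : ℝ) - m|})
      simpa using ENNReal.toReal_mono (by norm_num) this
    linarith
  · -- tail regime
    have hcheb := cheb_bound hX hlc' m hvar
    set Y : Ω → ℤ := fun ω => -X ω with hY
    have hYm : Measurable Y := measurable_negX hX
    have hYlc : IsLogConcavePMF (pmfOf Y) := lc_negX hlc'
    have hchebY : (ℙ {ω | (2:ℝ) ≤ |(Y ω : ℝ) - (-m)|}).toReal ≤ 1/4 := by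
      have hset : {ω | (2:ℝ) ≤ |(Y ω : ℝ) - (-m)|} = {ω | (2:ℝ) ≤ |(X ω : ℝ) - m|} := by
        ext ω
        simp only [Set.mem_setOf_eq, hY]
        rw [show ((-X ω : ℤ) : ℝ) - (-m) = -((X ω : ℝ) - m) by push_cast; ring, abs_neg]
      rw [hset]; exact hcheb
    have hR := right_tail hX hlc' m t (le_of_lt ht3) hcheb
    have hL := right_tail hYm hYlc (-m) t (le_of_lt ht3) hchebY
    have hsub : {ω | t ≤ |(X ω : ℝ) - m|} ⊆
        {ω | m + t ≤ (X ω : ℝ)} ∪ {ω | -m + t ≤ (Y ω : ℝ)} := by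
      intro ω hω
      simp only [Set.mem_setOf_eq] at hω
      simp only [Set.mem_union, Set.mem_setOf_eq, hY]
      rcases abs_cases ((X ω : ℝ) - m) with ⟨habs, _⟩ | ⟨habs, _⟩
      · left; linarith [habs ▸ hω]
      · right; push_cast; linarith [habs ▸ hω]
    have hun : ℙ {ω | t ≤ |(X ω : ℝ) - m|} ≤
        ℙ {ω | m + t ≤ (X ω : ℝ)} + ℙ {ω | -m + t ≤ (Y ω : ℝ)} :=
      le_trans (measure_mono hsub) (measure_union_le _ _)
    have htr : (ℙ {ω | t ≤ |(X ω : ℝ) - m|}).toReal ≤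
        (ℙ {ω | m + t ≤ (X ω : ℝ)}).toReal + (ℙ {ω | -m + t ≤ (Y ω : ℝ)}).toReal := by
      have h1 := ENNReal.toReal_mono
        (ENNReal.add_ne_top.mpr ⟨measure_ne_top _ _, measure_ne_top _ _⟩) hun
      rwa [ENNReal.toReal_add (measure_ne_top _ _) (measure_ne_top _ _)] at h1
    have : (ℙ {ω | t ≤ |(X ω : ℝ) - m|}).toReal ≤
        Real.exp (-t/6) + Real.exp (-t/6) := by linarith
    calc (ℙ {ω | t ≤ |(X ω : ℝ) - m|}).toReal
        ≤ Real.exp (-t/6) + Real.exp (-t/6) := this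
      _ = 2 * Real.exp (-t / 6) := by rw [show -t/6 = -t / 6 from rfl]; ring
end
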